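/- arXiv:2601.00283 — 7 statements merged into one kernel-verified Lean document; each statement's English description precedes it below -/
import Mathlib

section
/- Let (F, τ) be an ordered Fréchet space whose positive cone F₊ is τ-closed and generating, and let (Y, ξ) be a real topological vector space. Then every collectively order-to-topology bounded family 𝒯 of linear operators from F to Y is collectively bounded; that is, if ⋃_{T∈𝒯} T[a,b] is ξ-bounded for all a, b ∈ F, then ⋃_{T∈𝒯} T(B) is ξ-bounded for every τ-bounded subset B of F. -/
open Filter Set Topology Bornology

universe u

/-- `x_α ↓ 0`: the net `x` is decreasing with infimum `0`. -/
def DecreasesToZero {X : Type*} [Zero X] [PartialOrder X] {ι : Type*} [Preorder ι]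
    (x : ι → X) : Prop :=
  Antitone x ∧ IsGLB (Set.range x) 0

/-- `x_α →o 0`: order convergence of the net `x` to `0`, i.e. there is a net `g_β`,
indexed by a (nonempty) directed set, decreasing with infimum `0`, such that for each `β`
there is `α_β` with `±x_α ≤ g_β` for all `α ≥ α_β`. -/
def OrderConvZero {X : Type u} [Zero X] [Neg X] [PartialOrder X] {ι : Type*} [Preorder ι]
    (x : ι → X) : Prop :=
  ∃ (β : Type u) (pβ : Preorder β), Nonempty β ∧
    IsDirected β (fun b₁ b₂ => pβ.le b₁ b₂) ∧
    ∃ g : β → X, (∀ b₁ b₂ : β, pβ.le b₁ b₂ → g b₂ ≤ g b₁) ∧ IsGLB (Set.range g) 0 ∧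
      ∀ b : β, ∃ a₀ : ι, ∀ a : ι, a₀ ≤ a → -g b ≤ x a ∧ x a ≤ g b

/-- `x_α →r 0`: relative uniform convergence of the net `x` to `0`: for some `u ≥ 0`
there is an increasing sequence `(α_n)` of indices with `±x_α ≤ (1/n)u` for all `α ≥ α_n`. -/
def RuConvZero {X : Type*} [Zero X] [Neg X] [PartialOrder X] [SMul ℝ X] {ι : Type*} [Preorder ι]
    (x : ι → X) : Prop :=
  ∃ u : X, 0 ≤ u ∧ ∃ α : ℕ → ι, Monotone α ∧
    ∀ n : ℕ, 0 < n → ∀ a : ι, α n ≤ a → -((n : ℝ)⁻¹ • u) ≤ x a ∧ x a ≤ (n : ℝ)⁻¹ • u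

/-- The positive cone of an ordered TVS is normal: the topology has a base of neighborhoods
of `0` consisting of full sets. -/
def NormalConeTVS (Y : Type*) [Zero Y] [PartialOrder Y] [TopologicalSpace Y] : Prop :=
  ∀ U ∈ nhds (0 : Y), ∃ V ∈ nhds (0 : Y), V ⊆ U ∧
    ∀ a b x : Y, a ∈ V → b ∈ V → a ≤ x → x ≤ b → x ∈ V

section Aux

open Pointwise

set_option linter.unusedSectionVars false

variable {F : Type*} [AddCommGroup F] [Module ℝ F] [PartialOrder F]
    [CovariantClass F F (· + ·) (· ≤ ·)] [PosSMulMono ℝ F]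
    [UniformSpace F] [IsUniformAddGroup F] [ContinuousSMul ℝ F] [LocallyConvexSpace ℝ F]
    [FirstCountableTopology F] [T2Space F] [CompleteSpace F]

private lemma aux_chainLemma : ∃ U : ℕ → Set F, (∀ n, U n ∈ 𝓝 (0:F)) ∧ (∀ n, Balanced ℝ (U n)) ∧
    (∀ n, Convex ℝ (U n)) ∧ (∀ n, U (n+1) + U (n+1) ⊆ U n) ∧
    (∀ V ∈ 𝓝 (0:F), ∃ n, ∀ m, n ≤ m → U m ⊆ V) := by
  obtain ⟨W, hW⟩ := (𝓝 (0:F)).exists_antitone_basis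
  set P : Set F → Prop := fun S => S ∈ 𝓝 (0:F) ∧ Balanced ℝ S ∧ Convex ℝ S with hP
  have step : ∀ (n : ℕ) (S : {S : Set F // P S}), ∃ T : {T : Set F // P T},
      T.1 + T.1 ⊆ S.1 ∧ T.1 ⊆ W n := by
    rintro n ⟨S, hS, hSb, hSc⟩
    obtain ⟨V, hVo, hV0, hVadd⟩ := exists_open_nhds_zero_add_subset hS
    have hVW : V ∩ W n ∈ 𝓝 (0:F) := inter_mem (hVo.mem_nhds hV0) (hW.mem n)
    obtain ⟨T, ⟨hT, hTb, hTc⟩, hTsub⟩ := (nhds_hasBasis_absConvex ℝ F).mem_iff.1 hVW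
    refine ⟨⟨T, hT, hTb, hTc⟩, ?_, fun x hx => (hTsub hx).2⟩
    exact fun x ⟨a, ha, b, hb, hab⟩ => hab ▸ hVadd (add_mem_add (hTsub ha).1 (hTsub hb).1)
  choose g hg1 hg2 using step
  set U' : ℕ → {S : Set F // P S} :=
    fun n => Nat.rec ⟨univ, univ_mem, balanced_univ, convex_univ⟩ (fun n Un => g n Un) n with hU'
  refine ⟨fun n => (U' n).1, fun n => (U' n).2.1, fun n => (U' n).2.2.1, fun n => (U' n).2.2.2,
    fun n => hg1 n (U' n), ?_⟩
  intro V hV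
  obtain ⟨n, hn⟩ := hW.toHasBasis.mem_iff.1 hV
  refine ⟨n + 1, fun m hm => ?_⟩
  obtain ⟨m, rfl⟩ := Nat.exists_eq_add_of_le hm
  calc (U' (n + 1 + m)).1 ⊆ W (n + m) := by
        have : n + 1 + m = (n + m) + 1 := by omega
        rw [this]; exact hg2 (n + m) (U' (n + m))
    _ ⊆ W n := hW.antitone (by omega)
    _ ⊆ V := hn.2

private lemma aux_sumChain {U : ℕ → Set F} (h0 : ∀ n, (0:F) ∈ U n)
    (hadd : ∀ n, U (n+1) + U (n+1) ⊆ U n) (a : ℕ → F) (ha : ∀ k, a k ∈ U (k+1)) :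
    ∀ j m : ℕ, ∑ k ∈ Finset.Ico j m, a k ∈ U j := by
  have key : ∀ d j : ℕ, ∑ k ∈ Finset.Ico j (j + d), a k ∈ U j := by
    intro d
    induction d with
    | zero => intro j; simpa using h0 j
    | succ d ih =>
      intro j
      rw [Finset.sum_eq_sum_Ico_succ_bot (by omega)]
      have h2 : ∑ k ∈ Finset.Ico (j+1) (j + (d+1)), a k ∈ U (j+1) := by
        have : j + (d + 1) = (j + 1) + d := by omega
        rw [this]; exact ih (j + 1)
      exact hadd j (add_mem_add (ha j) h2)
  intro j m
  rcases le_or_gt m j with h | h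
  · rw [Finset.Ico_eq_empty (by omega)]; simpa using h0 j
  · have : m = j + (m - j) := by omega
    rw [this]; exact key _ j

private lemma aux_cauchyChain {U : ℕ → Set F} (h0 : ∀ n, (0:F) ∈ U n)
    (hadd : ∀ n, U (n+1) + U (n+1) ⊆ U n) (hsym : ∀ n, ∀ x ∈ U n, -x ∈ U n)
    (hbasis : ∀ V ∈ 𝓝 (0:F), ∃ n, ∀ m, n ≤ m → U m ⊆ V)
    (a : ℕ → F) (ha : ∀ k, a k ∈ U (k+1)) :
    CauchySeq (fun M => ∑ k ∈ Finset.range M, a k) := by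
  have hb : (uniformity F).HasBasis (fun V : Set F => V ∈ 𝓝 (0:F))
      (fun V => {p : F × F | p.2 - p.1 ∈ V}) := by
    rw [uniformity_eq_comap_nhds_zero F]
    exact (𝓝 (0:F)).basis_sets.comap _
  rw [hb.cauchySeq_iff]
  intro V hV
  obtain ⟨n, hn⟩ := hbasis V hV
  refine ⟨n, fun M hM N hN => ?_⟩
  have key : ∀ {p q : ℕ}, n ≤ p → p ≤ q →
      ∑ k ∈ Finset.range q, a k - ∑ k ∈ Finset.range p, a k ∈ V := by
    intro p q hp hpq
    have : ∑ k ∈ Finset.range q, a k - ∑ k ∈ Finset.range p, a k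
        = ∑ k ∈ Finset.Ico p q, a k := by
      rw [← Finset.sum_range_add_sum_Ico a hpq]; abel
    rw [this]
    exact hn p hp (aux_sumChain h0 hadd a ha p q)
  rcases le_total M N with h | h
  · exact key hM h
  · have hsum : ∑ k ∈ Finset.Ico N M, a k ∈ U N := aux_sumChain h0 hadd a ha N M
    have h4 : ∑ k ∈ Finset.range N, a k - ∑ k ∈ Finset.range M, a k
        = -(∑ k ∈ Finset.Ico N M, a k) := by
      rw [← Finset.sum_range_add_sum_Ico a h]; abel
    show ∑ k ∈ Finset.range N, a k - ∑ k ∈ Finset.range M, a k ∈ V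
    rw [h4]
    exact hn N hN (hsym N _ hsum)

private lemma aux_closure_sub {S T : Set F} (hT : T ∈ 𝓝 (0:F)) (hTsym : ∀ x ∈ T, -x ∈ T)
    {x : F} (hx : x ∈ closure S) : ∃ s ∈ S, x - s ∈ T := by
  have hxT : (fun z => x + z) '' T ∈ 𝓝 x := by
    rw [← map_add_left_nhds_zero x]
    exact image_mem_map hT
  obtain ⟨z, hz1, hz2⟩ := mem_closure_iff_nhds.1 hx _ hxT
  obtain ⟨t, ht, rfl⟩ := hz1
  exact ⟨x + t, hz2, by simpa using hTsym t ht⟩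

private lemma aux_neg_closure {S : Set F} (hS : ∀ x ∈ S, -x ∈ S) :
    ∀ x ∈ closure S, -x ∈ closure S := by
  intro x hx
  have hSeq : (-1:ℝ) • S = S := by
    ext z
    constructor
    · rintro ⟨d, hd, rfl⟩
      simpa using hS _ hd
    · intro hz
      exact ⟨-z, hS _ hz, by simp⟩
  have h1 : (-1:ℝ) • x ∈ (-1:ℝ) • closure S := smul_mem_smul_set hx
  rw [← closure_smul₀' (G₀ := ℝ) (by norm_num) S, hSeq] at h1
  simpa using h1

private lemma aux_baireStep (hgen : ∀ x : F, ∃ a b : F, 0 ≤ a ∧ 0 ≤ b ∧ x = a - b)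
    {W : Set F} (hW : W ∈ 𝓝 (0:F)) (hWc : Convex ℝ W) :
    closure {x : F | ∃ a b : F, 0 ≤ a ∧ 0 ≤ b ∧ a ∈ W ∧ b ∈ W ∧ x = a - b} ∈ 𝓝 (0:F) := by
  haveI : (uniformity F).IsCountablyGenerated := IsUniformAddGroup.uniformity_countably_generated
  letI := UniformSpace.pseudoMetricSpace F
  haveI : BaireSpace F := inferInstance
  set D : Set F := {x : F | ∃ a b : F, 0 ≤ a ∧ 0 ≤ b ∧ a ∈ W ∧ b ∈ W ∧ x = a - b} with hD
  have hDconv : Convex ℝ D := by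
    rintro x ⟨a, b, ha, hb, haW, hbW, rfl⟩ y ⟨c, d, hc, hd, hcW, hdW, rfl⟩ s t hs ht hst
    refine ⟨s • a + t • c, s • b + t • d,
      add_nonneg (smul_nonneg hs ha) (smul_nonneg ht hc),
      add_nonneg (smul_nonneg hs hb) (smul_nonneg ht hd),
      hWc haW hcW hs ht hst, hWc hbW hdW hs ht hst, by
        simp only [smul_sub]; abel⟩
  have hDsym : ∀ x ∈ D, -x ∈ D := by
    rintro x ⟨a, b, ha, hb, haW, hbW, rfl⟩
    exact ⟨b, a, hb, ha, hbW, haW, by abel⟩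
  have hcover : (⋃ m : ℕ, closure (((m:ℝ)+1) • D)) = univ := by
    refine eq_univ_of_forall fun x => ?_
    obtain ⟨a, b, ha, hb, rfl⟩ := hgen x
    obtain ⟨ra, hra⟩ := absorbs_iff_norm.1 (absorbent_nhds_zero (𝕜 := ℝ) hW a)
    obtain ⟨rb, hrb⟩ := absorbs_iff_norm.1 (absorbent_nhds_zero (𝕜 := ℝ) hW b)
    obtain ⟨m, hm⟩ := exists_nat_ge (max ra rb)
    have hm1 : max ra rb ≤ ‖((m:ℝ)+1)‖ := by
      rw [Real.norm_eq_abs, abs_of_nonneg (by positivity)]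
      exact hm.trans (by linarith)
    have hmne : ((m:ℝ)+1) ≠ 0 := by positivity
    obtain ⟨a', ha'W, ha'⟩ := hra _ (le_trans (le_max_left _ _) hm1) (mem_singleton a)
    obtain ⟨b', hb'W, hb'⟩ := hrb _ (le_trans (le_max_right _ _) hm1) (mem_singleton b)
    refine mem_iUnion.2 ⟨m, subset_closure ?_⟩
    refine ⟨a' - b', ⟨a', b', ?_, ?_, ha'W, hb'W, rfl⟩,
      ((smul_sub ((m:ℝ)+1) a' b').trans (congrArg₂ (· - ·) ha' hb') :
        ((m:ℝ)+1) • (a' - b') = a - b)⟩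
    · have : a' = ((m:ℝ)+1)⁻¹ • a := by rw [← ha', inv_smul_smul₀ hmne]
      rw [this]; exact smul_nonneg (by positivity) ha
    · have : b' = ((m:ℝ)+1)⁻¹ • b := by rw [← hb', inv_smul_smul₀ hmne]
      rw [this]; exact smul_nonneg (by positivity) hb
  obtain ⟨m, x₀, hx₀⟩ := nonempty_interior_of_iUnion_of_closed
    (fun m : ℕ => isClosed_closure (s := ((m:ℝ)+1) • D)) hcover
  have hmne : ((m:ℝ)+1) ≠ 0 := by positivity
  have hint : (interior (closure D)).Nonempty := by
    rw [closure_smul₀' (G₀ := ℝ) hmne D, interior_smul₀ (hmne) (closure D)] at hx₀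
    obtain ⟨y, hy, hxy⟩ := hx₀
    exact ⟨y, hy⟩
  obtain ⟨y, hy⟩ := hint
  have hnegy : -y ∈ closure D := aux_neg_closure hDsym y (interior_subset hy)
  have h0 : (0:F) ∈ interior (closure D) := by
    have := (hDconv.closure).combo_interior_closure_mem_interior hy
      (by rwa [closure_closure]) (a := (1:ℝ)/2) (b := (1:ℝ)/2)
      (by norm_num) (by norm_num) (by norm_num)
    simpa using this
  exact mem_of_superset (isOpen_interior.mem_nhds h0) interior_subset

private lemma aux_decompLemma (hclosed : IsClosed {x : F | 0 ≤ x})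
    (hgen : ∀ x : F, ∃ a b : F, 0 ≤ a ∧ 0 ≤ b ∧ x = a - b) :
    ∃ U : ℕ → Set F, (∀ n, U n ∈ 𝓝 (0:F)) ∧ (∀ n, Balanced ℝ (U n)) ∧
      (∀ n, U (n+1) + U (n+1) ⊆ U n) ∧ (∀ V ∈ 𝓝 (0:F), ∃ n, ∀ m, n ≤ m → U m ⊆ V) ∧
      (∀ n, ∃ V ∈ 𝓝 (0:F), ∀ x ∈ V, ∃ a b : F, 0 ≤ a ∧ 0 ≤ b ∧ x = a - b ∧
        a ∈ U n ∧ b ∈ U n) := by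
  obtain ⟨U, hUmem, hUbal, hUconv, hUadd, hUbasis⟩ := aux_chainLemma (F := F)
  have hU0 : ∀ n, (0:F) ∈ U n := fun n => mem_of_mem_nhds (hUmem n)
  have hUsym : ∀ n, ∀ x ∈ U n, -x ∈ U n := by
    intro n x hx
    have := (hUbal n).smul_mem (a := (-1:ℝ)) (by norm_num) hx
    simpa using this
  refine ⟨U, hUmem, hUbal, hUadd, hUbasis, fun n => ?_⟩
  -- the shifted chain
  set W : ℕ → Set F := fun k => U (n + 1 + k) with hW
  have hWmem : ∀ k, W k ∈ 𝓝 (0:F) := fun k => hUmem _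
  have hW0 : ∀ k, (0:F) ∈ W k := fun k => hU0 _
  have hWadd : ∀ k, W (k+1) + W (k+1) ⊆ W k := fun k => hUadd (n + 1 + k)
  have hWsym : ∀ k, ∀ x ∈ W k, -x ∈ W k := fun k => hUsym _
  have hWconv : ∀ k, Convex ℝ (W k) := fun k => hUconv _
  have hWbasis : ∀ V ∈ 𝓝 (0:F), ∃ k, ∀ m, k ≤ m → W m ⊆ V := by
    intro V hV
    obtain ⟨N, hN⟩ := hUbasis V hV
    exact ⟨N, fun m hm => hN _ (by omega)⟩
  set D : ℕ → Set F :=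
    fun k => {x : F | ∃ a b : F, 0 ≤ a ∧ 0 ≤ b ∧ a ∈ W k ∧ b ∈ W k ∧ x = a - b} with hDdef
  have hDnhds : ∀ k, closure (D k) ∈ 𝓝 (0:F) := fun k =>
    aux_baireStep hgen (hWmem k) (hWconv k)
  have hDsym : ∀ k, ∀ x ∈ D k, -x ∈ D k := by
    rintro k x ⟨a, b, ha, hb, haW, hbW, rfl⟩
    exact ⟨b, a, hb, ha, hbW, haW, by abel⟩
  have hDsub : ∀ k, D (k+1) ⊆ W k := by
    rintro k x ⟨a, b, ha, hb, haW, hbW, rfl⟩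
    rw [sub_eq_add_neg]
    exact hWadd k (add_mem_add haW (hWsym _ _ hbW))
  refine ⟨closure (D 1), hDnhds 1, ?_⟩
  intro x hx
  -- iterative decomposition
  have hstep : ∀ (m : ℕ) (y : F), ∃ z : F, y ∈ closure (D (m+1)) →
      z ∈ D (m+1) ∧ y - z ∈ closure (D (m+2)) := by
    intro m y
    by_cases h : y ∈ closure (D (m+1))
    · obtain ⟨s, hs, hys⟩ := aux_closure_sub (hDnhds (m+2))
        (aux_neg_closure (hDsym (m+2))) h
      exact ⟨s, fun _ => ⟨hs, hys⟩⟩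
    · exact ⟨0, fun h' => absurd h' h⟩
  choose f hf using hstep
  set r : ℕ → F := fun m => Nat.rec x (fun m rm => rm - f m rm) m with hr0
  have hr : ∀ m, r m ∈ closure (D (m+1)) := by
    intro m
    induction m with
    | zero => exact hx
    | succ m ih => exact (hf m (r m) ih).2
  have hfD : ∀ m, f m (r m) ∈ D (m+1) := fun m => (hf m (r m) (hr m)).1
  choose am bm ham hbm hamW hbmW heq using hfD
  -- partial sums
  set A : ℕ → F := fun M => ∑ k ∈ Finset.range M, am k with hA
  set Bs : ℕ → F := fun M => ∑ k ∈ Finset.range M, bm k with hB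
  have hAc : CauchySeq A := aux_cauchyChain hW0 hWadd hWsym hWbasis am hamW
  have hBc : CauchySeq Bs := aux_cauchyChain hW0 hWadd hWsym hWbasis bm hbmW
  obtain ⟨aL, hAt⟩ := cauchySeq_tendsto_of_complete hAc
  obtain ⟨bL, hBt⟩ := cauchySeq_tendsto_of_complete hBc
  have hApos : ∀ M, 0 ≤ A M := fun M =>
    Finset.sum_induction am (fun x => 0 ≤ x) (fun a b => add_nonneg) le_rfl (fun i _ => ham i)
  have hBpos : ∀ M, 0 ≤ Bs M := fun M =>
    Finset.sum_induction bm (fun x => 0 ≤ x) (fun a b => add_nonneg) le_rfl (fun i _ => hbm i)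
  have haL : 0 ≤ aL := hclosed.mem_of_tendsto hAt (Eventually.of_forall hApos)
  have hbL : 0 ≤ bL := hclosed.mem_of_tendsto hBt (Eventually.of_forall hBpos)
  -- aL, bL ∈ U n
  have hAU : ∀ M, A M ∈ W 0 := by
    intro M
    have h := aux_sumChain hW0 hWadd am hamW 0 M
    rw [← Finset.range_eq_Ico] at h
    exact h
  have hBU : ∀ M, Bs M ∈ W 0 := by
    intro M
    have h := aux_sumChain hW0 hWadd bm hbmW 0 M
    rw [← Finset.range_eq_Ico] at h
    exact h
  have hclW : closure (W 0) ⊆ U n := by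
    intro y hy
    obtain ⟨s, hs, hys⟩ := aux_closure_sub (hWmem 0) (hWsym 0) hy
    have : y = s + (y - s) := by abel
    rw [this]
    exact hUadd n (add_mem_add hs hys)
  have haLU : aL ∈ U n :=
    hclW (mem_closure_of_tendsto hAt (Eventually.of_forall hAU))
  have hbLU : bL ∈ U n :=
    hclW (mem_closure_of_tendsto hBt (Eventually.of_forall hBU))
  -- r M → 0
  have hrW : ∀ m, r m ∈ closure (W m) := fun m =>
    closure_mono (hDsub m) (hr m)
  have hrt : Tendsto r atTop (𝓝 (0:F)) := by
    rw [tendsto_def]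
    intro V₀ hV₀
    obtain ⟨V₁, hV₁o, hV₁0, hV₁add⟩ := exists_open_nhds_zero_add_subset hV₀
    have hV₁ : V₁ ∈ 𝓝 (0:F) := hV₁o.mem_nhds hV₁0
    obtain ⟨V₂, ⟨hV₂, hV₂bal⟩, hV₂sub⟩ := (nhds_basis_balanced ℝ F).mem_iff.1 hV₁
    have hV₂sym : ∀ x ∈ V₂, -x ∈ V₂ := by
      intro x hx
      have := hV₂bal.smul_mem (a := (-1:ℝ)) (by norm_num) hx
      simpa using this
    obtain ⟨N, hN⟩ := hWbasis V₂ hV₂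
    rw [mem_atTop_sets]
    refine ⟨N, fun m hm => ?_⟩
    obtain ⟨s, hs, hrs⟩ := aux_closure_sub hV₂ hV₂sym (hrW m)
    have : r m = s + (r m - s) := by abel
    show r m ∈ V₀
    rw [this]
    exact hV₁add (add_mem_add (hV₂sub (hN m hm hs)) (hV₂sub hrs))
  -- x - r M = A M - Bs M
  have hxr : ∀ M, x - r M = A M - Bs M := by
    intro M
    induction M with
    | zero => simp [hA, hB, hr0]
    | succ M ih =>
      have h1 : r (M+1) = r M - f M (r M) := rfl
      have h2 : f M (r M) = am M - bm M := heq M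
      calc x - r (M+1) = (x - r M) + (am M - bm M) := by rw [h1, h2]; abel
        _ = (A M + am M) - (Bs M + bm M) := by rw [ih]; abel
        _ = A (M+1) - Bs (M+1) := by
            show _ = (∑ k ∈ Finset.range (M+1), am k) - (∑ k ∈ Finset.range (M+1), bm k)
            rw [Finset.sum_range_succ, Finset.sum_range_succ]
  have hxt : Tendsto (fun M => x - r M) atTop (𝓝 x) := by
    have := hrt.const_sub x
    simpa using this
  have hxt2 : Tendsto (fun M => x - r M) atTop (𝓝 (aL - bL)) := by
    have := hAt.sub hBt
    simpa [funext hxr] using this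
  have hxeq : x = aL - bL := tendsto_nhds_unique hxt hxt2
  exact ⟨aL, bL, haL, hbL, hxeq, haLU, hbLU⟩

private lemma aux_intervalOfNull (hclosed : IsClosed {x : F | 0 ≤ x})
    (hgen : ∀ x : F, ∃ a b : F, 0 ≤ a ∧ 0 ≤ b ∧ x = a - b)
    (z : ℕ → F) (hz : Tendsto z atTop (𝓝 (0:F))) :
    ∃ u : F, ∃ φ : ℕ → ℕ, StrictMono φ ∧ ∀ k, -u ≤ z (φ k) ∧ z (φ k) ≤ u := by
  obtain ⟨U, hUmem, hUbal, hUadd, hUbasis, hUdec⟩ := aux_decompLemma hclosed hgen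
  have hU0 : ∀ n, (0:F) ∈ U n := fun n => mem_of_mem_nhds (hUmem n)
  have hUsym : ∀ n, ∀ x ∈ U n, -x ∈ U n := by
    intro n x hx
    have := (hUbal n).smul_mem (a := (-1:ℝ)) (by norm_num) hx
    simpa using this
  choose V hVmem hVdec using hUdec
  -- choose indices where z lands in V (k+1)
  have hNk : ∀ k : ℕ, ∃ N : ℕ, ∀ m, N ≤ m → z m ∈ V (k+1) := by
    intro k
    have := tendsto_def.1 hz _ (hVmem (k+1))
    rw [mem_atTop_sets] at this
    obtain ⟨N, hN⟩ := this
    exact ⟨N, fun m hm => hN m hm⟩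
  choose N hN using hNk
  set φ : ℕ → ℕ := fun k => Nat.rec (N 0) (fun k φk => max (N (k+1)) (φk + 1)) k with hφdef
  have hφmono : StrictMono φ := by
    apply strictMono_nat_of_lt_succ
    intro k
    exact lt_of_lt_of_le (Nat.lt_succ_self _) (le_max_right _ _)
  have hφV : ∀ k, z (φ k) ∈ V (k+1) := by
    intro k
    cases k with
    | zero => exact hN 0 _ le_rfl
    | succ k => exact hN (k+1) _ (le_max_left _ _)
  choose am bm ham hbm heq hamU hbmU using fun k => hVdec (k+1) (z (φ k)) (hφV k)
  set A : ℕ → F := fun M => ∑ k ∈ Finset.range M, am k with hA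
  set Bs : ℕ → F := fun M => ∑ k ∈ Finset.range M, bm k with hB
  have hAc : CauchySeq A := aux_cauchyChain hU0 hUadd hUsym hUbasis am hamU
  have hBc : CauchySeq Bs := aux_cauchyChain hU0 hUadd hUsym hUbasis bm hbmU
  obtain ⟨aL, hAt⟩ := cauchySeq_tendsto_of_complete hAc
  obtain ⟨bL, hBt⟩ := cauchySeq_tendsto_of_complete hBc
  have haL : 0 ≤ aL := hclosed.mem_of_tendsto hAt (Eventually.of_forall fun M =>
    Finset.sum_induction am (fun x => 0 ≤ x) (fun a b => add_nonneg) le_rfl (fun i _ => ham i))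
  have hbL : 0 ≤ bL := hclosed.mem_of_tendsto hBt (Eventually.of_forall fun M =>
    Finset.sum_induction bm (fun x => 0 ≤ x) (fun a b => add_nonneg) le_rfl (fun i _ => hbm i))
  -- each am k ≤ aL
  have hamle : ∀ k, am k ≤ aL := by
    intro k
    have key : aL - am k ∈ {x : F | 0 ≤ x} := by
      refine hclosed.mem_of_tendsto (hAt.sub tendsto_const_nhds) ?_
      filter_upwards [eventually_ge_atTop (k+1)] with M hM
      have hkM : k ∈ Finset.range M := Finset.mem_range.2 (by omega)
      have : A M - am k = ∑ j ∈ (Finset.range M).erase k, am j := by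
        show (∑ j ∈ Finset.range M, am j) - am k = _
        rw [← Finset.sum_erase_add (Finset.range M) am hkM]
        abel
      rw [this]
      exact Finset.sum_induction am (fun x => 0 ≤ x) (fun a b => add_nonneg) le_rfl
        (fun i _ => ham i)
    have : 0 ≤ aL - am k := key
    have h2 := add_le_add_right this (am k)
    simpa using h2
  have hbmle : ∀ k, bm k ≤ bL := by
    intro k
    have key : bL - bm k ∈ {x : F | 0 ≤ x} := by
      refine hclosed.mem_of_tendsto (hBt.sub tendsto_const_nhds) ?_
      filter_upwards [eventually_ge_atTop (k+1)] with M hM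
      have hkM : k ∈ Finset.range M := Finset.mem_range.2 (by omega)
      have : Bs M - bm k = ∑ j ∈ (Finset.range M).erase k, bm j := by
        show (∑ j ∈ Finset.range M, bm j) - bm k = _
        rw [← Finset.sum_erase_add (Finset.range M) bm hkM]
        abel
      rw [this]
      exact Finset.sum_induction bm (fun x => 0 ≤ x) (fun a b => add_nonneg) le_rfl
        (fun i _ => hbm i)
    have : 0 ≤ bL - bm k := key
    have h2 := add_le_add_right this (bm k)
    simpa using h2
  refine ⟨aL + bL, φ, hφmono, fun k => ⟨?_, ?_⟩⟩
  · -- -(aL + bL) ≤ z (φ k)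
    have h1 : -bm k ≤ z (φ k) := by
      rw [heq k]
      have := add_le_add_right (ham k) (-bm k)
      simpa [sub_eq_add_neg] using this
    have h2 : -bL ≤ -bm k := by
      have := add_le_add_right (hbmle k) (-bm k - bL)
      simpa [sub_eq_add_neg, add_comm, add_left_comm] using this
    have h3 : -(aL + bL) ≤ -bL := by
      have h4 : bL ≤ aL + bL := by
        have := add_le_add_right haL bL
        simpa using this
      have := add_le_add_right h4 (-bL - (aL + bL))
      simpa [sub_eq_add_neg, add_comm, add_left_comm] using this
    exact le_trans (le_trans h3 h2) h1
  · -- z (φ k) ≤ aL + bL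
    have h1 : z (φ k) ≤ am k := by
      rw [heq k]
      exact sub_le_self _ (hbm k)
    have h2 : aL ≤ aL + bL := le_add_of_nonneg_right hbL
    exact le_trans (le_trans h1 (hamle k)) h2

end Aux

open Pointwise

/-- every collectively order-to-topology bounded family of linear operators
from an ordered Fréchet space with a closed generating cone to a TVS is collectively bounded. -/
theorem collectively_orderToTopologyBounded_implies_collectivelyBounded
    {F : Type*} [AddCommGroup F] [Module ℝ F] [PartialOrder F]
    [CovariantClass F F (· + ·) (· ≤ ·)] [PosSMulMono ℝ F]
    [UniformSpace F] [IsUniformAddGroup F] [ContinuousSMul ℝ F] [LocallyConvexSpace ℝ F]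
    [FirstCountableTopology F] [T2Space F] [CompleteSpace F]
    {Y : Type*} [AddCommGroup Y] [Module ℝ Y] [TopologicalSpace Y]
    [IsTopologicalAddGroup Y] [ContinuousSMul ℝ Y]
    (hclosed : IsClosed {x : F | 0 ≤ x})
    (hgen : ∀ x : F, ∃ a b : F, 0 ≤ a ∧ 0 ≤ b ∧ x = a - b)
    (𝒯 : Set (F →ₗ[ℝ] Y))
    (hob : ∀ a b : F, IsVonNBounded ℝ (⋃ T ∈ 𝒯, T '' Set.Icc a b)) :
    ∀ B : Set F, IsVonNBounded ℝ B → IsVonNBounded ℝ (⋃ T ∈ 𝒯, T '' B) := by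
  intro B hB
  intro V hV
  obtain ⟨V', ⟨hV'mem, hV'bal⟩, hV'sub⟩ := (nhds_basis_balanced ℝ Y).mem_iff.1 hV
  have main : ∃ n : ℕ, (⋃ T ∈ 𝒯, T '' B) ⊆ (((n:ℝ)+1)^2) • V' := by
    by_contra hcon
    push_neg at hcon
    have hcon' : ∀ n : ℕ, ∃ y, y ∈ (⋃ T ∈ 𝒯, T '' B) ∧ y ∉ (((n:ℝ)+1)^2) • V' := by
      intro n
      obtain ⟨y, hy1, hy2⟩ := not_subset.1 (hcon n)
      exact ⟨y, hy1, hy2⟩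
    choose y hy hyn using hcon'
    have hy' : ∀ n : ℕ, ∃ T ∈ 𝒯, ∃ x ∈ B, T x = y n := by
      intro n
      have := hy n
      simp only [mem_iUnion, mem_image] at this
      obtain ⟨T, hT, x, hx, hTx⟩ := this
      exact ⟨T, hT, x, hx, hTx⟩
    choose T hT x hx hTx using hy'
    -- the null sequence
    set z : ℕ → F := fun n => ((n:ℝ)+1)⁻¹ • x n with hz
    have hzt : Tendsto z atTop (𝓝 (0:F)) := by
      rw [tendsto_def]
      intro W hW
      obtain ⟨W', ⟨hW'mem, hW'bal⟩, hW'sub⟩ := (nhds_basis_balanced ℝ F).mem_iff.1 hW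
      obtain ⟨r, hr⟩ := absorbs_iff_norm.1 (hB hW'mem)
      obtain ⟨Nr, hNr⟩ := exists_nat_ge r
      rw [mem_atTop_sets]
      refine ⟨Nr, fun m hm => ?_⟩
      have hrm : r ≤ ‖((m:ℝ)+1)‖ := by
        rw [Real.norm_eq_abs, abs_of_nonneg (by positivity)]
        have : (Nr:ℝ) ≤ (m:ℝ) := Nat.cast_le.2 hm
        linarith
      have hxm : x m ∈ ((m:ℝ)+1) • W' := hr _ hrm (hx m)
      obtain ⟨w, hw, hwe⟩ := hxm
      have hmne : ((m:ℝ)+1) ≠ 0 := by positivity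
      show z m ∈ W
      apply hW'sub
      have : z m = w := by
        rw [hz]
        simp only
        rw [← hwe, inv_smul_smul₀ hmne]
      rw [this]
      exact hw
    obtain ⟨u, φ, hφmono, hφuv⟩ := aux_intervalOfNull hclosed hgen z hzt
    -- the union over the order interval is bounded
    have hbdd := hob (-u) u
    obtain ⟨s, hs⟩ := absorbs_iff_norm.1 (hbdd hV'mem)
    set c : ℝ := max s 1 with hc
    have hc1 : 1 ≤ c := le_max_right _ _
    have hsc : s ≤ ‖c‖ := by
      rw [Real.norm_eq_abs, abs_of_nonneg (by positivity)]
      exact le_max_left _ _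
    obtain ⟨k, hk⟩ := exists_nat_ge c
    -- T (φ k) (z (φ k)) lands in c • V'
    have hTz : T (φ k) (z (φ k)) ∈ c • V' := by
      apply hs c hsc
      simp only [mem_iUnion, mem_image]
      exact ⟨T (φ k), hT (φ k), z (φ k), ⟨(hφuv k).1, (hφuv k).2⟩, rfl⟩
    -- now scale back
    have hφk : (k:ℝ) ≤ (φ k : ℝ) := Nat.cast_le.2 (hφmono.le_apply)
    have hne : ((φ k : ℝ)+1) ≠ 0 := by positivity
    have hTx2 : y (φ k) = ((φ k : ℝ)+1) • T (φ k) (z (φ k)) := by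
      rw [← map_smul, hz]
      simp only
      rw [smul_inv_smul₀ hne, hTx]
    have hmem : y (φ k) ∈ (((φ k : ℝ)+1) * c) • V' := by
      rw [hTx2, ← smul_smul]
      exact smul_mem_smul_set hTz
    have hsub : (((φ k : ℝ)+1) * c) • V' ⊆ (((φ k : ℝ)+1)^2) • V' := by
      apply hV'bal.smul_mono
      rw [Real.norm_eq_abs, Real.norm_eq_abs, abs_of_nonneg (by positivity),
        abs_of_nonneg (by positivity)]
      have hcφ : c ≤ (φ k : ℝ) + 1 := le_trans hk (by linarith)
      nlinarith
    exact hyn (φ k) (hsub hmem)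
  obtain ⟨n, hn⟩ := main
  rw [absorbs_iff_norm]
  refine ⟨((n:ℝ)+1)^2, fun c hc => ?_⟩
  refine subset_trans hn (subset_trans ?_ (smul_set_mono hV'sub))
  apply hV'bal.smul_mono
  rw [Real.norm_eq_abs, abs_of_nonneg (by positivity)]
  exact hc
end

section
/- Every order-to-topology bounded linear operator from an ordered Fréchet space with a closed generating cone to a topological vector space is topologically bounded. That is, if (F, τ) is an ordered Fréchet space whose positive cone F₊ is τ-closed and generating, (Y, ξ) is a real TVS, and T : F → Y is linear with T[a,b] ξ-bounded for all a, b ∈ F, then T maps τ-bounded sets to ξ-bounded sets. -/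
open Filter Set Topology Bornology

universe u

open Pointwise

set_option maxHeartbeats 2000000 in
/-- every order-to-topology bounded linear operator from an ordered Fréchet
space with a closed generating cone to a TVS is topologically bounded. -/
theorem orderToTopologyBounded_implies_bounded
    {F : Type*} [AddCommGroup F] [Module ℝ F] [PartialOrder F]
    [CovariantClass F F (· + ·) (· ≤ ·)] [PosSMulMono ℝ F]
    [UniformSpace F] [IsUniformAddGroup F] [ContinuousSMul ℝ F] [LocallyConvexSpace ℝ F]
    [FirstCountableTopology F] [T2Space F] [CompleteSpace F]
    {Y : Type*} [AddCommGroup Y] [Module ℝ Y] [TopologicalSpace Y]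
    [IsTopologicalAddGroup Y] [ContinuousSMul ℝ Y]
    (hclosed : IsClosed {x : F | 0 ≤ x})
    (hgen : ∀ x : F, ∃ a b : F, 0 ≤ a ∧ 0 ≤ b ∧ x = a - b)
    (T : F →ₗ[ℝ] Y)
    (hob : ∀ a b : F, IsVonNBounded ℝ (T '' Set.Icc a b)) :
    ∀ B : Set F, IsVonNBounded ℝ B → IsVonNBounded ℝ (T '' B) := by
  intro B hB
  haveI : IsOrderedAddMonoid F :=
    { add_le_add_left := fun a b h c => by gcongr }
  haveI : (uniformity F).IsCountablyGenerated := by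
    rw [uniformity_eq_comap_nhds_zero F]
    exact Filter.comap.isCountablyGenerated _ _
  haveI : Nonempty F := ⟨0⟩
  obtain ⟨b, hb⟩ := (nhds (0 : F)).exists_antitone_basis
  -- Construction of a shrinking basis of balanced convex neighborhoods
  have step : ∀ (V : Set F) (n : ℕ), ∃ Uu : Set F, V ∈ 𝓝 (0:F) →
      (Uu ∈ 𝓝 (0:F) ∧ Balanced ℝ Uu ∧ Convex ℝ Uu ∧ Uu + Uu ⊆ V ∧ Uu ⊆ b n) := by
    intro V n
    by_cases hV : V ∈ 𝓝 (0:F)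
    · obtain ⟨V', hV', hV'2⟩ := exists_nhds_zero_half hV
      obtain ⟨Uu, ⟨hU1, hU2, hU3⟩, hU4⟩ :=
        (nhds_hasBasis_absConvex ℝ F).mem_iff.mp (inter_mem hV' (hb.mem n))
      refine ⟨Uu, fun _ => ⟨hU1, hU2, hU3, ?_, fun x hx => (hU4 hx).2⟩⟩
      rw [Set.add_subset_iff]
      exact fun x hx y hy => hV'2 x (hU4 hx).1 y (hU4 hy).1
    · exact ⟨∅, fun h => absurd h hV⟩
  choose f hf using step
  set U : ℕ → Set F :=
    fun n => Nat.rec (motive := fun _ => Set F) (f Set.univ 0) (fun n Un => f Un (n+1)) n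
    with hUdef
  have hUprop : ∀ n, U n ∈ 𝓝 (0:F) ∧ Balanced ℝ (U n) ∧ Convex ℝ (U n) ∧ U n ⊆ b n := by
    intro n
    induction n with
    | zero =>
      obtain ⟨h1, h2, h3, _, h5⟩ := hf Set.univ 0 univ_mem
      exact ⟨h1, h2, h3, h5⟩
    | succ n ih =>
      obtain ⟨h1, h2, h3, _, h5⟩ := hf (U n) (n+1) ih.1
      exact ⟨h1, h2, h3, h5⟩
  have hUmem : ∀ n, U n ∈ 𝓝 (0:F) := fun n => (hUprop n).1
  have hUbal : ∀ n, Balanced ℝ (U n) := fun n => (hUprop n).2.1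
  have hUconv : ∀ n, Convex ℝ (U n) := fun n => (hUprop n).2.2.1
  have hUadd : ∀ n, U (n+1) + U (n+1) ⊆ U n := fun n => (hf (U n) (n+1) (hUmem n)).2.2.2.1
  have hU0 : ∀ n, (0:F) ∈ U n := fun n => mem_of_mem_nhds (hUmem n)
  have hUsucc : ∀ n, U (n+1) ⊆ U n := by
    intro n x hx
    have := hUadd n (Set.add_mem_add hx (hU0 (n+1)))
    rwa [add_zero] at this
  have hUanti : ∀ {m n : ℕ}, m ≤ n → U n ⊆ U m := by
    intro m n h
    exact antitone_nat_of_succ_le hUsucc h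
  have hUbasis : ∀ N ∈ 𝓝 (0:F), ∃ n, U n ⊆ N := by
    intro N hN
    obtain ⟨n, -, hn⟩ := hb.1.mem_iff.mp hN
    exact ⟨n, ((hUprop n).2.2.2).trans hn⟩
  have hUneg : ∀ n, ∀ x ∈ U n, -x ∈ U n := fun n x hx => (hUbal n).neg_mem_iff.mpr hx
  have clU : ∀ n, closure (U (n+1)) ⊆ U n := by
    intro n x hx
    have hcont : Filter.Tendsto (fun y : F => x - y) (𝓝 x) (𝓝 0) := by
      exact ((continuous_const.sub continuous_id : Continuous fun y : F => x - y)).tendsto' x 0 (sub_self x)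
    obtain ⟨y, hy1, hy2⟩ := mem_closure_iff_nhds.mp hx _ (hcont (hUmem (n+1)))
    have h3 := hUadd n (Set.add_mem_add hy2 (Set.mem_preimage.mp hy1))
    have h4 : y + (x - y) = x := by abel
    rwa [h4] at h3
  have tendstoU : ∀ (p : ℕ → F) (m : ℕ), (∀ k, p (k+1) ∈ U (m + k)) →
      Filter.Tendsto p Filter.atTop (𝓝 (0:F)) := by
    intro p m hp
    rw [Filter.tendsto_def]
    intro N hN
    obtain ⟨n, hn⟩ := hUbasis N hN
    rw [Filter.mem_atTop_sets]
    refine ⟨n + 1, fun k hk => ?_⟩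
    obtain ⟨k, rfl⟩ : ∃ k', k = k' + 1 := ⟨k - 1, by omega⟩
    exact hn (hUanti (by omega) (hp k))
  have sumU : ∀ (l : ℕ) (e : ℕ → F) (j : ℕ), (∀ i, e i ∈ U (j+1+i)) →
      ∑ i ∈ Finset.range l, e i ∈ U j := by
    intro l
    induction l with
    | zero => intro e j he; simpa using hU0 j
    | succ l ih =>
      intro e j he
      rw [Finset.sum_range_succ']
      refine hUadd j (Set.add_mem_add (ih (fun i => e (i+1)) (j+1) (fun i => ?_)) ?_)
      · have := he (i+1); rwa [show j+1+(i+1) = j+1+1+i from by omega] at this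
      · simpa using he 0
  have cauchy_sum : ∀ (c : ℕ → F), (∀ i, c i ∈ U (i+1)) →
      ∃ v : F, Filter.Tendsto (fun k => ∑ i ∈ Finset.range k, c i) Filter.atTop (𝓝 v) := by
    intro c hc
    apply cauchySeq_tendsto_of_complete
    apply cauchySeq_of_controlled (fun N : ℕ => {pq : F × F | pq.1 - pq.2 ∈ U N})
    · intro s hs
      rw [uniformity_eq_comap_nhds_zero F, Filter.mem_comap] at hs
      obtain ⟨t, ht, hts⟩ := hs
      obtain ⟨n, hn⟩ := hUbasis t ht
      refine ⟨n, fun pq hpq => hts ?_⟩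
      have h2 : pq.2 - pq.1 ∈ U n := by
        have := hUneg n _ hpq; rwa [neg_sub] at this
      exact hn h2
    · intro N k k' hk hk'
      have key : ∀ k1 k2 : ℕ, N ≤ k2 → k2 ≤ k1 →
          ∑ i ∈ Finset.range k1, c i - ∑ i ∈ Finset.range k2, c i ∈ U N := by
        intro k1 k2 hN2 hle
        rw [← Finset.sum_Ico_eq_sub _ hle, Finset.sum_Ico_eq_sum_range]
        refine hUanti hN2 (sumU _ _ k2 fun i => ?_)
        have := hc (k2+i); rwa [show k2+i+1 = k2+1+i from by omega] at this
      rcases le_total k' k with h | h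
      · exact key k k' hk' h
      · have := hUneg N _ (key k' k hk h)
        rwa [neg_sub] at this
  -- The positive cone
  set C : Set F := {x : F | 0 ≤ x} with hCdef
  have hCconv : Convex ℝ C := fun x hx y hy α β hα hβ _ =>
    add_nonneg (smul_nonneg hα hx) (smul_nonneg hβ hy)
  set P : ℕ → Set F := fun n => C ∩ U n with hPdef
  set S : ℕ → Set F := fun n => P n - P n with hSdef
  have hSconv : ∀ n, Convex ℝ (S n) := fun n =>
    (hCconv.inter (hUconv n)).sub (hCconv.inter (hUconv n))
  have hSneg : ∀ n, ∀ x ∈ S n, -x ∈ S n := by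
    intro n x hx
    obtain ⟨a1, ha1, b1, hb1, hxe⟩ := Set.mem_sub.mp hx
    exact Set.mem_sub.mpr ⟨b1, hb1, a1, ha1, by rw [← hxe]; abel⟩
  have hclneg : ∀ (s : Set F), (∀ x ∈ s, -x ∈ s) → ∀ x ∈ closure s, -x ∈ closure s := by
    intro s hsym x hx
    have h1 : -x ∈ closure ((fun y : F => -y) '' s) :=
      image_closure_subset_closure_image continuous_neg ⟨x, hx, rfl⟩
    refine closure_mono ?_ h1
    rintro _ ⟨y, hy, rfl⟩
    exact hsym y hy
  have hintneg : ∀ (s : Set F), (∀ x ∈ s, -x ∈ s) → ∀ x ∈ interior s, -x ∈ interior s := by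
    intro s hsym x hx
    have hsub : -(interior s) ⊆ s := by
      intro y hy
      have h2 : -y ∈ s := interior_subset (Set.mem_neg.mp hy)
      simpa using hsym _ h2
    have h3 : -x ∈ -(interior s) := by rw [Set.mem_neg]; simpa using hx
    exact interior_maximal hsub isOpen_interior.neg h3
  -- Baire category argument
  have hbaire : ∀ n, (0:F) ∈ interior (closure (S n)) := by
    intro n
    have habs : ∀ y : F, 0 ≤ y → ∃ c : ℝ, 1 ≤ c ∧ c⁻¹ • y ∈ P n := by
      intro y hy
      have h1 := (absorbent_nhds_zero (hUmem n) : Absorbent ℝ (U n)) y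
      rw [absorbs_iff_norm] at h1
      obtain ⟨r, hr⟩ := h1
      have hc0 : (0:ℝ) < max r 1 := lt_of_lt_of_le one_pos (le_max_right _ _)
      refine ⟨max r 1, le_max_right _ _, ?_, ?_⟩
      · exact smul_nonneg (inv_nonneg.mpr hc0.le) hy
      · have hmem : y ∈ (max r 1) • U n :=
          hr (max r 1) (by rw [Real.norm_eq_abs, abs_of_pos hc0]; exact le_max_left _ _)
            (Set.mem_singleton y)
        exact (Set.mem_smul_set_iff_inv_smul_mem₀ (ne_of_gt hc0) _ _).mp hmem
    have hcover : (⋃ k : ℕ, (((k:ℝ)+1) • closure (S n))) = Set.univ := by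
      ext xx
      simp only [Set.mem_iUnion, Set.mem_univ, iff_true]
      obtain ⟨aa, bb2, haa, hbb2, hxeq⟩ := hgen xx
      obtain ⟨ca, hca1, hcaP⟩ := habs aa haa
      obtain ⟨cb, hcb1, hcbP⟩ := habs bb2 hbb2
      set k : ℕ := ⌈max ca cb⌉₊ with hk
      have hK : max ca cb ≤ (k:ℝ)+1 :=
        le_trans (Nat.le_ceil _) (le_add_of_nonneg_right zero_le_one)
      have hK0 : (0:ℝ) < (k:ℝ)+1 := by positivity
      have hmemU : ∀ (cc : ℝ) (y : F), 1 ≤ cc → cc ≤ (k:ℝ)+1 → cc⁻¹ • y ∈ U n →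
          ((k:ℝ)+1)⁻¹ • y ∈ U n := by
        intro cc y hcc1 hcck hmem
        have h0 : (0:ℝ) < cc := lt_of_lt_of_le one_pos hcc1
        have h5 : (cc/((k:ℝ)+1)) • (cc⁻¹ • y) ∈ U n := by
          refine (hUbal n).smul_mem ?_ hmem
          rw [Real.norm_eq_abs, abs_of_pos (by positivity)]
          exact (div_le_one hK0).mpr hcck
        rwa [smul_smul, div_mul_eq_mul_div, mul_inv_cancel₀ (ne_of_gt h0), one_div] at h5
      refine ⟨k, (Set.mem_smul_set_iff_inv_smul_mem₀ (ne_of_gt hK0) _ _).mpr ?_⟩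
      refine subset_closure (Set.mem_sub.mpr
        ⟨((k:ℝ)+1)⁻¹ • aa, ⟨?_, ?_⟩, ((k:ℝ)+1)⁻¹ • bb2, ⟨?_, ?_⟩, ?_⟩)
      · exact smul_nonneg (inv_nonneg.mpr hK0.le) haa
      · exact hmemU ca aa hca1 (le_trans (le_max_left _ _) hK) hcaP.2
      · exact smul_nonneg (inv_nonneg.mpr hK0.le) hbb2
      · exact hmemU cb bb2 hcb1 (le_trans (le_max_right _ _) hK) hcbP.2
      · rw [hxeq, smul_sub]
    obtain ⟨k, hk⟩ := nonempty_interior_of_iUnion_of_closed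
      (fun k : ℕ => IsClosed.smul_of_ne_zero isClosed_closure
        (by positivity : ((k:ℝ)+1) ≠ 0)) hcover
    rw [interior_smul₀ (by positivity : ((k:ℝ)+1) ≠ 0)] at hk
    obtain ⟨y, hy⟩ := hk
    obtain ⟨y0, hy0, -⟩ := Set.mem_smul_set.mp hy
    have hy0' : -y0 ∈ closure (S n) := hclneg _ (hSneg n) _ (interior_subset hy0)
    have h0 : (1/2:ℝ) • y0 + (1/2:ℝ) • (-y0) ∈ interior (closure (S n)) :=
      (hSconv n).closure.combo_interior_self_mem_interior hy0 hy0'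
        (by norm_num) (by norm_num) (by norm_num)
    have heq0 : (1/2:ℝ) • y0 + (1/2:ℝ) • (-y0) = (0:F) := by
      rw [smul_neg]; exact add_neg_cancel _
    rwa [heq0] at h0
  set W : ℕ → Set F := fun n => interior (closure (S n)) ∩ U n with hWdef
  have hWmem : ∀ n, W n ∈ 𝓝 (0:F) := fun n =>
    inter_mem (isOpen_interior.mem_nhds (hbaire n)) (hUmem n)
  have hWS : ∀ n, W n ⊆ closure (S n) := fun n =>
    (Set.inter_subset_left).trans interior_subset
  have hWU : ∀ n, W n ⊆ U n := fun n => Set.inter_subset_right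
  -- one-step approximation
  have stepD : ∀ (j : ℕ) (p : F), ∃ q : F, p ∈ closure (S j) →
      ∃ a2 b2 : F, 0 ≤ a2 ∧ 0 ≤ b2 ∧ a2 ∈ U j ∧ b2 ∈ U j ∧ q ∈ W (j+1) ∧ p = a2 - b2 + q := by
    intro j p
    by_cases hp : p ∈ closure (S j)
    · have hcont : Filter.Tendsto (fun y : F => p - y) (𝓝 p) (𝓝 0) := by
        exact ((continuous_const.sub continuous_id : Continuous fun y : F => p - y)).tendsto' p 0 (sub_self p)
      obtain ⟨y, hy1, hy2⟩ := mem_closure_iff_nhds.mp hp _ (hcont (hWmem (j+1)))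
      obtain ⟨a2, ha2, b2, hb2, hyeq⟩ := Set.mem_sub.mp hy2
      refine ⟨p - y, fun _ => ⟨a2, b2, ha2.1, hb2.1, ha2.2, hb2.2, Set.mem_preimage.mp hy1, ?_⟩⟩
      rw [hyeq]; abel
    · exact ⟨0, fun h => absurd h hp⟩
  choose g hg using stepD
  -- full decomposition
  have decomp : ∀ (m : ℕ) (x : F), x ∈ closure (S (m+2)) →
      ∃ a2 b2 : F, 0 ≤ a2 ∧ 0 ≤ b2 ∧ x = a2 - b2 ∧ a2 ∈ U m ∧ b2 ∈ U m := by
    intro m x hx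
    set p : ℕ → F :=
      fun k => Nat.rec (motive := fun _ => F) x (fun k pk => g (m+2+k) pk) k with hpdef
    have hpsucc : ∀ k, p (k+1) = g (m+2+k) (p k) := fun k => rfl
    have hpcl : ∀ k, p k ∈ closure (S (m+2+k)) := by
      intro k
      induction k with
      | zero => exact hx
      | succ k ih =>
        obtain ⟨a2, b2, -, -, -, -, hq, -⟩ := hg (m+2+k) (p k) ih
        rw [hpsucc]
        exact hWS (m+2+k+1) hq
    have hstep : ∀ k, ∃ a2 b2 : F, 0 ≤ a2 ∧ 0 ≤ b2 ∧ a2 ∈ U (m+2+k) ∧ b2 ∈ U (m+2+k) ∧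
        p (k+1) ∈ W (m+2+k+1) ∧ p k = a2 - b2 + p (k+1) := by
      intro k
      obtain ⟨a2, b2, h1, h2, h3, h4, h5, h6⟩ := hg (m+2+k) (p k) (hpcl k)
      rw [← hpsucc] at h5 h6
      exact ⟨a2, b2, h1, h2, h3, h4, h5, h6⟩
    choose a2 b2 ha2 hb2 ha2U hb2U hpW heq using hstep
    have htel : ∀ k, x = (∑ i ∈ Finset.range k, a2 i) - (∑ i ∈ Finset.range k, b2 i) + p k := by
      intro k
      induction k with
      | zero => simp [hpdef]
      | succ k ih =>
        rw [Finset.sum_range_succ, Finset.sum_range_succ, ih, heq k]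
        abel
    obtain ⟨av, hav⟩ := cauchy_sum a2 (fun i => hUanti (show i+1 ≤ m+2+i by omega) (ha2U i))
    obtain ⟨bv, hbv⟩ := cauchy_sum b2 (fun i => hUanti (show i+1 ≤ m+2+i by omega) (hb2U i))
    have hp0 : Filter.Tendsto p Filter.atTop (𝓝 (0:F)) := by
      refine tendstoU p (m+3) (fun k => ?_)
      have h9 : p (k+1) ∈ U (m+2+k+1) := hWU (m+2+k+1) (hpW k)
      rwa [show m+2+k+1 = m+3+k from by omega] at h9
    have hx2 : Filter.Tendsto
        (fun k => (∑ i ∈ Finset.range k, a2 i) - (∑ i ∈ Finset.range k, b2 i) + p k)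
        Filter.atTop (𝓝 (av - bv + 0)) := (hav.sub hbv).add hp0
    have hfun : (fun _ : ℕ => x) =
        fun k => (∑ i ∈ Finset.range k, a2 i) - (∑ i ∈ Finset.range k, b2 i) + p k :=
      funext fun k => htel k
    have hxeq : x = av - bv := by
      have h1 : Filter.Tendsto (fun _ : ℕ => x) Filter.atTop (𝓝 (av - bv + 0)) := by
        rw [hfun]; exact hx2
      have h2 := tendsto_nhds_unique h1 tendsto_const_nhds
      rw [add_zero] at h2
      exact h2.symm
    have havC : 0 ≤ av := by
      have h3 : ∀ k, (0:F) ≤ ∑ i ∈ Finset.range k, a2 i :=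
        fun k => Finset.sum_nonneg (fun i _ => ha2 i)
      exact hclosed.mem_of_tendsto hav (Filter.Eventually.of_forall h3)
    have hbvC : 0 ≤ bv := by
      have h3 : ∀ k, (0:F) ≤ ∑ i ∈ Finset.range k, b2 i :=
        fun k => Finset.sum_nonneg (fun i _ => hb2 i)
      exact hclosed.mem_of_tendsto hbv (Filter.Eventually.of_forall h3)
    have havU : av ∈ U m := by
      have hmem : ∀ k, ∑ i ∈ Finset.range k, a2 i ∈ U (m+1) := by
        intro k
        refine sumU k a2 (m+1) (fun i => ?_)
        have := ha2U i; rwa [show m+2+i = m+1+1+i from by omega] at this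
      exact clU m (mem_closure_of_tendsto hav (Filter.Eventually.of_forall hmem))
    have hbvU : bv ∈ U m := by
      have hmem : ∀ k, ∑ i ∈ Finset.range k, b2 i ∈ U (m+1) := by
        intro k
        refine sumU k b2 (m+1) (fun i => ?_)
        have := hb2U i; rwa [show m+2+i = m+1+1+i from by omega] at this
      exact clU m (mem_closure_of_tendsto hbv (Filter.Eventually.of_forall hmem))
    exact ⟨av, bv, havC, hbvC, hxeq, havU, hbvU⟩
  -- Main argument
  intro V hV
  obtain ⟨V', ⟨hV'mem, hV'bal⟩, hV'sub⟩ := (nhds_basis_balanced ℝ Y).mem_iff.mp hV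
  suffices habs : Absorbs ℝ V' (T '' B) by exact habs.mono_left hV'sub
  by_contra hcon
  have hnot : ∀ r : ℝ, 0 < r → ∃ x ∈ B, T x ∉ r • V' := by
    intro r hr
    by_contra hno
    push_neg at hno
    apply hcon
    rw [absorbs_iff_norm]
    refine ⟨r, fun cc hcc => ?_⟩
    rintro y ⟨x, hxB2, rfl⟩
    exact hV'bal.smul_mono (by rw [Real.norm_eq_abs, abs_of_pos hr]; exact hcc) (hno x hxB2)
  have habsB : ∀ n : ℕ, ∃ s3 : ℝ, 1 ≤ s3 ∧ ∀ x ∈ B, s3⁻¹ • x ∈ W (n+4) := by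
    intro n
    have h1 := hB (hWmem (n+4))
    rw [absorbs_iff_norm] at h1
    obtain ⟨r, hr⟩ := h1
    have h0 : (0:ℝ) < max r 1 := lt_of_lt_of_le one_pos (le_max_right _ _)
    refine ⟨max r 1, le_max_right _ _, fun x hx => ?_⟩
    have h2 : x ∈ (max r 1) • W (n+4) :=
      hr (max r 1) (by rw [Real.norm_eq_abs, abs_of_pos h0]; exact le_max_left _ _) hx
    exact (Set.mem_smul_set_iff_inv_smul_mem₀ (ne_of_gt h0) _ _).mp h2
  choose s3 hs31 hs3W using habsB
  have hxpick : ∀ n : ℕ, ∃ x ∈ B, T x ∉ (s3 n * ((n:ℝ)+1)) • V' := fun n =>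
    hnot _ (mul_pos (lt_of_lt_of_le one_pos (hs31 n)) (by positivity))
  choose x hxB hxnot using hxpick
  have hzW : ∀ n, (s3 n)⁻¹ • x n ∈ W (n+4) := fun n => hs3W n (x n) (hxB n)
  have hdec : ∀ n, ∃ a2 b2 : F, 0 ≤ a2 ∧ 0 ≤ b2 ∧ (s3 n)⁻¹ • x n = a2 - b2 ∧
      a2 ∈ U (n+2) ∧ b2 ∈ U (n+2) := by
    intro n
    apply decomp (n+2)
    have := hWS (n+4) (hzW n)
    rwa [show n+4 = n+2+2 from by omega] at this
  choose aa bb haa hbb hzeq haaU hbbU using hdec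
  obtain ⟨u, hu⟩ := cauchy_sum (fun i => aa i + bb i)
    (fun i => hUadd (i+1) (Set.add_mem_add (haaU i) (hbbU i)))
  have hle : ∀ n, aa n ≤ u ∧ bb n ≤ u := by
    intro n
    have h1 : ∀ k, n + 1 ≤ k → aa n + bb n ≤ ∑ i ∈ Finset.range k, (aa i + bb i) := by
      intro k hk
      refine Finset.single_le_sum (f := fun i => aa i + bb i)
        (fun i _ => add_nonneg (haa i) (hbb i)) ?_
      exact Finset.mem_range.mpr (by omega)
    have h2 : aa n + bb n ≤ u := by
      have hc : IsClosed {y : F | aa n + bb n ≤ y} := by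
        have he : {y : F | aa n + bb n ≤ y} =
            (fun y : F => y - (aa n + bb n)) ⁻¹' {z : F | 0 ≤ z} := by
          ext y; simp [sub_nonneg]
        rw [he]
        exact hclosed.preimage (continuous_id.sub continuous_const)
      exact hc.mem_of_tendsto hu (Filter.eventually_atTop.mpr ⟨n+1, h1⟩)
    exact ⟨le_trans (le_add_of_nonneg_right (hbb n)) h2,
      le_trans (le_add_of_nonneg_left (haa n)) h2⟩
  have hzIcc : ∀ n, (s3 n)⁻¹ • x n ∈ Set.Icc (-u) u := by
    intro n
    rw [hzeq n]
    constructor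
    · rw [neg_le, neg_sub]
      exact le_trans (sub_le_self _ (haa n)) (hle n).2
    · exact le_trans (sub_le_self _ (hbb n)) (hle n).1
  have h1 := (hob (-u) u) hV'mem
  rw [absorbs_iff_norm] at h1
  obtain ⟨r, hr⟩ := h1
  set t : ℝ := max r 1 with htdef
  have ht0 : (0:ℝ) < t := lt_of_lt_of_le one_pos (le_max_right _ _)
  have hTz : ∀ n, T ((s3 n)⁻¹ • x n) ∈ t • V' := fun n =>
    hr t (by rw [Real.norm_eq_abs, abs_of_pos ht0]; exact le_max_left _ _)
      ⟨(s3 n)⁻¹ • x n, hzIcc n, rfl⟩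
  set n : ℕ := ⌈t⌉₊ with hndef
  obtain ⟨v, hv, hveq⟩ := Set.mem_smul_set.mp (hTz n)
  have hs3pos : (0:ℝ) < s3 n := lt_of_lt_of_le one_pos (hs31 n)
  have hTx : T (x n) = (s3 n * t) • v := by
    have h2 : x n = s3 n • ((s3 n)⁻¹ • x n) := (smul_inv_smul₀ (ne_of_gt hs3pos) _).symm
    rw [h2, map_smul, ← hveq, smul_smul]
  have hmem2 : T (x n) ∈ (s3 n * t) • V' := by
    rw [hTx]; exact smul_mem_smul_set hv
  have hsub2 : (s3 n * t) • V' ⊆ (s3 n * ((n:ℝ)+1)) • V' := by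
    apply hV'bal.smul_mono
    rw [Real.norm_eq_abs, Real.norm_eq_abs, abs_of_pos (mul_pos hs3pos ht0),
      abs_of_pos (mul_pos hs3pos (by positivity))]
    refine mul_le_mul_of_nonneg_left ?_ hs3pos.le
    exact le_trans (Nat.le_ceil t) (le_add_of_nonneg_right zero_le_one)
  exact hxnot n (hsub2 hmem2)
end

section
/- Let (F, τ) be an ordered Fréchet space whose positive cone F₊ is τ-closed, generating, and normal, and let (Y, ξ) be a real topological vector space. Then for a linear operator T : F → Y the following are equivalent: (a) T is ru-to-topology continuous; (b) T is order-to-topology bounded; (c) T is topologically bounded. -/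
set_option linter.unusedSectionVars false
open Filter Set Topology Bornology
open scoped Pointwise

universe u

namespace RUaux

section Order

variable {F : Type*} [AddCommGroup F] [Module ℝ F] [PartialOrder F]
  [CovariantClass F F (· + ·) (· ≤ ·)] [PosSMulMono ℝ F]

lemma add_nonneg' {a b : F} (ha : 0 ≤ a) (hb : 0 ≤ b) : 0 ≤ a + b :=
  le_trans ha (le_add_of_nonneg_right hb)

lemma smul_nonneg' {c : ℝ} (hc : 0 ≤ c) {x : F} (hx : 0 ≤ x) : 0 ≤ c • x := by
  have := smul_le_smul_of_nonneg_left hx hc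
  simpa using this

lemma convex_cone : Convex ℝ {x : F | 0 ≤ x} := by
  intro x hx y hy a b ha hb _
  exact add_nonneg' (smul_nonneg' ha hx) (smul_nonneg' hb hy)

lemma smul_le_smul_right' {c d : ℝ} (h : c ≤ d) {x : F} (hx : 0 ≤ x) : c • x ≤ d • x := by
  have h0 : 0 ≤ (d - c) • x := smul_nonneg' (sub_nonneg.2 h) hx
  have h1 : c • x + (d - c) • x = d • x := by
    rw [← add_smul]; congr 1; ring
  calc c • x ≤ c • x + (d - c) • x := le_add_of_nonneg_right h0
    _ = d • x := h1

lemma sum_nonneg'' (s : Finset ℕ) (t : ℕ → F) (h : ∀ j, 0 ≤ t j) :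
    0 ≤ ∑ j ∈ s, t j :=
  Finset.sum_induction t (0 ≤ ·) (fun _ _ => add_nonneg') le_rfl (fun i _ => h i)

end Order

section Top

variable {F : Type*} [AddCommGroup F] [Module ℝ F] [PartialOrder F]
  [CovariantClass F F (· + ·) (· ≤ ·)] [PosSMulMono ℝ F]
  [UniformSpace F] [IsUniformAddGroup F] [ContinuousSMul ℝ F] [LocallyConvexSpace ℝ F]
  [FirstCountableTopology F] [T2Space F] [CompleteSpace F]

lemma refine_nhd : ∀ V ∈ 𝓝 (0 : F), ∃ W, W ∈ 𝓝 (0 : F) ∧ Convex ℝ W ∧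
    (∀ x ∈ W, -x ∈ W) ∧ W + W ⊆ V := by
  intro V hV
  obtain ⟨V₂, hV₂, hhalf⟩ := exists_nhds_zero_half hV
  obtain ⟨W', ⟨hW'n, hW'c⟩, hW'sub⟩ := (LocallyConvexSpace.convex_basis_zero ℝ F).mem_iff.1 hV₂
  have hnegW' : -W' ∈ 𝓝 (0 : F) := by
    have h := (continuous_neg (G := F)).continuousAt (x := 0)
    have := h.preimage_mem_nhds (by simpa using hW'n)
    exact this
  refine ⟨W' ∩ -W', Filter.inter_mem hW'n hnegW', hW'c.inter hW'c.neg, ?_, ?_⟩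
  · rintro x ⟨h1, h2⟩
    exact ⟨Set.mem_neg.1 h2, by simpa using h1⟩
  · rw [Set.add_subset_iff]
    intro x hx y hy
    exact hhalf x (hW'sub hx.1) y (hW'sub hy.1)

lemma exists_chain (B : ℕ → Set F) (hB : ∀ k, B k ∈ 𝓝 0) :
    ∃ W : ℕ → Set F, (∀ k, W k ∈ 𝓝 0) ∧ (∀ k, Convex ℝ (W k)) ∧
      (∀ k, ∀ x ∈ W k, -x ∈ W k) ∧ (∀ k, W (k+1) + W (k+1) ⊆ W k) ∧
      (∀ k, W k + W k ⊆ B k) := by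
  choose g hg1 hg2 hg3 hg4 using refine_nhd (F := F)
  let W : ℕ → {s : Set F // s ∈ 𝓝 (0 : F)} := fun k =>
    Nat.rec ⟨g (B 0) (hB 0), hg1 _ _⟩
      (fun k p => ⟨g (p.1 ∩ B (k+1)) (Filter.inter_mem p.2 (hB (k+1))), hg1 _ _⟩) k
  refine ⟨fun k => (W k).1, fun k => (W k).2, fun k => ?_, fun k => ?_, fun k => ?_, fun k => ?_⟩
  · cases k with
    | zero => exact hg2 _ _
    | succ k => exact hg2 _ _
  · cases k with
    | zero => exact hg3 _ _
    | succ k => exact hg3 _ _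
  · exact (hg4 ((W k).1 ∩ B (k+1)) _).trans Set.inter_subset_left
  · cases k with
    | zero => exact hg4 _ _
    | succ k => exact (hg4 ((W k).1 ∩ B (k+1)) _).trans Set.inter_subset_right

lemma sum_Ico_mem (W : ℕ → Set F) (h0 : ∀ k, (0 : F) ∈ W k)
    (hadd : ∀ k, W (k+1) + W (k+1) ⊆ W k) (t : ℕ → F) (ht : ∀ j, t j ∈ W (j+1)) :
    ∀ d k, ∑ j ∈ Finset.Ico k (k+d), t j ∈ W k := by
  intro d
  induction d with
  | zero => intro k; simpa using h0 k
  | succ d ih =>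
    intro k
    rw [Finset.sum_eq_sum_Ico_succ_bot (by omega), show k + (d+1) = (k+1)+d from by omega]
    exact hadd k (Set.add_mem_add (ht k) (ih (k+1)))

lemma sum_Ico_mem' (W : ℕ → Set F) (h0 : ∀ k, (0 : F) ∈ W k)
    (hadd : ∀ k, W (k+1) + W (k+1) ⊆ W k) (t : ℕ → F) (ht : ∀ j, t j ∈ W (j+1))
    (k m : ℕ) : ∑ j ∈ Finset.Ico k m, t j ∈ W k := by
  rcases le_or_gt k m with h | h
  · rw [show m = k + (m - k) from by omega]
    exact sum_Ico_mem W h0 hadd t ht _ k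
  · rw [Finset.Ico_eq_empty (by omega)]
    simpa using h0 k

lemma chain_antitone (W : ℕ → Set F) (h0 : ∀ k, (0 : F) ∈ W k)
    (hadd : ∀ k, W (k+1) + W (k+1) ⊆ W k) : ∀ j k, j ≤ k → W k ⊆ W j := by
  have hstep : ∀ k, W (k+1) ⊆ W k := fun k x hx =>
    hadd k (by simpa using Set.add_mem_add hx (h0 (k+1)))
  intro j k h
  exact antitone_nat_of_succ_le (f := fun n => W n) (fun n => hstep n) h

lemma cauchy_partial (B : ℕ → Set F) (hBb : (𝓝 (0 : F)).HasAntitoneBasis B)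
    (W : ℕ → Set F) (h0 : ∀ k, (0 : F) ∈ W k) (hsym : ∀ k, ∀ x ∈ W k, -x ∈ W k)
    (hadd : ∀ k, W (k+1) + W (k+1) ⊆ W k) (hWB : ∀ k, W k ⊆ B k)
    (t : ℕ → F) (ht : ∀ j, t j ∈ W (j+1)) :
    CauchySeq (fun m => ∑ j ∈ Finset.range m, t j) := by
  have hmono := chain_antitone W h0 hadd
  apply cauchySeq_of_controlled (fun N => {p : F × F | p.2 - p.1 ∈ W N})
  · intro s hs
    rw [uniformity_eq_comap_nhds_zero F] at hs
    obtain ⟨t', ht', hsub⟩ := Filter.mem_comap.1 hs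
    obtain ⟨k, -, hk⟩ := hBb.toHasBasis.mem_iff.1 ht'
    exact ⟨k, fun p hp => hsub (hk (hWB k hp))⟩
  · intro N m n hm hn
    show (∑ j ∈ Finset.range n, t j) - (∑ j ∈ Finset.range m, t j) ∈ W N
    rcases le_total m n with h | h
    · rw [← Finset.sum_Ico_eq_sub _ h]
      exact hmono N m hm (sum_Ico_mem' W h0 hadd t ht m n)
    · have h1 : (∑ j ∈ Finset.range m, t j) - (∑ j ∈ Finset.range n, t j) ∈ W N := by
        rw [← Finset.sum_Ico_eq_sub _ h]
        exact hmono N n hn (sum_Ico_mem' W h0 hadd t ht n m)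
      have := hsym N _ h1
      simpa [neg_sub] using this

lemma closure_subset_add (s : Set F) {V : Set F} (hV : V ∈ 𝓝 0) : closure s ⊆ s + V := by
  intro x hx
  have hct : ContinuousAt (fun y : F => x - y) x :=
    (continuous_const.sub continuous_id).continuousAt
  have hmem : {y : F | x - y ∈ V} ∈ 𝓝 x := by
    have := hct.preimage_mem_nhds (by simpa using hV)
    simpa [Set.preimage] using this
  obtain ⟨y, hy1, hy2⟩ := mem_closure_iff_nhds.1 hx _ hmem
  have := Set.add_mem_add hy2 (show x - y ∈ V from hy1)
  simpa using this

lemma baire : BaireSpace F := by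
  haveI := IsUniformAddGroup.uniformity_countably_generated (α := F)
  letI : PseudoMetricSpace F := UniformSpace.pseudoMetricSpace F
  exact BaireSpace.of_completelyPseudoMetrizable

lemma step1 (hclosed : IsClosed {x : F | 0 ≤ x})
    (hgen : ∀ x : F, ∃ a b : F, 0 ≤ a ∧ 0 ≤ b ∧ x = a - b)
    {W : Set F} (hWn : W ∈ 𝓝 0) (hWc : Convex ℝ W) (hWs : ∀ x ∈ W, -x ∈ W) :
    closure (({x : F | 0 ≤ x} ∩ W) - ({x : F | 0 ≤ x} ∩ W)) ∈ 𝓝 (0 : F) := by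
  haveI := baire (F := F)
  set C := {x : F | 0 ≤ x} with hC
  set A := (C ∩ W) - (C ∩ W) with hA
  have h0W : (0 : F) ∈ W := mem_of_mem_nhds hWn
  have hCc : Convex ℝ C := convex_cone
  have hAc : Convex ℝ A := (hCc.inter hWc).sub (hCc.inter hWc)
  have hAsym : ∀ a ∈ A, -a ∈ A := by
    intro a ha
    obtain ⟨p, hp, q, hq, hpq⟩ := Set.mem_sub.1 ha
    exact Set.mem_sub.2 ⟨q, hq, p, hp, by rw [← neg_sub p q, hpq]⟩
  have hcov : ∀ z : F, ∃ n : ℕ, z ∈ ((n : ℝ) + 1) • closure A := by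
    intro z
    obtain ⟨a, b, ha, hb, rfl⟩ := hgen z
    obtain ⟨r, hr⟩ := absorbs_iff_norm.1 ((absorbent_nhds_zero hWn (𝕜 := ℝ)) a)
    obtain ⟨r', hr'⟩ := absorbs_iff_norm.1 ((absorbent_nhds_zero hWn (𝕜 := ℝ)) b)
    set s : ℝ := max (max r r') 1 with hsdef
    have hs1 : (1 : ℝ) ≤ s := le_max_right _ _
    have hs0 : (0 : ℝ) < s := by linarith
    have hss : ‖s‖ = s := Real.norm_of_nonneg hs0.le
    have haW : s⁻¹ • a ∈ W := by
      have h1 : ({a} : Set F) ⊆ s • W := hr s (by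
        rw [hss]; exact le_trans (le_max_left r r') (le_max_left _ 1))
      exact (mem_smul_set_iff_inv_smul_mem₀ (ne_of_gt hs0) _ _).1 (h1 rfl)
    have hbW : s⁻¹ • b ∈ W := by
      have h1 : ({b} : Set F) ⊆ s • W := hr' s (by
        rw [hss]; exact le_trans (le_max_right r r') (le_max_left _ 1))
      exact (mem_smul_set_iff_inv_smul_mem₀ (ne_of_gt hs0) _ _).1 (h1 rfl)
    obtain ⟨n, hn⟩ := exists_nat_ge s
    have hn1 : s ≤ (n : ℝ) + 1 := by linarith
    have hnpos : (0 : ℝ) < (n : ℝ) + 1 := by positivity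
    refine ⟨n, ?_⟩
    rw [mem_smul_set_iff_inv_smul_mem₀ (ne_of_gt hnpos)]
    apply subset_closure
    have hmemW : ∀ y : F, s⁻¹ • y ∈ W → ((n : ℝ) + 1)⁻¹ • y ∈ W := by
      intro y hy
      have heq : ((n : ℝ) + 1)⁻¹ • y = (s / ((n : ℝ) + 1)) • (s⁻¹ • y) := by
        rw [smul_smul]; congr 1; field_simp
      rw [heq]
      exact hWc.smul_mem_of_zero_mem h0W hy
        ⟨by positivity, by rw [div_le_one hnpos]; exact hn1⟩
    refine Set.mem_sub.2 ⟨((n : ℝ) + 1)⁻¹ • a, ⟨smul_nonneg' (by positivity) ha, hmemW a haW⟩,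
      ((n : ℝ) + 1)⁻¹ • b, ⟨smul_nonneg' (by positivity) hb, hmemW b hbW⟩, ?_⟩
    rw [← smul_sub]
  obtain ⟨n, hn⟩ := nonempty_interior_of_iUnion_of_closed
    (f := fun n : ℕ => ((n : ℝ) + 1) • closure A)
    (fun n => isClosed_closure.smul_of_ne_zero (by positivity))
    (by
      ext z
      simp only [Set.mem_iUnion, Set.mem_univ, iff_true]
      exact hcov z)
  rw [interior_smul₀ (by positivity : ((n : ℝ) + 1) ≠ 0)] at hn
  obtain ⟨x, hx⟩ := hn
  obtain ⟨y, hy, rfl⟩ := hx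
  have hyA : -y ∈ closure A :=
    map_mem_closure continuous_neg (interior_subset hy) hAsym
  have h0 : (0 : F) ∈ interior (closure A) := by
    have := (hAc.closure).combo_interior_self_mem_interior hy hyA
      (a := (1:ℝ)/2) (b := (1:ℝ)/2) one_half_pos (by norm_num) (by norm_num)
    simpa [smul_neg] using this
  exact mem_interior_iff_mem_nhds.1 h0

lemma ando (hclosed : IsClosed {x : F | 0 ≤ x})
    (hgen : ∀ x : F, ∃ a b : F, 0 ≤ a ∧ 0 ≤ b ∧ x = a - b) :
    ∀ U ∈ 𝓝 (0 : F), ({x : F | 0 ≤ x} ∩ U) - ({x : F | 0 ≤ x} ∩ U) ∈ 𝓝 (0 : F) := by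
  intro U hU
  set C := {x : F | 0 ≤ x} with hC
  obtain ⟨B, hBb⟩ := (𝓝 (0 : F)).exists_antitone_basis
  obtain ⟨W, hWn, hWc, hWs, hWadd, hWB⟩ := exists_chain (fun k => B k ∩ U)
    (fun k => Filter.inter_mem (hBb.mem k) hU)
  have h0W : ∀ k, (0 : F) ∈ W k := fun k => mem_of_mem_nhds (hWn k)
  have hWsub : ∀ k, W k ⊆ B k ∩ U := fun k x hx =>
    hWB k (by simpa using Set.add_mem_add hx (h0W k))
  set N : ℕ → Set F := fun k => closure ((C ∩ W (k+1)) - (C ∩ W (k+1))) with hN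
  have hNn : ∀ k, N k ∈ 𝓝 (0 : F) := fun k =>
    step1 hclosed hgen (hWn (k+1)) (hWc (k+1)) (hWs (k+1))
  have key : ∀ (k : ℕ) (z : F), z ∈ N k → ∃ p q : F,
      (p ∈ C ∩ W (k+1)) ∧ (q ∈ C ∩ W (k+1)) ∧ z - (p - q) ∈ N (k+1) := by
    intro k z hz
    have hct : ContinuousAt (fun w : F => z - w) z :=
      (continuous_const.sub continuous_id).continuousAt
    have hmem : {w : F | z - w ∈ N (k+1)} ∈ 𝓝 z := by
      have := hct.preimage_mem_nhds (by simpa using hNn (k+1))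
      simpa [Set.preimage] using this
    obtain ⟨w, hw1, hw2⟩ := mem_closure_iff_nhds.1 hz _ hmem
    obtain ⟨p, hp, q, hq, hpq⟩ := Set.mem_sub.1 hw2
    exact ⟨p, q, hp, hq, by rw [hpq]; exact hw1⟩
  choose! p q hp hq hrec using key
  suffices hsub : N 0 ⊆ (C ∩ U) - (C ∩ U) by
    exact Filter.mem_of_superset (hNn 0) hsub
  intro x hx
  set r : ℕ → F := fun k => Nat.rec x (fun k z => z - (p k z - q k z)) k with hrdef
  have hr : ∀ k, r k ∈ N k := by
    intro k
    induction k with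
    | zero => exact hx
    | succ k ih => exact hrec k (r k) ih
  set P : ℕ → F := fun k => p k (r k) with hPdef
  set Q : ℕ → F := fun k => q k (r k) with hQdef
  have hP : ∀ k, P k ∈ C ∩ W (k+1) := fun k => hp k (r k) (hr k)
  have hQ : ∀ k, Q k ∈ C ∩ W (k+1) := fun k => hq k (r k) (hr k)
  have hrsum : ∀ m, r m = x - (∑ j ∈ Finset.range m, P j - ∑ j ∈ Finset.range m, Q j) := by
    intro m
    induction m with
    | zero => simp [hrdef]
    | succ m ih =>
      have : r (m+1) = r m - (P m - Q m) := rfl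
      rw [this, ih, Finset.sum_range_succ, Finset.sum_range_succ]
      abel
  have hWBk : ∀ k, W k ⊆ B k := fun k => (hWsub k).trans Set.inter_subset_left
  have hcP : CauchySeq (fun m => ∑ j ∈ Finset.range m, P j) :=
    cauchy_partial B hBb W h0W hWs hWadd hWBk P (fun j => (hP j).2)
  have hcQ : CauchySeq (fun m => ∑ j ∈ Finset.range m, Q j) :=
    cauchy_partial B hBb W h0W hWs hWadd hWBk Q (fun j => (hQ j).2)
  obtain ⟨Pl, hPl⟩ := cauchySeq_tendsto_of_complete hcP
  obtain ⟨Ql, hQl⟩ := cauchySeq_tendsto_of_complete hcQ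
  have hPlC : Pl ∈ C := hclosed.mem_of_tendsto hPl
    (Filter.Eventually.of_forall fun m => sum_nonneg'' _ P (fun j => (hP j).1))
  have hQlC : Ql ∈ C := hclosed.mem_of_tendsto hQl
    (Filter.Eventually.of_forall fun m => sum_nonneg'' _ Q (fun j => (hQ j).1))
  have hsumW0 : ∀ (t : ℕ → F), (∀ j, t j ∈ W (j+1)) →
      ∀ m, ∑ j ∈ Finset.range m, t j ∈ W 0 := by
    intro t ht m
    rw [Finset.range_eq_Ico]
    exact sum_Ico_mem' W h0W hWadd t ht 0 m
  have hPlU : Pl ∈ U := by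
    have h1 : Pl ∈ closure (W 0) := mem_closure_of_tendsto hPl
      (Filter.Eventually.of_forall (hsumW0 P (fun j => (hP j).2)))
    exact (hWB 0 (closure_subset_add (W 0) (hWn 0) h1)).2
  have hQlU : Ql ∈ U := by
    have h1 : Ql ∈ closure (W 0) := mem_closure_of_tendsto hQl
      (Filter.Eventually.of_forall (hsumW0 Q (fun j => (hQ j).2)))
    exact (hWB 0 (closure_subset_add (W 0) (hWn 0) h1)).2
  have hrt : Tendsto r atTop (𝓝 (x - (Pl - Ql))) := by
    have heq : r = fun m => x - (∑ j ∈ Finset.range m, P j - ∑ j ∈ Finset.range m, Q j) :=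
      funext hrsum
    rw [heq]
    exact tendsto_const_nhds.sub (hPl.sub hQl)
  have hrt0 : Tendsto r atTop (𝓝 (0 : F)) := by
    rw [hBb.toHasBasis.tendsto_right_iff]
    intro i _
    filter_upwards [Filter.eventually_ge_atTop i] with k hk
    have hAk : (C ∩ W (k+1)) - (C ∩ W (k+1)) ⊆ W k := by
      rintro z hz
      obtain ⟨a, ha, b, hb, rfl⟩ := Set.mem_sub.1 hz
      have : a + (-b) ∈ W k := hWadd k (Set.add_mem_add ha.2 (hWs (k+1) b hb.2))
      simpa [sub_eq_add_neg] using this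
    have h1 : r k ∈ closure (W k) := closure_mono hAk (hr k)
    have h2 : r k ∈ W k + W k := closure_subset_add (W k) (hWn k) h1
    exact hBb.antitone hk ((hWB k h2).1)
  have hxeq : x - (Pl - Ql) = 0 := tendsto_nhds_unique hrt hrt0
  exact Set.mem_sub.2 ⟨Pl, ⟨hPlC, hPlU⟩, Ql, ⟨hQlC, hQlU⟩, by
    have := sub_eq_zero.1 hxeq
    exact this.symm⟩

end Top

end RUaux
section Part2
variable {F : Type*} [AddCommGroup F] [Module ℝ F] [PartialOrder F]
  [CovariantClass F F (· + ·) (· ≤ ·)] [PosSMulMono ℝ F]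
  [UniformSpace F] [IsUniformAddGroup F] [ContinuousSMul ℝ F] [LocallyConvexSpace ℝ F]
  [FirstCountableTopology F] [T2Space F] [CompleteSpace F]

namespace RUaux

lemma ru_subseq (hclosed : IsClosed {x : F | 0 ≤ x})
    (hgen : ∀ x : F, ∃ a b : F, 0 ≤ a ∧ 0 ≤ b ∧ x = a - b)
    (y : ℕ → F) (hy : Tendsto y atTop (𝓝 0)) :
    ∃ φ : ℕ → ℕ, StrictMono φ ∧ RuConvZero (fun k => y (φ k)) := by
  set C := {x : F | 0 ≤ x} with hC
  obtain ⟨B, hBb⟩ := (𝓝 (0 : F)).exists_antitone_basis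
  obtain ⟨W, hWn, hWc, hWs, hWadd, hWB⟩ := exists_chain B (fun k => hBb.mem k)
  have h0W : ∀ k, (0 : F) ∈ W k := fun k => mem_of_mem_nhds (hWn k)
  have hWBk : ∀ k, W k ⊆ B k := fun k x hx =>
    hWB k (by simpa using Set.add_mem_add hx (h0W k))
  set G : ℕ → Set F := fun k => ((k : ℝ) + 1)⁻¹ • W (k+2) with hG
  have hGn : ∀ k, G k ∈ 𝓝 (0 : F) := by
    intro k
    have hne : ((((k : ℝ) + 1))⁻¹ : ℝ) ≠ 0 := by positivity
    have heq : G k = (fun x : F => ((((k : ℝ) + 1))⁻¹)⁻¹ • x) ⁻¹' (W (k+2)) := by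
      ext x
      exact mem_smul_set_iff_inv_smul_mem₀ hne _ _
    rw [heq]
    have hcont : ContinuousAt (fun x : F => ((((k : ℝ) + 1))⁻¹)⁻¹ • x) 0 :=
      (continuous_const_smul _).continuousAt
    exact hcont.preimage_mem_nhds (by simpa using hWn (k+2))
  set D : ℕ → Set F := fun k => (C ∩ G k) - (C ∩ G k) with hD
  have hDn : ∀ k, D k ∈ 𝓝 (0 : F) := fun k => ando hclosed hgen _ (hGn k)
  have hNex : ∀ k, ∃ N : ℕ, ∀ n ≥ N, y n ∈ D k := fun k =>
    Filter.mem_atTop_sets.1 (hy (hDn k))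
  choose Nf hNf using hNex
  set φ : ℕ → ℕ := fun k => Nat.rec (Nf 0) (fun k n => max (Nf (k+1)) (n+1)) k with hφ
  have hφmono : StrictMono φ := strictMono_nat_of_lt_succ (fun k =>
    lt_of_lt_of_le (Nat.lt_succ_self _) (le_max_right _ _))
  have hφD : ∀ k, y (φ k) ∈ D k := by
    intro k
    cases k with
    | zero => exact hNf 0 _ le_rfl
    | succ k => exact hNf (k+1) _ (le_max_left _ _)
  have hdec : ∀ k, ∃ p q : F, 0 ≤ p ∧ 0 ≤ q ∧ ((k : ℝ) + 1) • p ∈ W (k+2) ∧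
      ((k : ℝ) + 1) • q ∈ W (k+2) ∧ p - q = y (φ k) := by
    intro k
    obtain ⟨p, ⟨hpC, hpG⟩, q, ⟨hqC, hqG⟩, hpq⟩ := Set.mem_sub.1 (hφD k)
    have hk0 : ((k : ℝ) + 1)⁻¹ ≠ 0 := by positivity
    refine ⟨p, q, hpC, hqC, ?_, ?_, hpq⟩
    · have := (mem_smul_set_iff_inv_smul_mem₀ hk0 _ _).1 hpG
      rwa [inv_inv] at this
    · have := (mem_smul_set_iff_inv_smul_mem₀ hk0 _ _).1 hqG
      rwa [inv_inv] at this
  choose p q hp hq hpW hqW hpq using hdec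
  set t : ℕ → F := fun k => ((k : ℝ) + 1) • p k + ((k : ℝ) + 1) • q k with ht
  have htW : ∀ k, t k ∈ W (k+1) := fun k => hWadd (k+1) (Set.add_mem_add (hpW k) (hqW k))
  have htC : ∀ k, 0 ≤ t k := fun k =>
    add_nonneg' (smul_nonneg' (by positivity) (hp k)) (smul_nonneg' (by positivity) (hq k))
  have hcS : CauchySeq (fun m => ∑ j ∈ Finset.range m, t j) :=
    cauchy_partial B hBb W h0W hWs hWadd hWBk t htW
  obtain ⟨u, hu⟩ := cauchySeq_tendsto_of_complete hcS
  have huC : 0 ≤ u := hclosed.mem_of_tendsto hu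
    (Filter.Eventually.of_forall fun m => sum_nonneg'' _ t htC)
  have hle : ∀ k, t k ≤ u := by
    intro k
    have hev : ∀ᶠ m in atTop, (0 : F) ≤ (∑ j ∈ Finset.range m, t j) - t k := by
      filter_upwards [Filter.eventually_ge_atTop (k+1)] with m hm
      have hk : k ∈ Finset.range m := Finset.mem_range.2 (by omega)
      rw [← Finset.add_sum_erase _ t hk, add_sub_cancel_left]
      exact sum_nonneg'' _ t htC
    have h1 : (0 : F) ≤ u - t k := hclosed.mem_of_tendsto (hu.sub tendsto_const_nhds) hev
    exact sub_nonneg.1 h1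
  have hbound : ∀ k, p k + q k ≤ ((k : ℝ) + 1)⁻¹ • u := by
    intro k
    have h1 : ((k : ℝ) + 1)⁻¹ • t k ≤ ((k : ℝ) + 1)⁻¹ • u :=
      smul_le_smul_of_nonneg_left (hle k) (by positivity)
    have h2 : ((k : ℝ) + 1)⁻¹ • t k = p k + q k := by
      rw [ht]
      simp only [smul_add, smul_smul, inv_mul_cancel₀ (show ((k : ℝ) + 1) ≠ 0 by positivity),
        one_smul]
    rwa [h2] at h1
  refine ⟨φ, hφmono, u, huC, id, monotone_id, ?_⟩
  intro n hn a ha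
  have hya : y (φ a) = p a - q a := (hpq a).symm
  have h1 : y (φ a) ≤ p a + q a := by
    rw [hya]
    exact le_trans (sub_le_self _ (hq a)) (le_add_of_nonneg_right (hq a))
  have h2 : -(y (φ a)) ≤ p a + q a := by
    rw [hya, neg_sub]
    rw [add_comm]
    exact le_trans (sub_le_self _ (hp a)) (le_add_of_nonneg_right (hp a))
  have h4 : ((a : ℝ) + 1)⁻¹ • u ≤ ((n : ℝ))⁻¹ • u := by
    apply smul_le_smul_right' _ huC
    have hn' : (0 : ℝ) < (n : ℝ) := by exact_mod_cast hn
    have hna : (n : ℝ) ≤ (a : ℝ) + 1 := by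
      have : (n : ℝ) ≤ (a : ℝ) := by exact_mod_cast ha
      linarith
    exact inv_anti₀ hn' hna
  have h5 : p a + q a ≤ ((n : ℝ))⁻¹ • u := le_trans (hbound a) h4
  exact ⟨neg_le.1 (le_trans h2 h5), le_trans h1 h5⟩

lemma Icc_bounded (hnormal : NormalConeTVS F) (a b : F) :
    Bornology.IsVonNBounded ℝ (Set.Icc a b) := by
  intro V hV
  obtain ⟨W, ⟨hWn, hWbal⟩, hWV⟩ := (nhds_basis_balanced ℝ F).mem_iff.1 hV
  obtain ⟨V', hV'n, hV'W, hfull⟩ := hnormal W hWn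
  obtain ⟨r, hr⟩ := absorbs_iff_norm.1 ((absorbent_nhds_zero hV'n (𝕜 := ℝ)) a)
  obtain ⟨r', hr'⟩ := absorbs_iff_norm.1 ((absorbent_nhds_zero hV'n (𝕜 := ℝ)) b)
  rw [absorbs_iff_norm]
  refine ⟨max (max r r') 1, fun c hc => ?_⟩
  set s : ℝ := ‖c‖ with hs
  have hs1 : (1 : ℝ) ≤ s := le_trans (le_max_right _ _) hc
  have hs0 : (0 : ℝ) < s := by linarith
  have hc0 : c ≠ 0 := by
    intro h
    rw [h, norm_zero] at hs
    rw [hs] at hs0; exact lt_irrefl 0 hs0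
  have hss : ‖s‖ = s := Real.norm_of_nonneg hs0.le
  have ha' : s⁻¹ • a ∈ V' := by
    have h1 : ({a} : Set F) ⊆ s • V' := hr s
      (by rw [hss]; exact le_trans (le_trans (le_max_left r r') (le_max_left _ 1)) hc)
    exact (mem_smul_set_iff_inv_smul_mem₀ (ne_of_gt hs0) _ _).1 (h1 rfl)
  have hb' : s⁻¹ • b ∈ V' := by
    have h1 : ({b} : Set F) ⊆ s • V' := hr' s
      (by rw [hss]; exact le_trans (le_trans (le_max_right r r') (le_max_left _ 1)) hc)
    exact (mem_smul_set_iff_inv_smul_mem₀ (ne_of_gt hs0) _ _).1 (h1 rfl)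
  intro x hx
  have hxV' : s⁻¹ • x ∈ V' := hfull _ _ _ ha' hb'
    (smul_le_smul_of_nonneg_left hx.1 (by positivity))
    (smul_le_smul_of_nonneg_left hx.2 (by positivity))
  have hxW : x ∈ s • V' := (mem_smul_set_iff_inv_smul_mem₀ (ne_of_gt hs0) _ _).2 hxV'
  obtain ⟨v, hv, rfl⟩ := hxW
  have hnorm : ‖c⁻¹ * s‖ ≤ 1 := by
    rw [norm_mul, norm_inv, hss, ← hs]
    rw [inv_mul_cancel₀ (by rw [hs]; positivity)]
  have hmem : (c⁻¹ * s) • v ∈ W := hWbal (c⁻¹ * s) hnorm (Set.smul_mem_smul_set (hV'W hv))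
  apply Set.smul_set_mono hWV
  refine ⟨(c⁻¹ * s) • v, hmem, ?_⟩
  show c • ((c⁻¹ * s) • v) = s • v
  rw [smul_smul, ← mul_assoc, mul_inv_cancel₀ hc0, one_mul]

end RUaux
end Part2

section Main

variable {F : Type*} [AddCommGroup F] [Module ℝ F] [PartialOrder F]
  [CovariantClass F F (· + ·) (· ≤ ·)] [PosSMulMono ℝ F]
  [UniformSpace F] [IsUniformAddGroup F] [ContinuousSMul ℝ F] [LocallyConvexSpace ℝ F]
  [FirstCountableTopology F] [T2Space F] [CompleteSpace F]
  {Y : Type*} [AddCommGroup Y] [Module ℝ Y] [TopologicalSpace Y]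
  [IsTopologicalAddGroup Y] [ContinuousSMul ℝ Y]

namespace RUaux

lemma b_to_a (T : F →ₗ[ℝ] Y) (hb : ∀ a b : F, IsVonNBounded ℝ (T '' Set.Icc a b))
    {ι : Type*} [Preorder ι] (x : ι → F) (hx : RuConvZero x) :
    Tendsto (fun a => T (x a)) atTop (𝓝 0) := by
  obtain ⟨u, hu, α, hα, hbound⟩ := hx
  rw [Filter.tendsto_def]
  intro s hs
  obtain ⟨r, hr⟩ := absorbs_iff_norm.1 (hb (-u) u hs)
  obtain ⟨n, hn⟩ := exists_nat_ge (max r 1)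
  have hn1 : (1 : ℝ) ≤ (n : ℝ) := le_trans (le_max_right _ _) hn
  have hn0 : (0 : ℝ) < (n : ℝ) := by linarith
  have hnn : 0 < n := by exact_mod_cast hn0
  have himg : T '' Set.Icc (-u) u ⊆ (n : ℝ) • s := hr (n : ℝ)
    (by rw [Real.norm_of_nonneg hn0.le]; exact le_trans (le_max_left _ _) hn)
  apply Filter.mem_of_superset (Filter.Ici_mem_atTop (α n))
  intro a ha
  show T (x a) ∈ s
  obtain ⟨hb1, hb2⟩ := hbound n hnn a ha
  have hsmul : ((n : ℝ)) • ((n : ℝ)⁻¹ • u) = u := by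
    rw [smul_smul, mul_inv_cancel₀ (ne_of_gt hn0), one_smul]
  have hIcc : (n : ℝ) • x a ∈ Set.Icc (-u) u := by
    constructor
    · have := smul_le_smul_of_nonneg_left hb1 hn0.le
      rwa [smul_neg, hsmul] at this
    · have := smul_le_smul_of_nonneg_left hb2 hn0.le
      rwa [hsmul] at this
  have h1 : T ((n : ℝ) • x a) ∈ (n : ℝ) • s := himg (Set.mem_image_of_mem _ hIcc)
  rw [map_smul] at h1
  exact (smul_mem_smul_set_iff₀ (ne_of_gt hn0) _ _).1 h1

lemma ru_to_bounded (hclosed : IsClosed {x : F | 0 ≤ x})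
    (hgen : ∀ x : F, ∃ a b : F, 0 ≤ a ∧ 0 ≤ b ∧ x = a - b)
    (T : F →ₗ[ℝ] Y)
    (ha : ∀ x : ℕ → F, RuConvZero x → Tendsto (fun a => T (x a)) atTop (𝓝 0)) :
    ∀ B : Set F, IsVonNBounded ℝ B → IsVonNBounded ℝ (T '' B) := by
  intro B hB
  intro V hV
  obtain ⟨W, ⟨hWn, hWbal⟩, hWV⟩ := (nhds_basis_balanced ℝ Y).mem_iff.1 hV
  suffices habs : Absorbs ℝ W (T '' B) by exact habs.mono_left hWV
  by_contra hcon
  have hnotsub : ∀ t : ℝ, 0 < t → ¬(T '' B ⊆ t • W) := by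
    intro t ht hsub
    apply hcon
    rw [absorbs_iff_norm]
    refine ⟨t, fun c hc => ?_⟩
    have hc0 : c ≠ 0 := by
      intro h; rw [h, norm_zero] at hc; linarith
    have hsub2 : t • W ⊆ c • W := by
      intro z hz
      obtain ⟨w, hw, rfl⟩ := hz
      have hmem : (c⁻¹ * t) • w ∈ W := hWbal (c⁻¹ * t)
        (by
          rw [norm_mul, norm_inv]
          rw [Real.norm_of_nonneg ht.le]
          rw [← div_eq_inv_mul, div_le_one (lt_of_lt_of_le ht hc)]
          exact hc
          ) (Set.smul_mem_smul_set hw)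
      refine ⟨(c⁻¹ * t) • w, hmem, ?_⟩
      show c • ((c⁻¹ * t) • w) = t • w
      rw [smul_smul, ← mul_assoc, mul_inv_cancel₀ hc0, one_mul]
    exact hsub.trans hsub2
  have hex : ∀ n : ℕ, ∃ x ∈ B, T x ∉ (((n : ℝ) + 1)^2) • W := by
    intro n
    by_contra hcon2
    push_neg at hcon2
    exact hnotsub (((n : ℝ) + 1)^2) (by positivity) (by
      rintro z ⟨x, hx, rfl⟩
      exact hcon2 x hx)
  choose x hxB hxW using hex
  set y : ℕ → F := fun n => ((n : ℝ) + 1)⁻¹ • x n with hy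
  have hytend : Tendsto y atTop (𝓝 (0 : F)) := by
    have heps : Tendsto (fun n : ℕ => ((n : ℝ) + 1)⁻¹) atTop (𝓝 (0 : ℝ)) := by
      have := tendsto_one_div_add_atTop_nhds_zero_nat (𝕜 := ℝ)
      simpa [one_div] using this
    have := hB.smul_tendsto_zero (Filter.Eventually.of_forall hxB) heps
    exact this
  obtain ⟨φ, hφ, hru⟩ := RUaux.ru_subseq hclosed hgen y hytend
  have htendN : Tendsto (fun k : ℕ => T (y (φ k))) atTop (𝓝 (0 : Y)) :=
    ha (fun k => y (φ k)) hru
  have hevent : ∀ᶠ k in atTop, T (y (φ k)) ∈ W := htendN hWn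
  obtain ⟨k, hk⟩ := hevent.exists
  set n : ℕ := φ k with hn
  have hTy : T (y n) = ((n : ℝ) + 1)⁻¹ • T (x n) := by
    rw [hy]; simp [map_smul]
  have hTx : T (x n) = ((n : ℝ) + 1) • T (y n) := by
    rw [hTy, smul_smul, mul_inv_cancel₀ (by positivity : ((n : ℝ) + 1) ≠ 0), one_smul]
  apply hxW n
  rw [hTx]
  have h1 : T (y n) ∈ W := hk
  have h2 : ((n : ℝ) + 1) • T (y n) ∈ ((n : ℝ) + 1) • W := Set.smul_mem_smul_set h1
  have h3 : ((n : ℝ) + 1) • W ⊆ (((n : ℝ) + 1)^2) • W := by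
    intro z hz
    obtain ⟨w, hw, rfl⟩ := hz
    have hmem : (((n : ℝ) + 1)⁻¹) • w ∈ W := hWbal (((n : ℝ) + 1)⁻¹)
      (by
        rw [norm_inv, Real.norm_of_nonneg (by positivity : (0:ℝ) ≤ (n : ℝ) + 1)]
        rw [inv_le_one_iff₀]
        right; linarith [Nat.cast_nonneg (α := ℝ) n]) (Set.smul_mem_smul_set hw)
    refine ⟨(((n : ℝ) + 1)⁻¹) • w, hmem, ?_⟩
    show (((n : ℝ) + 1)^2) • ((((n : ℝ) + 1)⁻¹) • w) = ((n : ℝ) + 1) • w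
    rw [smul_smul, sq, mul_assoc, mul_inv_cancel₀ (by positivity : ((n : ℝ) + 1) ≠ 0), mul_one]
  exact h3 h2

end RUaux

end Main

/-- for a linear operator from an ordered Fréchet space with a closed
generating normal cone to a TVS, the following are equivalent:
(a) ru-to-topology continuous; (b) order-to-topology bounded; (c) topologically bounded. -/
theorem ruContinuous_iff_orderToTopologyBounded_iff_bounded
    {F : Type*} [AddCommGroup F] [Module ℝ F] [PartialOrder F]
    [CovariantClass F F (· + ·) (· ≤ ·)] [PosSMulMono ℝ F]
    [UniformSpace F] [IsUniformAddGroup F] [ContinuousSMul ℝ F] [LocallyConvexSpace ℝ F]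
    [FirstCountableTopology F] [T2Space F] [CompleteSpace F]
    {Y : Type*} [AddCommGroup Y] [Module ℝ Y] [TopologicalSpace Y]
    [IsTopologicalAddGroup Y] [ContinuousSMul ℝ Y]
    (hclosed : IsClosed {x : F | 0 ≤ x})
    (hgen : ∀ x : F, ∃ a b : F, 0 ≤ a ∧ 0 ≤ b ∧ x = a - b)
    (hnormal : NormalConeTVS F)
    (T : F →ₗ[ℝ] Y) :
    ((∀ (ι : Type*) [Preorder ι] [Nonempty ι] [IsDirected ι (· ≤ ·)] (x : ι → F),
        RuConvZero x → Tendsto (fun a => T (x a)) atTop (𝓝 0)) ↔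
      (∀ a b : F, IsVonNBounded ℝ (T '' Set.Icc a b))) ∧
    ((∀ a b : F, IsVonNBounded ℝ (T '' Set.Icc a b)) ↔
      (∀ B : Set F, IsVonNBounded ℝ B → IsVonNBounded ℝ (T '' B))) := by
  have hcb : (∀ B : Set F, IsVonNBounded ℝ B → IsVonNBounded ℝ (T '' B)) →
      (∀ a b : F, IsVonNBounded ℝ (T '' Set.Icc a b)) := by
    intro hc a b
    exact hc _ (RUaux.Icc_bounded hnormal a b)
  constructor
  · constructor
    · intro ha
      apply hcb
      apply RUaux.ru_to_bounded hclosed hgen T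
      intro x hx
      haveI : IsDirected (ULift ℕ) (· ≤ ·) :=
        ⟨fun a b => ⟨⟨max a.down b.down⟩, le_max_left _ _, le_max_right _ _⟩⟩
      have hx' : RuConvZero (fun k : ULift ℕ => x k.down) := by
        obtain ⟨u, hu, α, hα, hbnd⟩ := hx
        exact ⟨u, hu, fun n => ⟨α n⟩, fun a b h => hα h, fun n hn a ha => hbnd n hn a.down ha⟩
      have htend := ha (ULift ℕ) (fun k => x k.down) hx'
      have hcomp : Tendsto (fun n : ℕ => (⟨n⟩ : ULift ℕ)) atTop atTop :=
        tendsto_atTop_atTop_of_monotone (fun a b h => h) (fun b => ⟨b.down, le_rfl⟩)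
      exact htend.comp hcomp
    · intro hb ι _ _ _ x hx
      exact RUaux.b_to_a T hb x hx
  · constructor
    · intro hb
      apply RUaux.ru_to_bounded hclosed hgen T
      intro x hx
      exact RUaux.b_to_a T hb x hx
    · exact hcb
end

section
/- Let (F, τ) be an ordered Fréchet space whose positive cone F₊ is τ-closed, generating, and normal, and let (Y, ξ) be an ordered real topological vector space whose positive cone is generating and normal. Then every order bounded linear operator T : F → Y is topologically bounded. -/
open Filter Set Topology Bornology

universe u

open Pointwise

theorem aux_exists_chain {F : Type*} [AddCommGroup F] [TopologicalSpace F]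
    [IsTopologicalAddGroup F]
    (b : ℕ → Set F) (hbmem : ∀ n, b n ∈ 𝓝 (0 : F)) {W : Set F} (hW : W ∈ 𝓝 (0 : F)) :
    ∃ U : ℕ → Set F, (∀ n, U n ∈ 𝓝 (0 : F)) ∧ (∀ n, IsClosed (U n)) ∧
      (∀ n, ∀ x ∈ U n, -x ∈ U n) ∧ U 0 ⊆ W ∧ (∀ n, U (n + 1) + U (n + 1) ⊆ U n) ∧
      (∀ n, U n ⊆ b n) := by
  have shrink : ∀ S : Set F, S ∈ 𝓝 (0 : F) →
      ∃ V : Set F, (V ∈ 𝓝 (0 : F) ∧ IsClosed V ∧ ∀ x ∈ V, -x ∈ V) ∧ V + V ⊆ S := by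
    intro S hS
    obtain ⟨V₁, hV₁, hV₁S⟩ := exists_nhds_zero_half hS
    obtain ⟨V₂, hV₂mem, hV₂cl, hV₂V₁⟩ := exists_mem_nhds_isClosed_subset hV₁
    have hnegmem : (fun x : F => -x) ⁻¹' V₂ ∈ 𝓝 (0 : F) := by
      have : ContinuousAt (fun x : F => -x) 0 := continuous_neg.continuousAt
      apply this.preimage_mem_nhds
      simpa using hV₂mem
    refine ⟨V₂ ∩ (fun x : F => -x) ⁻¹' V₂, ⟨Filter.inter_mem hV₂mem hnegmem,
      hV₂cl.inter (hV₂cl.preimage continuous_neg), ?_⟩, ?_⟩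
    · rintro x ⟨h1, h2⟩
      exact ⟨h2, by simpa using h1⟩
    · rintro z ⟨u, ⟨hu, _⟩, v, ⟨hv, _⟩, rfl⟩
      exact hV₁S u (hV₂V₁ hu) v (hV₂V₁ hv)
  choose sh hsh using shrink
  have key : ∀ S (hS : S ∈ 𝓝 (0:F)), (sh S hS ∈ 𝓝 (0:F) ∧ IsClosed (sh S hS) ∧
      ∀ x ∈ sh S hS, -x ∈ sh S hS) ∧ sh S hS + sh S hS ⊆ S := hsh
  let U' : ℕ → {V : Set F // V ∈ 𝓝 (0 : F) ∧ IsClosed V ∧ ∀ x ∈ V, -x ∈ V} := fun n =>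
    Nat.rec ⟨sh (W ∩ b 0) (Filter.inter_mem hW (hbmem 0)), (key _ _).1⟩
      (fun n p => ⟨sh (p.1 ∩ b (n + 1)) (Filter.inter_mem p.2.1 (hbmem (n + 1))),
        (key _ _).1⟩) n
  have hself : ∀ n, (U' n).1 ⊆ (U' n).1 + (U' n).1 := by
    intro n x hx
    have h0 : (0 : F) ∈ (U' n).1 := mem_of_mem_nhds (U' n).2.1
    simpa using Set.add_mem_add hx h0
  have hsub0 : (U' 0).1 + (U' 0).1 ⊆ W ∩ b 0 := (key _ _).2
  have hsubS : ∀ n, (U' (n+1)).1 + (U' (n+1)).1 ⊆ (U' n).1 ∩ b (n+1) := fun n => (key _ _).2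
  refine ⟨fun n => (U' n).1, fun n => (U' n).2.1, fun n => (U' n).2.2.1, fun n => (U' n).2.2.2,
    fun x hx => (hsub0 (hself 0 hx)).1, fun n => (hsubS n).trans inter_subset_left, ?_⟩
  intro n
  cases n with
  | zero => exact fun x hx => (hsub0 (hself 0 hx)).2
  | succ n => exact fun x hx => (hsubS n (hself (n+1) hx)).2

theorem aux_sum_chain {F : Type*} [AddCommGroup F] {U : ℕ → Set F}
    (h0 : ∀ n, (0:F) ∈ U n) (hsum : ∀ n, U (n+1) + U (n+1) ⊆ U n)
    {v : ℕ → F} (hv : ∀ k, v k ∈ U (k+1)) :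
    ∀ d n, (∑ k ∈ Finset.Ico n (n+d), v k) ∈ U n := by
  intro d
  induction d with
  | zero => intro n; simpa using h0 n
  | succ d ih =>
    intro n
    have hlt : n < n + (d+1) := by omega
    rw [Finset.sum_eq_sum_Ico_succ_bot hlt]
    have h2 : (∑ k ∈ Finset.Ico (n+1) (n+(d+1)), v k) ∈ U (n+1) := by
      have := ih (n+1)
      rwa [show n+1+d = n+(d+1) from by omega] at this
    exact hsum n (Set.add_mem_add (hv n) h2)

theorem aux_closure_decomp_nhds {F : Type*} [AddCommGroup F] [Module ℝ F] [PartialOrder F]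
    [CovariantClass F F (· + ·) (· ≤ ·)] [PosSMulMono ℝ F]
    [UniformSpace F] [IsUniformAddGroup F] [ContinuousSMul ℝ F] [LocallyConvexSpace ℝ F]
    [FirstCountableTopology F] [CompleteSpace F]
    (hFgen : ∀ x : F, ∃ a b : F, 0 ≤ a ∧ 0 ≤ b ∧ x = a - b)
    {W : Set F} (hW : W ∈ 𝓝 (0 : F)) :
    closure (({x : F | 0 ≤ x} ∩ W) - ({x : F | 0 ≤ x} ∩ W)) ∈ 𝓝 (0 : F) := by
  haveI : (uniformity F).IsCountablyGenerated := by
    rw [uniformity_eq_comap_nhds_zero F]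
    exact Filter.comap.isCountablyGenerated _ _
  haveI : Nonempty F := ⟨0⟩
  set C : Set F := {x : F | 0 ≤ x} with hC
  obtain ⟨U, ⟨hUmem, hUbal, hUconv⟩, hUW⟩ := (nhds_hasBasis_absConvex ℝ F).mem_iff.mp hW
  set D : Set F := (C ∩ U) - (C ∩ U) with hD
  have hCconv : Convex ℝ C := by
    intro x hx y hy a b ha hb _
    exact add_nonneg (smul_nonneg ha hx) (smul_nonneg hb hy)
  have hDconv : Convex ℝ D := (hCconv.inter hUconv).sub (hCconv.inter hUconv)
  have hDsymm : ∀ x ∈ D, -x ∈ D := by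
    rintro x ⟨p, hp, q, hq, rfl⟩
    exact ⟨q, hq, p, hp, by rw [neg_sub]⟩
  -- the scaled closures of D cover F
  have hcover : ∀ x : F, ∃ n : ℕ, x ∈ ((n : ℝ) + 1) • closure D := by
    intro x
    obtain ⟨a, b, ha, hb, rfl⟩ := hFgen x
    have habs : Absorbent ℝ U := absorbent_nhds_zero hUmem
    obtain ⟨c, ⟨hac, hbc⟩⟩ := ((habs a).eventually.and (habs b).eventually).exists
    set n : ℕ := ⌈‖c‖⌉₊ with hn
    have hcn : ‖c‖ ≤ ‖((n : ℝ) + 1)‖ := by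
      have h1 : ‖c‖ ≤ (n : ℝ) := Nat.le_ceil _
      have h2 : (0:ℝ) ≤ (n:ℝ) + 1 := by positivity
      have h3 : ‖(n : ℝ) + 1‖ = (n : ℝ) + 1 := Real.norm_of_nonneg h2
      linarith
    have hsub : c • U ⊆ ((n : ℝ) + 1) • U := hUbal.smul_mono hcn
    have hne : ((n : ℝ) + 1) ≠ 0 := by positivity
    have ha2 : ((n:ℝ)+1)⁻¹ • a ∈ C ∩ U := by
      constructor
      · exact smul_nonneg (by positivity) ha
      · rw [← Set.mem_smul_set_iff_inv_smul_mem₀ hne]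
        exact hsub (hac rfl)
    have hb2 : ((n:ℝ)+1)⁻¹ • b ∈ C ∩ U := by
      constructor
      · exact smul_nonneg (by positivity) hb
      · rw [← Set.mem_smul_set_iff_inv_smul_mem₀ hne]
        exact hsub (hbc rfl)
    refine ⟨n, ?_⟩
    rw [Set.mem_smul_set_iff_inv_smul_mem₀ hne]
    exact subset_closure ⟨_, ha2, _, hb2, by rw [smul_sub]⟩
  have hcoverU : (⋃ n : ℕ, ((n : ℝ) + 1) • closure D) = univ :=
    eq_univ_of_forall fun x => Set.mem_iUnion.2 (hcover x)
  have hclosed : ∀ n : ℕ, IsClosed (((n : ℝ) + 1) • closure D) := fun n =>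
    isClosed_closure.smul_of_ne_zero (by positivity)
  obtain ⟨n, hne⟩ := nonempty_interior_of_iUnion_of_closed hclosed hcoverU
  rw [interior_smul₀ (show ((n:ℝ)+1) ≠ 0 by positivity)] at hne
  obtain ⟨_, y, hy, rfl⟩ := hne
  have hyneg : -y ∈ closure D := by
    have h1 : -y ∈ (fun z : F => -z) '' closure D := ⟨y, interior_subset hy, rfl⟩
    have h2 := image_closure_subset_closure_image (f := fun z : F => -z) continuous_neg h1
    have h3 : (fun z : F => -z) '' D = D := by
      ext z
      constructor
      · rintro ⟨w, hw, rfl⟩; exact hDsymm _ hw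
      · intro hz; exact ⟨-z, hDsymm _ hz, by simp⟩
    rwa [h3] at h2
  have h0 : (0 : F) ∈ interior (closure D) := by
    have := hDconv.closure.combo_interior_self_mem_interior hy hyneg
      (a := 1/2) (b := 1/2) one_half_pos (by norm_num) (by norm_num)
    simpa [smul_neg] using this
  refine Filter.mem_of_superset (mem_interior_iff_mem_nhds.mp h0) (closure_mono ?_)
  exact Set.sub_subset_sub (Set.inter_subset_inter_right _ hUW) (Set.inter_subset_inter_right _ hUW)

section AuxFrechet

variable {F : Type*} [AddCommGroup F] [Module ℝ F] [PartialOrder F]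
    [CovariantClass F F (· + ·) (· ≤ ·)] [PosSMulMono ℝ F]
    [UniformSpace F] [IsUniformAddGroup F] [ContinuousSMul ℝ F] [LocallyConvexSpace ℝ F]
    [FirstCountableTopology F] [T2Space F] [CompleteSpace F]

theorem aux_decomp_small (hFclosed : IsClosed {x : F | 0 ≤ x})
    (hFgen : ∀ x : F, ∃ a b : F, 0 ≤ a ∧ 0 ≤ b ∧ x = a - b)
    {W : Set F} (hW : W ∈ 𝓝 (0 : F)) :
    ∃ W' ∈ 𝓝 (0 : F), ∀ y ∈ W', ∃ p q : F, 0 ≤ p ∧ 0 ≤ q ∧ p ∈ W ∧ q ∈ W ∧ y = p - q := by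
  obtain ⟨b, hb⟩ := (𝓝 (0:F)).exists_antitone_basis
  have hbmem : ∀ n, b n ∈ 𝓝 (0:F) := fun n => hb.1.mem_of_mem trivial
  obtain ⟨U, hUmem, hUcl, hUsym, hUW, hUsum, hUb⟩ := aux_exists_chain b hbmem hW
  have hU0 : ∀ n, (0:F) ∈ U n := fun n => mem_of_mem_nhds (hUmem n)
  have hUanti : ∀ n, U (n+1) ⊆ U n := by
    intro n x hx
    have := Set.add_mem_add hx (hU0 (n+1))
    rw [add_zero] at this
    exact hUsum n this
  have hUantile : ∀ {N m : ℕ}, N ≤ m → U m ⊆ U N := by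
    intro N m h
    induction h with
    | refl => exact subset_rfl
    | step _ ih => exact (hUanti _).trans ih
  set C : Set F := {x : F | 0 ≤ x} with hC
  set D : ℕ → Set F := fun n => (C ∩ U n) - (C ∩ U n) with hDdef
  have hDnhds : ∀ n, closure (D n) ∈ 𝓝 (0:F) := fun n =>
    aux_closure_decomp_nhds hFgen (hUmem n)
  have hDU : ∀ n, closure (D (n+1)) ⊆ U n := by
    intro n
    have h1 : D (n+1) ⊆ U n := by
      rintro z ⟨p, hp, q, hq, rfl⟩
      have : p + -q ∈ U (n+1) + U (n+1) := Set.add_mem_add hp.2 (hUsym _ _ hq.2)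
      rw [show p + -q = p - q by abel] at this
      exact hUsum n this
    exact ((hUcl n).closure_subset_iff).mpr h1
  refine ⟨closure (D 1), hDnhds 1, ?_⟩
  intro y hy
  -- one-step approximation
  have step : ∀ n (z : F), z ∈ closure (D (n+1)) → ∃ w : F × F,
      (0 ≤ w.1 ∧ w.1 ∈ U (n+1)) ∧ (0 ≤ w.2 ∧ w.2 ∈ U (n+1)) ∧
      z - (w.1 - w.2) ∈ closure (D (n+2)) := by
    intro n z hz
    have hnhd : {v : F | z - v ∈ closure (D (n+2))} ∈ 𝓝 z := by
      have hcont : ContinuousAt (fun v : F => z - v) z := (continuous_const.sub continuous_id).continuousAt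
      have : (fun v : F => z - v) ⁻¹' closure (D (n+2)) ∈ 𝓝 z := by
        apply hcont.preimage_mem_nhds
        simpa using hDnhds (n+2)
      exact this
    obtain ⟨v, hv1, hv2⟩ := mem_closure_iff_nhds.mp hz _ hnhd
    obtain ⟨p, hp, q, hq, rfl⟩ := hv2
    exact ⟨(p, q), ⟨hp.1, hp.2⟩, ⟨hq.1, hq.2⟩, hv1⟩
  choose! w hw1 hw2 hw3 using step
  -- recursively defined remainders
  let zseq : ℕ → F := fun n => Nat.rec y (fun n z => z - ((w n z).1 - (w n z).2)) n
  have hzseq : ∀ n, zseq n ∈ closure (D (n+1)) := by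
    intro n
    induction n with
    | zero => exact hy
    | succ n ih => exact hw3 n (zseq n) ih
  set a : ℕ → F := fun n => (w n (zseq n)).1 with ha
  set c : ℕ → F := fun n => (w n (zseq n)).2 with hc
  have ha1 : ∀ n, 0 ≤ a n ∧ a n ∈ U (n+1) := fun n => hw1 n (zseq n) (hzseq n)
  have hc1 : ∀ n, 0 ≤ c n ∧ c n ∈ U (n+1) := fun n => hw2 n (zseq n) (hzseq n)
  set A : ℕ → F := fun n => ∑ k ∈ Finset.range n, a k with hA
  set Bs : ℕ → F := fun n => ∑ k ∈ Finset.range n, c k with hB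
  have hzeq : ∀ n, zseq n = y - (A n - Bs n) := by
    intro n
    induction n with
    | zero =>
      show y = y - (∑ k ∈ Finset.range 0, a k - ∑ k ∈ Finset.range 0, c k)
      simp
    | succ n ih =>
      have : zseq (n+1) = zseq n - (a n - c n) := rfl
      rw [this, ih, hA, hB]
      simp only [Finset.sum_range_succ]
      abel
  -- Cauchy sequences
  have hcauchy : ∀ (v : ℕ → F), (∀ k, v k ∈ U (k+1)) → (∀ k, 0 ≤ v k) →
      ∃ p : F, Tendsto (fun n => ∑ k ∈ Finset.range n, v k) atTop (𝓝 p) ∧ 0 ≤ p ∧ p ∈ U 0 := by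
    intro v hv hv0
    set S : ℕ → F := fun n => ∑ k ∈ Finset.range n, v k with hS
    have hsum : ∀ {m n : ℕ}, m ≤ n → S n - S m = ∑ k ∈ Finset.Ico m n, v k := by
      intro m n h
      rw [hS]
      rw [← Finset.sum_Ico_eq_sub _ h]
    have hcs : CauchySeq S := by
      apply cauchySeq_of_controlled (fun n => {p : F × F | p.2 - p.1 ∈ U n})
      · intro s hs
        rw [uniformity_eq_comap_nhds_zero F] at hs
        obtain ⟨t, ht, hts⟩ := hs
        obtain ⟨i, _, hi⟩ := hb.1.mem_iff.mp ht
        exact ⟨i, fun p hp => hts (hi ((hUb i) hp))⟩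
      · intro N m n hm hn
        rcases le_total m n with h | h
        · have := hsum h
          have hmem : S n - S m ∈ U m := by
            rw [this, show n = m + (n - m) by omega]
            exact aux_sum_chain hU0 hUsum hv _ m
          exact hUantile hm hmem
        · have hmem : S m - S n ∈ U n := by
            rw [hsum h, show m = n + (m - n) by omega]
            exact aux_sum_chain hU0 hUsum hv _ n
          have : -(S m - S n) ∈ U n := hUsym n _ hmem
          rw [neg_sub] at this
          exact hUantile hn this
    obtain ⟨p, hp⟩ := cauchySeq_tendsto_of_complete hcs
    refine ⟨p, hp, ?_, ?_⟩
    · refine hFclosed.mem_of_tendsto hp (Eventually.of_forall fun n => ?_)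
      exact Finset.sum_induction v _ (fun _ _ => add_nonneg) le_rfl (fun k _ => hv0 k)
    · refine (hUcl 0).mem_of_tendsto hp (Eventually.of_forall fun n => ?_)
      have h5 : (∑ k ∈ Finset.Ico 0 (0 + n), v k) ∈ U 0 := aux_sum_chain hU0 hUsum hv n 0
      rw [zero_add] at h5
      simp only [hS]; rwa [Finset.range_eq_Ico]
  obtain ⟨p, hpt, hp0, hpU⟩ := hcauchy a (fun k => (ha1 k).2) (fun k => (ha1 k).1)
  obtain ⟨q, hqt, hq0, hqU⟩ := hcauchy c (fun k => (hc1 k).2) (fun k => (hc1 k).1)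
  refine ⟨p, q, hp0, hq0, hUW hpU, hUW hqU, ?_⟩
  have h1 : Tendsto (fun n => y - (A n - Bs n)) atTop (𝓝 (y - (p - q))) :=
    tendsto_const_nhds.sub (hpt.sub hqt)
  have h2 : Tendsto (fun n => y - (A n - Bs n)) atTop (𝓝 0) := by
    rw [hb.1.tendsto_right_iff]
    intro i _
    filter_upwards [eventually_ge_atTop i] with n hn
    have : y - (A n - Bs n) ∈ U n := by
      rw [← hzeq n]
      exact hDU n (hzseq n)
    exact hb.2 hn ((hUb n) this)
  have h3 := tendsto_nhds_unique h1 h2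
  rw [sub_eq_zero] at h3
  exact h3

theorem aux_exists_dominator (hFclosed : IsClosed {x : F | 0 ≤ x})
    (hFgen : ∀ x : F, ∃ a b : F, 0 ≤ a ∧ 0 ≤ b ∧ x = a - b)
    (z : ℕ → F) (hz : Tendsto z atTop (𝓝 0)) :
    ∃ u : F, 0 ≤ u ∧ ∃ φ : ℕ → ℕ, StrictMono φ ∧
      ∀ k : ℕ, -u ≤ ((k : ℝ) + 1) • z (φ k) ∧ ((k : ℝ) + 1) • z (φ k) ≤ u := by
  obtain ⟨b, hb⟩ := (𝓝 (0:F)).exists_antitone_basis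
  have hbmem : ∀ n, b n ∈ 𝓝 (0:F) := fun n => hb.1.mem_of_mem trivial
  obtain ⟨M, hMmem, hMcl, hMsym, _, hMsum, hMb⟩ := aux_exists_chain b hbmem (univ_mem)
  have hM0 : ∀ n, (0:F) ∈ M n := fun n => mem_of_mem_nhds (hMmem n)
  have hManti : ∀ n, M (n+1) ⊆ M n := by
    intro n x hx
    have := Set.add_mem_add hx (hM0 (n+1))
    rw [add_zero] at this
    exact hMsum n this
  have hMantile : ∀ {N m : ℕ}, N ≤ m → M m ⊆ M N := by
    intro N m h
    induction h with
    | refl => exact subset_rfl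
    | step _ ih => exact (hManti _).trans ih
  -- decomposition neighborhoods
  have hdec : ∀ k : ℕ, ∃ W' ∈ 𝓝 (0:F), ∀ y ∈ W', ∃ p q : F,
      0 ≤ p ∧ 0 ≤ q ∧ p ∈ M (k+2) ∧ q ∈ M (k+2) ∧ y = p - q :=
    fun k => aux_decomp_small hFclosed hFgen (hMmem (k+2))
  choose W' hW'mem hW'dec using hdec
  -- selection of a rapidly increasing subsequence
  have sel : ∀ k m : ℕ, ∃ j, m < j ∧ ((k : ℝ) + 1) • z j ∈ W' k := by
    intro k m
    have h1 : Tendsto (fun j => ((k : ℝ) + 1) • z j) atTop (𝓝 0) := by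
      have := hz.const_smul ((k : ℝ) + 1)
      simpa using this
    have h2 : ∀ᶠ j in atTop, ((k : ℝ) + 1) • z j ∈ W' k := h1.eventually_mem (hW'mem k)
    exact ((eventually_gt_atTop m).and h2).exists
  choose g hg1 hg2 using sel
  set φ : ℕ → ℕ := fun k => Nat.rec (g 0 0) (fun k prev => g (k+1) prev) k with hφdef
  have hφmono : StrictMono φ := strictMono_nat_of_lt_succ fun k => hg1 (k+1) (φ k)
  have hφmem : ∀ k, ((k : ℝ) + 1) • z (φ k) ∈ W' k := by
    intro k
    cases k with
    | zero => exact hg2 0 0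
    | succ k => exact hg2 (k+1) (φ k)
  choose p q hp0 hq0 hpM hqM heq using fun k => hW'dec k _ (hφmem k)
  set v : ℕ → F := fun k => p k + q k with hv
  have hvM : ∀ k, v k ∈ M (k+1) := fun k => hMsum (k+1) (Set.add_mem_add (hpM k) (hqM k))
  have hv0 : ∀ k, 0 ≤ v k := fun k => add_nonneg (hp0 k) (hq0 k)
  set S : ℕ → F := fun n => ∑ k ∈ Finset.range n, v k with hS
  have hsumIco : ∀ {m n : ℕ}, m ≤ n → S n - S m = ∑ k ∈ Finset.Ico m n, v k := by
    intro m n h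
    rw [hS, ← Finset.sum_Ico_eq_sub _ h]
  have hcs : CauchySeq S := by
    apply cauchySeq_of_controlled (fun n => {pr : F × F | pr.2 - pr.1 ∈ M n})
    · intro s hs
      rw [uniformity_eq_comap_nhds_zero F] at hs
      obtain ⟨t, ht, hts⟩ := hs
      obtain ⟨i, _, hi⟩ := hb.1.mem_iff.mp ht
      exact ⟨i, fun pr hpr => hts (hi ((hMb i) hpr))⟩
    · intro N m n hm hn
      rcases le_total m n with h | h
      · have hmem : S n - S m ∈ M m := by
          rw [hsumIco h, show n = m + (n - m) by omega]
          exact aux_sum_chain hM0 hMsum hvM _ m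
        exact hMantile hm hmem
      · have hmem : S m - S n ∈ M n := by
          rw [hsumIco h, show m = n + (m - n) by omega]
          exact aux_sum_chain hM0 hMsum hvM _ n
        have := hMsym n _ hmem
        rw [neg_sub] at this
        exact hMantile hn this
  obtain ⟨u, hu⟩ := cauchySeq_tendsto_of_complete hcs
  have hSnonneg : ∀ n, 0 ≤ S n := fun n =>
    Finset.sum_induction v _ (fun _ _ => add_nonneg) le_rfl (fun k _ => hv0 k)
  have hu0 : 0 ≤ u := hFclosed.mem_of_tendsto hu (Eventually.of_forall hSnonneg)
  -- p k ≤ u and q k ≤ u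
  have hple : ∀ k, p k ≤ u ∧ q k ≤ u := by
    intro k
    have hSk : ∀ n, k + 1 ≤ n → 0 ≤ S n - p k ∧ 0 ≤ S n - q k := by
      intro n hn
      have h1 : S n - S (k+1) = ∑ j ∈ Finset.Ico (k+1) n, v j := hsumIco hn
      have h2 : 0 ≤ S n - S (k+1) := by
        rw [h1]
        exact Finset.sum_induction v _ (fun _ _ => add_nonneg) le_rfl (fun j _ => hv0 j)
      have h3 : S (k+1) = S k + (p k + q k) := by
        rw [hS]
        simp [Finset.sum_range_succ, hv]
      constructor
      · have h4 : 0 ≤ S (k+1) - p k := by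
          rw [h3, show S k + (p k + q k) - p k = S k + q k by abel]
          exact add_nonneg (hSnonneg k) (hq0 k)
        have : S n - p k = (S n - S (k+1)) + (S (k+1) - p k) := by abel
        rw [this]
        exact add_nonneg h2 h4
      · have h4 : 0 ≤ S (k+1) - q k := by
          rw [h3, show S k + (p k + q k) - q k = S k + p k by abel]
          exact add_nonneg (hSnonneg k) (hp0 k)
        have : S n - q k = (S n - S (k+1)) + (S (k+1) - q k) := by abel
        rw [this]
        exact add_nonneg h2 h4
    constructor
    · have ht : Tendsto (fun n => S n - p k) atTop (𝓝 (u - p k)) := hu.sub tendsto_const_nhds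
      have : 0 ≤ u - p k := hFclosed.mem_of_tendsto ht
        ((eventually_ge_atTop (k+1)).mono fun n hn => (hSk n hn).1)
      exact sub_nonneg.mp this
    · have ht : Tendsto (fun n => S n - q k) atTop (𝓝 (u - q k)) := hu.sub tendsto_const_nhds
      have : 0 ≤ u - q k := hFclosed.mem_of_tendsto ht
        ((eventually_ge_atTop (k+1)).mono fun n hn => (hSk n hn).2)
      exact sub_nonneg.mp this
  refine ⟨u, hu0, φ, hφmono, fun k => ?_⟩
  rw [heq k]
  constructor
  · have h1 : -u ≤ -q k := by
      calc -u = q k - (q k + u) := by abel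
        _ ≤ u - (q k + u) := sub_le_sub_right (hple k).2 _
        _ = -q k := by abel
    have h2 : -q k ≤ p k - q k := by
      have := sub_le_sub_right (hp0 k) (q k)
      rwa [zero_sub] at this
    exact h1.trans h2
  · have h1 : p k - q k ≤ p k := sub_le_self _ (hq0 k)
    exact h1.trans (hple k).1

end AuxFrechet

theorem aux_Icc_absorbed {Y : Type*} [AddCommGroup Y] [Module ℝ Y] [TopologicalSpace Y]
    [IsTopologicalAddGroup Y] [ContinuousSMul ℝ Y] [PartialOrder Y]
    [CovariantClass Y Y (· + ·) (· ≤ ·)] [PosSMulMono ℝ Y]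
    (hYnormal : NormalConeTVS Y) (c d : Y) {V : Set Y} (hV : V ∈ 𝓝 (0 : Y)) :
    ∃ t : ℝ, 0 < t ∧ ∀ s : ℝ, t ≤ s → Set.Icc c d ⊆ s • V := by
  obtain ⟨V₁, hV₁mem, hV₁V, hV₁full⟩ := hYnormal V hV
  obtain ⟨V₂, ⟨hV₂mem, hV₂bal⟩, hV₂V₁⟩ := (nhds_basis_balanced ℝ Y).mem_iff.mp hV₁mem
  have habs : Absorbent ℝ V₂ := absorbent_nhds_zero hV₂mem
  obtain ⟨r, ⟨hcr, hdr⟩⟩ := ((habs c).eventually.and (habs d).eventually).exists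
  refine ⟨max ‖r‖ 1, lt_of_lt_of_le one_pos (le_max_right _ _), ?_⟩
  intro s hs
  have hs1 : (1:ℝ) ≤ s := le_trans (le_max_right _ _) hs
  have hs0 : (0:ℝ) < s := lt_of_lt_of_le one_pos hs1
  have hsne : s ≠ 0 := ne_of_gt hs0
  have hnorm : ‖r‖ ≤ ‖s‖ := by
    rw [Real.norm_of_nonneg (le_of_lt hs0)]
    exact le_trans (le_max_left _ _) hs
  have hcs : c ∈ s • V₂ := (hV₂bal.smul_mono hnorm) (hcr rfl)
  have hds : d ∈ s • V₂ := (hV₂bal.smul_mono hnorm) (hdr rfl)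
  intro x hx
  rw [Set.mem_smul_set_iff_inv_smul_mem₀ hsne] at hcs hds ⊢
  have hinv : (0:ℝ) ≤ s⁻¹ := inv_nonneg.mpr (le_of_lt hs0)
  have h1 : s⁻¹ • c ≤ s⁻¹ • x := smul_le_smul_of_nonneg_left hx.1 hinv
  have h2 : s⁻¹ • x ≤ s⁻¹ • d := smul_le_smul_of_nonneg_left hx.2 hinv
  exact hV₁V (hV₁full _ _ _ (hV₂V₁ hcs) (hV₂V₁ hds) h1 h2)

/-- every order bounded linear operator from an ordered Fréchet space with a
closed generating normal cone to an ordered TVS with a generating normal cone is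
topologically bounded. -/
theorem orderBounded_implies_topologicallyBounded
    {F : Type*} [AddCommGroup F] [Module ℝ F] [PartialOrder F]
    [CovariantClass F F (· + ·) (· ≤ ·)] [PosSMulMono ℝ F]
    [UniformSpace F] [IsUniformAddGroup F] [ContinuousSMul ℝ F] [LocallyConvexSpace ℝ F]
    [FirstCountableTopology F] [T2Space F] [CompleteSpace F]
    {Y : Type*} [AddCommGroup Y] [Module ℝ Y] [TopologicalSpace Y]
    [IsTopologicalAddGroup Y] [ContinuousSMul ℝ Y] [PartialOrder Y]
    [CovariantClass Y Y (· + ·) (· ≤ ·)] [PosSMulMono ℝ Y]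
    (hFclosed : IsClosed {x : F | 0 ≤ x})
    (hFgen : ∀ x : F, ∃ a b : F, 0 ≤ a ∧ 0 ≤ b ∧ x = a - b)
    (hFnormal : NormalConeTVS F)
    (hYgen : ∀ y : Y, ∃ a b : Y, 0 ≤ a ∧ 0 ≤ b ∧ y = a - b)
    (hYnormal : NormalConeTVS Y)
    (T : F →ₗ[ℝ] Y)
    (hob : ∀ a b : F, ∃ c d : Y, T '' Set.Icc a b ⊆ Set.Icc c d) :
    ∀ B : Set F, IsVonNBounded ℝ B → IsVonNBounded ℝ (T '' B) := by
  intro B hB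
  by_contra hnb
  rw [(nhds_basis_balanced ℝ Y).isVonNBounded_iff] at hnb
  push_neg at hnb
  obtain ⟨V, ⟨hVmem, hVbal⟩, hVnabs⟩ := hnb
  -- choose witnesses escaping ever larger multiples of V
  have hx : ∀ n : ℕ, ∃ xx ∈ B, T xx ∉ (((n : ℝ) + 1) ^ 2) • V := by
    intro n
    by_contra h
    push_neg at h
    apply hVnabs
    filter_upwards [eventually_cobounded_le_norm (((n : ℝ) + 1) ^ 2)] with e he
    rintro _ ⟨xx, hxx, rfl⟩
    have h1 : T xx ∈ (((n : ℝ) + 1) ^ 2) • V := h xx hxx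
    have h2 : ‖(((n : ℝ) + 1) ^ 2)‖ ≤ ‖e‖ := by
      rwa [Real.norm_of_nonneg (by positivity)]
    exact hVbal.smul_mono h2 h1
  choose x hxB hxV using hx
  -- the scaled sequence tends to zero
  have hεt : Tendsto (fun n : ℕ => ((n : ℝ) + 1)⁻¹) atTop (𝓝 0) := by
    have h1 : Tendsto (fun n : ℕ => (n : ℝ) + 1) atTop atTop :=
      tendsto_atTop_add_const_right _ 1 tendsto_natCast_atTop_atTop
    exact tendsto_inv_atTop_zero.comp h1
  have hz : Tendsto (fun n : ℕ => ((n : ℝ) + 1)⁻¹ • x n) atTop (𝓝 0) :=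
    hB.smul_tendsto_zero (Eventually.of_forall hxB) hεt
  obtain ⟨u, hu0, φ, hφ, hdom⟩ := aux_exists_dominator hFclosed hFgen _ hz
  obtain ⟨c, d, hcd⟩ := hob (-u) u
  obtain ⟨t, ht0, hts⟩ := aux_Icc_absorbed hYnormal c d hVmem
  -- pick k with (k+1)^2 ≥ t
  obtain ⟨k, hk⟩ := exists_nat_ge t
  have hkt : t ≤ ((k : ℝ) + 1) ^ 2 := by nlinarith [Nat.cast_nonneg (α := ℝ) k]
  set n : ℕ := φ k with hn
  have hkn : (k : ℝ) + 1 ≤ (n : ℝ) + 1 := by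
    have : k ≤ n := hφ.le_apply
    have := Nat.cast_le (α := ℝ).mpr this
    linarith
  set K : ℝ := (k : ℝ) + 1 with hK
  set N : ℝ := (n : ℝ) + 1 with hN
  have hKpos : (0:ℝ) < K := by positivity
  have hNpos : (0:ℝ) < N := by positivity
  -- the dominated element maps into Icc c d
  have hmem : K • (N⁻¹ • x n) ∈ Set.Icc (-u) u := ⟨(hdom k).1, (hdom k).2⟩
  have hTmem : T (K • (N⁻¹ • x n)) ∈ Set.Icc c d := hcd ⟨_, hmem, rfl⟩
  have hTeq : T (K • (N⁻¹ • x n)) = (K * N⁻¹) • T (x n) := by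
    rw [smul_smul, map_smul]
  have hIcc : Set.Icc c d ⊆ (K ^ 2) • V := hts (K ^ 2) hkt
  have hr : K * N⁻¹ ≠ 0 := by positivity
  obtain ⟨v, hv, hveq⟩ := hIcc (hTeq ▸ hTmem)
  -- T (x n) = ((K * N⁻¹)⁻¹ * K ^ 2) • v
  have hTxn : T (x n) = ((K * N⁻¹)⁻¹ * K ^ 2) • v := by
    have h1 : (K * N⁻¹) • T (x n) = (K ^ 2) • v := hveq.symm
    have h2 : T (x n) = (K * N⁻¹)⁻¹ • ((K * N⁻¹) • T (x n)) := (inv_smul_smul₀ hr _).symm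
    rw [h2, h1, smul_smul]
  have hmul : (K * N⁻¹)⁻¹ * K ^ 2 = N * K := by
    field_simp
  have hTxn2 : T (x n) ∈ (N * K) • V := by
    rw [hTxn, hmul]
    exact Set.smul_mem_smul_set hv
  have hsub : (N * K) • V ⊆ (N ^ 2) • V := by
    apply hVbal.smul_mono
    rw [Real.norm_of_nonneg (by positivity), Real.norm_of_nonneg (by positivity)]
    nlinarith
  exact hxV n (hsub hTxn2)
end

section
/- Let X be an ordered real Banach space whose positive cone is closed, generating, and normal, and let Y be a real normed space. Then a linear operator T : X → Y is order-to-norm bounded if and only if T is bounded (norm continuous). -/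
open Filter Set Topology Bornology

universe u

section Aux
variable {X : Type*} [NormedAddCommGroup X] [NormedSpace ℝ X] [PartialOrder X]
  [CovariantClass X X (· + ·) (· ≤ ·)] [PosSMulMono ℝ X]

lemma my_sum_nonneg {ι : Type*} {s : Finset ι} {f : ι → X} (h : ∀ i ∈ s, 0 ≤ f i) :
    0 ≤ ∑ i ∈ s, f i :=
  Finset.sum_induction f (0 ≤ ·) (fun _ _ ha hb => add_nonneg ha hb) le_rfl h

lemma my_tsum_nonneg (hclosed : IsClosed {x : X | 0 ≤ x}) {f : ℕ → X} (hf : Summable f)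
    (h : ∀ i, 0 ≤ f i) : 0 ≤ ∑' i, f i := by
  have hs := hf.hasSum
  exact hclosed.mem_of_tendsto hs
    (Filter.Eventually.of_forall fun s => my_sum_nonneg fun i _ => h i)

/-- Andô's theorem: uniformly bounded positive decomposition. -/
lemma my_ando [CompleteSpace X] (hclosed : IsClosed {x : X | 0 ≤ x})
    (hgen : ∀ x : X, ∃ a b : X, 0 ≤ a ∧ 0 ≤ b ∧ x = a - b) :
    ∃ M : ℝ, 0 < M ∧ ∀ x : X, ‖x‖ ≤ 1 →
      ∃ a b : X, 0 ≤ a ∧ 0 ≤ b ∧ x = a - b ∧ ‖a‖ ≤ M ∧ ‖b‖ ≤ M := by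
  set D : ℝ → Set X := fun c => {x | ∃ a b : X, 0 ≤ a ∧ 0 ≤ b ∧ ‖a‖ ≤ c ∧ ‖b‖ ≤ c ∧ x = a - b}
    with hD
  have hDscale : ∀ (t c : ℝ) (x : X), 0 ≤ t → x ∈ D c → t • x ∈ D (t * c) := by
    rintro t c x ht ⟨a, b, ha, hb, hna, hnb, rfl⟩
    exact ⟨t • a, t • b, smul_nonneg ht ha, smul_nonneg ht hb,
      by rw [norm_smul, Real.norm_eq_abs, abs_of_nonneg ht]; exact mul_le_mul_of_nonneg_left hna ht,
      by rw [norm_smul, Real.norm_eq_abs, abs_of_nonneg ht]; exact mul_le_mul_of_nonneg_left hnb ht,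
      smul_sub t a b⟩
  -- Baire
  have hcover : (⋃ n : ℕ, closure (D n)) = univ := by
    ext x
    simp only [mem_iUnion, mem_univ, iff_true]
    obtain ⟨a, b, ha, hb, rfl⟩ := hgen x
    obtain ⟨n, hn⟩ := exists_nat_ge (max ‖a‖ ‖b‖)
    exact ⟨n, subset_closure ⟨a, b, ha, hb, (le_max_left _ _).trans hn,
      (le_max_right _ _).trans hn, rfl⟩⟩
  obtain ⟨n, x₀, hx₀⟩ := nonempty_interior_of_iUnion_of_closed
    (fun n : ℕ => isClosed_closure (s := D n)) hcover
  have hcombo : ∀ (s t : ℝ) (u v : X), 0 ≤ s → 0 ≤ t → s + t = 1 →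
      ‖u‖ ≤ (n : ℝ) → ‖v‖ ≤ (n : ℝ) → ‖s • u + t • v‖ ≤ (n : ℝ) := by
    intro s t u v hs ht hst hu hv
    have h1 := norm_add_le (s • u) (t • v)
    rw [norm_smul, norm_smul, Real.norm_eq_abs, Real.norm_eq_abs,
      abs_of_nonneg hs, abs_of_nonneg ht] at h1
    nlinarith [norm_nonneg u, norm_nonneg v]
  have hconv : Convex ℝ (D (n : ℝ)) := by
    rintro x ⟨a, b, ha, hb, hna, hnb, rfl⟩ y ⟨a', b', ha', hb', hna', hnb', rfl⟩ s t hs ht hst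
    exact ⟨s • a + t • a', s • b + t • b', add_nonneg (smul_nonneg hs ha) (smul_nonneg ht ha'),
      add_nonneg (smul_nonneg hs hb) (smul_nonneg ht hb'),
      hcombo s t a a' hs ht hst hna hna', hcombo s t b b' hs ht hst hnb hnb', by module⟩
  -- 0 ∈ interior (closure (D n))
  have hDneg : (fun z : X => -z) ⁻¹' D (n : ℝ) = D (n : ℝ) := by
    ext z
    constructor
    · rintro ⟨a, b, ha, hb, hna, hnb, hz⟩
      refine ⟨b, a, hb, ha, hnb, hna, ?_⟩
      have h := hz
      rw [neg_eq_iff_eq_neg] at h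
      rw [h, neg_sub]
    · rintro ⟨a, b, ha, hb, hna, hnb, rfl⟩
      exact ⟨b, a, hb, ha, hnb, hna, neg_sub a b⟩
  have hnegx₀ : -x₀ ∈ interior (closure (D (n : ℝ))) := by
    have hhom := (Homeomorph.neg X).preimage_interior (closure (D (n : ℝ)))
    have hcl := (Homeomorph.neg X).preimage_closure (D (n : ℝ))
    have hco : (Homeomorph.neg X) ⁻¹' (D (n:ℝ)) = D (n:ℝ) := hDneg
    have heq : (Homeomorph.neg X) ⁻¹' interior (closure (D (n:ℝ))) =
        interior (closure (D (n:ℝ))) := by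
      rw [hhom, hcl, hco]
    have hx : x₀ ∈ (Homeomorph.neg X) ⁻¹' interior (closure (D (n:ℝ))) := by
      rw [heq]; exact hx₀
    simpa [Homeomorph.neg] using hx
  have h0 : (0 : X) ∈ interior (closure (D (n : ℝ))) := by
    have hci : Convex ℝ (interior (closure (D (n : ℝ)))) := (hconv.closure).interior
    have := hci hx₀ hnegx₀ (by norm_num : (0:ℝ) ≤ (1:ℝ)/2) (by norm_num : (0:ℝ) ≤ (1:ℝ)/2)
      (by norm_num)
    simpa using this
  obtain ⟨r, hr, hball⟩ : ∃ r > 0, Metric.ball (0 : X) r ⊆ closure (D (n : ℝ)) :=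
    Metric.mem_nhds_iff.mp (mem_interior_iff_mem_nhds.mp h0)
  -- approximation
  have happrox : ∀ t : ℝ, 0 < t → ∀ y : X, ‖y‖ < t * r → ∀ ε : ℝ, 0 < ε →
      ∃ a b : X, 0 ≤ a ∧ 0 ≤ b ∧ ‖a‖ ≤ t * n ∧ ‖b‖ ≤ t * n ∧ ‖y - (a - b)‖ < ε := by
    intro t ht y hy ε hε
    have hz : t⁻¹ • y ∈ Metric.ball (0 : X) r := by
      rw [Metric.mem_ball, dist_zero_right, norm_smul, Real.norm_eq_abs,
        abs_of_pos (inv_pos.mpr ht)]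
      rw [inv_mul_lt_iff₀ ht]
      exact hy
    obtain ⟨d, hd, hdd⟩ := Metric.mem_closure_iff.mp (hball hz) (ε / t)
      (div_pos hε ht)
    obtain ⟨a, b, ha, hb, hna, hnb, rfl⟩ := hd
    refine ⟨t • a, t • b, smul_nonneg ht.le ha, smul_nonneg ht.le hb, ?_, ?_, ?_⟩
    · rw [norm_smul, Real.norm_eq_abs, abs_of_pos ht]
      exact mul_le_mul_of_nonneg_left hna ht.le
    · rw [norm_smul, Real.norm_eq_abs, abs_of_pos ht]
      exact mul_le_mul_of_nonneg_left hnb ht.le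
    · have : y - (t • a - t • b) = t • (t⁻¹ • y - (a - b)) := by
        rw [smul_sub, smul_smul, mul_inv_cancel₀ ht.ne', one_smul, smul_sub]
      rw [this, norm_smul, Real.norm_eq_abs, abs_of_pos ht]
      rw [dist_eq_norm] at hdd
      calc t * ‖t⁻¹ • y - (a - b)‖ < t * (ε / t) := by
            exact mul_lt_mul_of_pos_left hdd ht
        _ = ε := by field_simp
  -- iteration
  have key : ∀ x : X, ‖x‖ < r → ∃ a b : X, 0 ≤ a ∧ 0 ≤ b ∧ x = a - b ∧
      ‖a‖ ≤ 2 * n ∧ ‖b‖ ≤ 2 * n := by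
    intro x hx
    have hF : ∀ (k : ℕ) (y : X), ∃ p : X × X, ‖y‖ < r * (2⁻¹ : ℝ) ^ k →
        0 ≤ p.1 ∧ 0 ≤ p.2 ∧ ‖p.1‖ ≤ (2⁻¹ : ℝ) ^ k * n ∧ ‖p.2‖ ≤ (2⁻¹ : ℝ) ^ k * n ∧
          ‖y - (p.1 - p.2)‖ < r * (2⁻¹ : ℝ) ^ (k + 1) := by
      intro k y
      by_cases h : ‖y‖ < r * (2⁻¹ : ℝ) ^ k
      · have hp : (0:ℝ) < (2⁻¹ : ℝ) ^ k := by positivity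
        obtain ⟨a, b, ha, hb, hna, hnb, happ⟩ := happrox ((2⁻¹ : ℝ) ^ k) hp y
          (by rw [mul_comm]; exact h) (r * (2⁻¹ : ℝ) ^ (k + 1)) (by positivity)
        exact ⟨(a, b), fun _ => ⟨ha, hb, hna, hnb, happ⟩⟩
      · exact ⟨(0, 0), fun h' => absurd h' h⟩
    choose F hFspec using hF
    let yseq : ℕ → X := fun k => Nat.rec x (fun k yk => yk - ((F k yk).1 - (F k yk).2)) k
    have hystep : ∀ k, yseq (k + 1) = yseq k - ((F k (yseq k)).1 - (F k (yseq k)).2) :=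
      fun k => rfl
    have hy : ∀ k, ‖yseq k‖ < r * (2⁻¹ : ℝ) ^ k := by
      intro k
      induction k with
      | zero => simpa [yseq] using hx
      | succ k ih =>
          rw [hystep]
          exact (hFspec k (yseq k) ih).2.2.2.2
    set A : ℕ → X := fun k => (F k (yseq k)).1 with hA
    set B : ℕ → X := fun k => (F k (yseq k)).2 with hB
    have hspec : ∀ k, 0 ≤ A k ∧ 0 ≤ B k ∧ ‖A k‖ ≤ (2⁻¹ : ℝ) ^ k * n ∧
        ‖B k‖ ≤ (2⁻¹ : ℝ) ^ k * n := by
      intro k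
      obtain ⟨h1, h2, h3, h4, _⟩ := hFspec k (yseq k) (hy k)
      exact ⟨h1, h2, h3, h4⟩
    have hgeo : Summable (fun k : ℕ => (2⁻¹ : ℝ) ^ k * n) :=
      (summable_geometric_of_lt_one (by norm_num : (0:ℝ) ≤ 2⁻¹)
        (by norm_num : (2⁻¹:ℝ) < 1)).mul_right (n : ℝ)
    have hsAn : Summable (fun k => ‖A k‖) := Summable.of_nonneg_of_le
      (fun k => norm_nonneg _) (fun k => (hspec k).2.2.1) hgeo
    have hsBn : Summable (fun k => ‖B k‖) := Summable.of_nonneg_of_le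
      (fun k => norm_nonneg _) (fun k => (hspec k).2.2.2) hgeo
    have hsA : Summable A := Summable.of_norm_bounded hgeo fun k => (hspec k).2.2.1
    have hsB : Summable B := Summable.of_norm_bounded hgeo fun k => (hspec k).2.2.2
    have htsumgeo : ∑' k : ℕ, (2⁻¹ : ℝ) ^ k * n = 2 * n := by
      rw [tsum_mul_right, tsum_geometric_of_lt_one (by norm_num) (by norm_num)]
      norm_num
    refine ⟨∑' k, A k, ∑' k, B k, my_tsum_nonneg hclosed hsA fun k => (hspec k).1,
      my_tsum_nonneg hclosed hsB fun k => (hspec k).2.1, ?_, ?_, ?_⟩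
    · -- x = a - b
      have hyt : Tendsto yseq atTop (nhds 0) := by
        apply squeeze_zero_norm (fun k => (hy k).le)
        simpa using (tendsto_pow_atTop_nhds_zero_of_lt_one (by norm_num : (0:ℝ) ≤ 2⁻¹)
          (by norm_num : (2⁻¹:ℝ) < 1)).const_mul r
      have hpartial : ∀ K : ℕ, ∑ k ∈ Finset.range K, (A k - B k) = x - yseq K := by
        intro K
        induction K with
        | zero => simp [yseq]
        | succ K ih =>
            rw [Finset.sum_range_succ, ih, hystep]
            abel
      have hsum : HasSum (fun k => A k - B k) ((∑' k, A k) - ∑' k, B k) :=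
        hsA.hasSum.sub hsB.hasSum
      have htend : Tendsto (fun K => ∑ k ∈ Finset.range K, (A k - B k)) atTop
          (nhds ((∑' k, A k) - ∑' k, B k)) :=
        ((hsA.sub hsB).hasSum_iff_tendsto_nat.mp hsum)
      have htend' : Tendsto (fun K => ∑ k ∈ Finset.range K, (A k - B k)) atTop (nhds x) := by
        simp only [hpartial]
        simpa using (tendsto_const_nhds (x := x)).sub hyt
      exact tendsto_nhds_unique htend' htend
    · calc ‖∑' k, A k‖ ≤ ∑' k, ‖A k‖ := norm_tsum_le_tsum_norm hsAn
        _ ≤ ∑' k : ℕ, (2⁻¹ : ℝ) ^ k * n := Summable.tsum_le_tsum (fun k => (hspec k).2.2.1) hsAn hgeo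
        _ = 2 * n := htsumgeo
    · calc ‖∑' k, B k‖ ≤ ∑' k, ‖B k‖ := norm_tsum_le_tsum_norm hsBn
        _ ≤ ∑' k : ℕ, (2⁻¹ : ℝ) ^ k * n := Summable.tsum_le_tsum (fun k => (hspec k).2.2.2) hsBn hgeo
        _ = 2 * n := htsumgeo
  -- rescale
  refine ⟨(2 / r) * (2 * n) + 1, by positivity, fun x hx => ?_⟩
  have hz : ‖(r / 2) • x‖ < r := by
    rw [norm_smul, Real.norm_eq_abs, abs_of_pos (by positivity : (0:ℝ) < r / 2)]
    calc r / 2 * ‖x‖ ≤ r / 2 * 1 := mul_le_mul_of_nonneg_left hx (by positivity)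
      _ < r := by linarith
  obtain ⟨a, b, ha, hb, heq, hna, hnb⟩ := key _ hz
  refine ⟨(2 / r) • a, (2 / r) • b, smul_nonneg (by positivity) ha,
    smul_nonneg (by positivity) hb, ?_, ?_, ?_⟩
  · rw [← smul_sub, ← heq, smul_smul]
    rw [div_mul_div_comm, mul_comm 2 r]
    rw [div_self (by positivity : (r * 2 : ℝ) ≠ 0), one_smul]
  · rw [norm_smul, Real.norm_eq_abs, abs_of_pos (by positivity : (0:ℝ) < 2 / r)]
    calc 2 / r * ‖a‖ ≤ 2 / r * (2 * n) := mul_le_mul_of_nonneg_left hna (by positivity)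
      _ ≤ 2 / r * (2 * n) + 1 := by linarith
  · rw [norm_smul, Real.norm_eq_abs, abs_of_pos (by positivity : (0:ℝ) < 2 / r)]
    calc 2 / r * ‖b‖ ≤ 2 / r * (2 * n) := mul_le_mul_of_nonneg_left hnb (by positivity)
      _ ≤ 2 / r * (2 * n) + 1 := by linarith

end Aux

/-- a linear operator from an ordered Banach space with a closed generating
normal cone to a normed space is order-to-norm bounded iff it is bounded. -/
theorem orderToNormBounded_iff_bounded
    {X : Type*} [NormedAddCommGroup X] [NormedSpace ℝ X] [CompleteSpace X] [PartialOrder X]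
    [CovariantClass X X (· + ·) (· ≤ ·)] [PosSMulMono ℝ X]
    {Y : Type*} [NormedAddCommGroup Y] [NormedSpace ℝ Y]
    (hclosed : IsClosed {x : X | 0 ≤ x})
    (hgen : ∀ x : X, ∃ a b : X, 0 ≤ a ∧ 0 ≤ b ∧ x = a - b)
    (hnormal : ∃ C : ℝ, 0 < C ∧ ∀ x y : X, 0 ≤ x → x ≤ y → ‖x‖ ≤ C * ‖y‖)
    (T : X →ₗ[ℝ] Y) :
    (∀ a b : X, Bornology.IsBounded (T '' Set.Icc a b)) ↔
      (∀ s : Set X, Bornology.IsBounded s → Bornology.IsBounded (T '' s)) := by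
  constructor
  · intro h s hs
    obtain ⟨M, hM, hando⟩ := my_ando hclosed hgen
    by_cases hbc : ∃ c : ℝ, ∀ x : X, ‖x‖ ≤ 1 → ‖T x‖ ≤ c
    · obtain ⟨c, hc⟩ := hbc
      have hc0 : 0 ≤ c := le_trans (norm_nonneg (T 0)) (hc 0 (by simp))
      obtain ⟨R, hR⟩ := isBounded_iff_forall_norm_le.mp hs
      rw [isBounded_iff_forall_norm_le]
      refine ⟨c * (R + 1), ?_⟩
      rintro _ ⟨x, hxs, rfl⟩
      have hR1 : (0:ℝ) < R + 1 := by
        have := (norm_nonneg x).trans (hR x hxs); linarith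
      have hx1 : ‖(R+1)⁻¹ • x‖ ≤ 1 := by
        rw [norm_smul, Real.norm_eq_abs, abs_of_pos (inv_pos.mpr hR1)]
        rw [inv_mul_le_iff₀ hR1, mul_one]
        have := hR x hxs; linarith
      have hTsm : T x = (R+1) • T ((R+1)⁻¹ • x) := by
        rw [map_smul, smul_smul, mul_inv_cancel₀ hR1.ne', one_smul]
      rw [hTsm, norm_smul, Real.norm_eq_abs, abs_of_pos hR1, mul_comm]
      exact mul_le_mul (hc _ hx1) le_rfl (by positivity) hc0
    · exfalso
      push_neg at hbc
      choose xs hxs1 hxs2 using fun m : ℕ => hbc ((m : ℝ) * 2 ^ m)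
      choose a b ha hb heq hna hnb using fun m => hando (xs m) (hxs1 m)
      set f : ℕ → X := fun m => (2⁻¹:ℝ)^m • (a m + b m) with hf
      have hfs : Summable f := by
        apply Summable.of_norm_bounded (g := fun m : ℕ => (2⁻¹:ℝ)^m * (2*M))
          ((summable_geometric_of_lt_one (by norm_num : (0:ℝ) ≤ 2⁻¹)
            (by norm_num : (2⁻¹:ℝ) < 1)).mul_right _)
        intro m
        rw [hf, norm_smul, Real.norm_eq_abs, abs_of_pos (by positivity : (0:ℝ) < (2⁻¹:ℝ)^m)]
        have := norm_add_le (a m) (b m)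
        have h2 : ‖a m + b m‖ ≤ 2 * M := by
          have := hna m; have := hnb m; linarith
        exact mul_le_mul_of_nonneg_left h2 (by positivity)
      set u : X := ∑' m, f m with hu
      have hfnn : ∀ m, 0 ≤ f m := fun m =>
        smul_nonneg (by positivity) (add_nonneg (ha m) (hb m))
      have hkey : ∀ m : ℕ, 0 ≤ u - (2⁻¹:ℝ)^m • a m ∧ 0 ≤ u - (2⁻¹:ℝ)^m • b m := by
        intro m
        have hsum := hfs.hasSum
        constructor
        · have htend : Tendsto (fun t : Finset ℕ => (∑ k ∈ t, f k) - (2⁻¹:ℝ)^m • a m)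
              atTop (nhds (u - (2⁻¹:ℝ)^m • a m)) := Filter.Tendsto.sub hsum tendsto_const_nhds
          refine hclosed.mem_of_tendsto htend ?_
          filter_upwards [Filter.eventually_ge_atTop ({m} : Finset ℕ)] with t ht
          have hmem : m ∈ t := ht (Finset.mem_singleton_self m)
          rw [Finset.sum_eq_sum_sdiff_singleton_add hmem]
          have hfm : f m - (2⁻¹:ℝ)^m • a m = (2⁻¹:ℝ)^m • b m := by
            rw [hf]; simp only [smul_add]; abel
          have : (∑ k ∈ t \ {m}, f k) + f m - (2⁻¹:ℝ)^m • a m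
              = (∑ k ∈ t \ {m}, f k) + ((2⁻¹:ℝ)^m • b m) := by
            rw [← hfm]; abel
          show 0 ≤ (∑ k ∈ t \ {m}, f k) + f m - (2⁻¹:ℝ)^m • a m
          rw [this]
          exact add_nonneg (my_sum_nonneg fun k _ => hfnn k)
            (smul_nonneg (by positivity) (hb m))
        · have htend : Tendsto (fun t : Finset ℕ => (∑ k ∈ t, f k) - (2⁻¹:ℝ)^m • b m)
              atTop (nhds (u - (2⁻¹:ℝ)^m • b m)) := Filter.Tendsto.sub hsum tendsto_const_nhds
          refine hclosed.mem_of_tendsto htend ?_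
          filter_upwards [Filter.eventually_ge_atTop ({m} : Finset ℕ)] with t ht
          have hmem : m ∈ t := ht (Finset.mem_singleton_self m)
          rw [Finset.sum_eq_sum_sdiff_singleton_add hmem]
          have hfm : f m - (2⁻¹:ℝ)^m • b m = (2⁻¹:ℝ)^m • a m := by
            rw [hf]; simp only [smul_add]; abel
          have : (∑ k ∈ t \ {m}, f k) + f m - (2⁻¹:ℝ)^m • b m
              = (∑ k ∈ t \ {m}, f k) + ((2⁻¹:ℝ)^m • a m) := by
            rw [← hfm]; abel
          show 0 ≤ (∑ k ∈ t \ {m}, f k) + f m - (2⁻¹:ℝ)^m • b m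
          rw [this]
          exact add_nonneg (my_sum_nonneg fun k _ => hfnn k)
            (smul_nonneg (by positivity) (ha m))
      have hmemIcc : ∀ m : ℕ, (2⁻¹:ℝ)^m • xs m ∈ Set.Icc (-u) u := by
        intro m
        have hxm : (2⁻¹:ℝ)^m • xs m = (2⁻¹:ℝ)^m • a m - (2⁻¹:ℝ)^m • b m := by
          rw [heq m, smul_sub]
        constructor
        · have h0 : 0 ≤ ((2⁻¹:ℝ)^m • xs m) + u := by
            rw [hxm]
            have : (2⁻¹:ℝ)^m • a m - (2⁻¹:ℝ)^m • b m + u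
                = (u - (2⁻¹:ℝ)^m • b m) + (2⁻¹:ℝ)^m • a m := by abel
            rw [this]
            exact add_nonneg (hkey m).2 (smul_nonneg (by positivity) (ha m))
          have h2 := add_le_add_left h0 (-u)
          simpa using h2
        · have h0 : 0 ≤ u - (2⁻¹:ℝ)^m • xs m := by
            rw [hxm]
            have : u - ((2⁻¹:ℝ)^m • a m - (2⁻¹:ℝ)^m • b m)
                = (u - (2⁻¹:ℝ)^m • a m) + (2⁻¹:ℝ)^m • b m := by abel
            rw [this]
            exact add_nonneg (hkey m).1 (smul_nonneg (by positivity) (hb m))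
          have h2 := add_le_add_left h0 ((2⁻¹:ℝ)^m • xs m)
          simpa using h2
      obtain ⟨R, hR⟩ := isBounded_iff_forall_norm_le.mp (h (-u) u)
      obtain ⟨m, hm⟩ := exists_nat_gt R
      have hle : ‖T ((2⁻¹:ℝ)^m • xs m)‖ ≤ R := hR _ ⟨_, hmemIcc m, rfl⟩
      have hval : ‖T ((2⁻¹:ℝ)^m • xs m)‖ = (2⁻¹:ℝ)^m * ‖T (xs m)‖ := by
        rw [map_smul, norm_smul, Real.norm_eq_abs, abs_of_pos (by positivity)]
      have hgt : (m : ℝ) < (2⁻¹:ℝ)^m * ‖T (xs m)‖ := by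
        have h2 := mul_lt_mul_of_pos_left (hxs2 m)
          (show (0:ℝ) < (2⁻¹:ℝ)^m by positivity)
        have h3 : (2⁻¹:ℝ)^m * ((m : ℝ) * 2 ^ m) = (m : ℝ) := by
          rw [inv_pow]
          field_simp
        linarith
      rw [hval] at hle
      have : (m : ℝ) < R := lt_of_lt_of_le hgt hle
      linarith
  · intro h a b
    obtain ⟨C, hC, hnorm⟩ := hnormal
    apply h
    rw [isBounded_iff_forall_norm_le]
    refine ⟨‖a‖ + C * ‖b - a‖, fun x hx => ?_⟩
    have h1 : 0 ≤ x - a := sub_nonneg.mpr hx.1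
    have h2 : x - a ≤ b - a := sub_le_sub_right hx.2 a
    have h3 := hnorm (x - a) (b - a) h1 h2
    have h4 : ‖x‖ ≤ ‖a‖ + ‖x - a‖ := by
      have := norm_add_le a (x - a)
      have hxx : a + (x - a) = x := by abel
      rw [hxx] at this; exact this
    linarith
end

section
/- Let X be an ordered real Banach space whose positive cone is closed, generating, and normal, and let Y be a real normed space. Then every σ-w-Lebesgue linear operator T : X → Y is bounded, and in particular every σ-order-to-weak continuous linear operator T : X → Y is bounded. -/
open Filter Set Topology Bornology

universe u

section AuxOrd
variable {X : Type*} [NormedAddCommGroup X] [NormedSpace ℝ X] [PartialOrder X]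
    [CovariantClass X X (· + ·) (· ≤ ·)] [PosSMulMono ℝ X]

lemma aux_pos_add {a b : X} (ha : 0 ≤ a) (hb : 0 ≤ b) : 0 ≤ a + b := by
  have := add_le_add_left hb a
  exact le_trans ha (by simpa using this)

lemma aux_pos_sub_of_le {a b : X} (h : a ≤ b) : 0 ≤ b - a := by
  have := add_le_add_left h (-a); simpa [add_comm, sub_eq_add_neg] using this

lemma aux_le_of_pos_sub {a b : X} (h : 0 ≤ b - a) : a ≤ b := by
  have := add_le_add_left h a; simpa [add_comm, sub_eq_add_neg, add_assoc] using this

lemma aux_neg_nonpos {a : X} (ha : 0 ≤ a) : -a ≤ 0 := by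
  have := add_le_add_left ha (-a); simpa using this

lemma aux_le_of_neg_nonneg {a : X} (ha : 0 ≤ -a) : a ≤ 0 := by
  have := add_le_add_left ha a; simpa using this

lemma aux_sum_nonneg (s : Finset ℕ) (f : ℕ → X) (hf : ∀ i, 0 ≤ f i) :
    0 ≤ ∑ i ∈ s, f i := by
  classical
  induction s using Finset.cons_induction with
  | empty => simp
  | cons i s his ih => rw [Finset.sum_cons]; exact aux_pos_add (hf i) ih

lemma aux_tsum_nonneg (hclosed : IsClosed {x : X | 0 ≤ x}) {f : ℕ → X}
    (hf : ∀ i, 0 ≤ f i) (hs : Summable f) : 0 ≤ ∑' i, f i := by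
  have h1 : Tendsto (fun s : Finset ℕ => ∑ i ∈ s, f i) atTop (𝓝 (∑' i, f i)) :=
    hs.hasSum
  exact hclosed.mem_of_tendsto h1 (Filter.Eventually.of_forall fun s => aux_sum_nonneg s f hf)

end AuxOrd

section Ando
variable {X : Type*} [NormedAddCommGroup X] [NormedSpace ℝ X] [CompleteSpace X] [PartialOrder X]
    [CovariantClass X X (· + ·) (· ≤ ·)] [PosSMulMono ℝ X]

/-- Andô's theorem: a closed generating cone gives decomposition with norm control. -/
lemma ando_decomp (hclosed : IsClosed {x : X | 0 ≤ x})
    (hgen : ∀ x : X, ∃ a b : X, 0 ≤ a ∧ 0 ≤ b ∧ x = a - b) :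
    ∃ M : ℝ, 0 < M ∧ ∀ x : X, ∃ a b : X, 0 ≤ a ∧ 0 ≤ b ∧ x = a - b ∧
      ‖a‖ ≤ M * ‖x‖ ∧ ‖b‖ ≤ M * ‖x‖ := by
  classical
  -- the sets S R
  set S : ℝ → Set X := fun R => {x | ∃ a b : X, 0 ≤ a ∧ 0 ≤ b ∧ ‖a‖ ≤ R ∧ ‖b‖ ≤ R ∧ x = a - b}
    with hS
  have hcover : (⋃ n : ℕ, closure (S n)) = univ := by
    refine eq_univ_of_forall fun x => ?_
    obtain ⟨a, b, ha, hb, hx⟩ := hgen x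
    refine mem_iUnion.2 ⟨⌈max ‖a‖ ‖b‖⌉₊, subset_closure ?_⟩
    exact ⟨a, b, ha, hb,
      le_trans (le_max_left _ _) (Nat.le_ceil _),
      le_trans (le_max_right _ _) (Nat.le_ceil _), hx⟩
  obtain ⟨N, x₀, hx₀⟩ := nonempty_interior_of_iUnion_of_closed
    (fun n : ℕ => isClosed_closure (s := S n)) hcover
  set R : ℝ := (N : ℝ) + 1 with hR
  have hRpos : 0 < R := by positivity
  have hSmono : S (N : ℝ) ⊆ S R := by
    rintro x ⟨a, b, ha, hb, hna, hnb, hx⟩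
    exact ⟨a, b, ha, hb, hna.trans (by simp [hR]), hnb.trans (by simp [hR]), hx⟩
  have hconv : Convex ℝ (closure (S R)) := by
    refine (Convex.closure ?_)
    rintro x ⟨a, b, ha, hb, hna, hnb, rfl⟩ y ⟨c, d, hc, hd, hnc, hnd, rfl⟩ s t hs ht hst
    refine ⟨s • a + t • c, s • b + t • d,
      aux_pos_add (smul_nonneg hs ha) (smul_nonneg ht hc),
      aux_pos_add (smul_nonneg hs hb) (smul_nonneg ht hd), ?_, ?_, by abel_nf; module⟩
    · calc ‖s • a + t • c‖ ≤ s * ‖a‖ + t * ‖c‖ := by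
            refine (norm_add_le _ _).trans ?_
            simp [norm_smul, abs_of_nonneg hs, abs_of_nonneg ht]
          _ ≤ s * R + t * R := by
            gcongr
          _ = R := by rw [← add_mul, hst, one_mul]
    · calc ‖s • b + t • d‖ ≤ s * ‖b‖ + t * ‖d‖ := by
            refine (norm_add_le _ _).trans ?_
            simp [norm_smul, abs_of_nonneg hs, abs_of_nonneg ht]
          _ ≤ s * R + t * R := by gcongr
          _ = R := by rw [← add_mul, hst, one_mul]
  have hsymm : ∀ x ∈ closure (S R), -x ∈ closure (S R) := by
    intro x hx
    refine map_mem_closure continuous_neg hx ?_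
    rintro _ ⟨a, b, ha, hb, hna, hnb, rfl⟩
    exact ⟨b, a, hb, ha, hnb, hna, by abel⟩
  -- a ball around 0 inside closure (S R)
  obtain ⟨r, hrpos, hball⟩ : ∃ r : ℝ, 0 < r ∧ Metric.ball (0 : X) r ⊆ closure (S R) := by
    have hx₀' : x₀ ∈ interior (closure (S R)) :=
      interior_mono (closure_mono hSmono) hx₀
    obtain ⟨ε, hε, hsub⟩ := Metric.isOpen_iff.1 isOpen_interior x₀ hx₀'
    refine ⟨ε, hε, fun y hy => ?_⟩
    have h1 : x₀ + y ∈ closure (S R) := by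
      have : x₀ + y ∈ Metric.ball x₀ ε := by
        simpa [Metric.mem_ball, dist_eq_norm] using (by simpa [Metric.mem_ball, dist_eq_norm] using hy : ‖y‖ < ε)
      exact interior_subset (hsub this)
    have h2 : -(x₀ - y) ∈ closure (S R) := by
      refine hsymm _ (interior_subset (hsub ?_))
      simpa [Metric.mem_ball, dist_eq_norm] using (by simpa [Metric.mem_ball, dist_eq_norm] using hy : ‖y‖ < ε)
    have hc := hconv h1 h2 (le_of_lt one_half_pos) (le_of_lt one_half_pos)
      (by norm_num : (1/2 : ℝ) + 1/2 = 1)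
    have heq : (1/2 : ℝ) • (x₀ + y) + (1/2 : ℝ) • (-(x₀ - y)) = y := by module
    rwa [heq] at hc
  -- approximation step
  have key : ∀ z : X, ‖z‖ < r → ∃ a b : X, 0 ≤ a ∧ 0 ≤ b ∧ ‖a‖ ≤ R ∧ ‖b‖ ≤ R ∧
      ‖z - (a - b)‖ < r / 2 := by
    intro z hz
    have hzc : z ∈ closure (S R) := hball (by simpa [Metric.mem_ball, dist_eq_norm] using hz)
    obtain ⟨y, hy, hdy⟩ := Metric.mem_closure_iff.1 hzc (r/2) (by positivity)
    obtain ⟨a, b, ha, hb, hna, hnb, rfl⟩ := hy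
    exact ⟨a, b, ha, hb, hna, hnb, by simpa [dist_eq_norm] using hdy⟩
  set F : X → X × X := fun z =>
    if h : ‖z‖ < r then ((key z h).choose, (key z h).choose_spec.choose) else (0, 0) with hFdef
  have hF : ∀ z : X, ‖z‖ < r → 0 ≤ (F z).1 ∧ 0 ≤ (F z).2 ∧ ‖(F z).1‖ ≤ R ∧ ‖(F z).2‖ ≤ R ∧
      ‖z - ((F z).1 - (F z).2)‖ < r / 2 := by
    intro z h
    have hspec := (key z h).choose_spec.choose_spec
    simp only [hFdef, dif_pos h]
    exact hspec
  have main : ∀ x : X, ‖x‖ < r → ∃ a b : X, 0 ≤ a ∧ 0 ≤ b ∧ x = a - b ∧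
      ‖a‖ ≤ 2 * R ∧ ‖b‖ ≤ 2 * R := by
    intro x hx
    set z : ℕ → X := fun k =>
      Nat.rec x (fun _ zk => (2 : ℝ) • (zk - ((F zk).1 - (F zk).2))) k with hzdef
    have hz0 : z 0 = x := rfl
    have hzs : ∀ k, z (k + 1) = (2 : ℝ) • (z k - ((F (z k)).1 - (F (z k)).2)) := fun k => rfl
    have hzlt : ∀ k, ‖z k‖ < r := by
      intro k
      induction k with
      | zero => exact hx
      | succ k ih =>
        rw [hzs k, norm_smul]
        have h5 := (hF (z k) ih).2.2.2.2
        calc |(2:ℝ)| * ‖z k - ((F (z k)).1 - (F (z k)).2)‖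
            = 2 * ‖z k - ((F (z k)).1 - (F (z k)).2)‖ := by norm_num
          _ < 2 * (r / 2) := by linarith [h5]
          _ = r := by ring
    set A : ℕ → X := fun k => ((2:ℝ)⁻¹) ^ k • (F (z k)).1 with hA
    set B : ℕ → X := fun k => ((2:ℝ)⁻¹) ^ k • (F (z k)).2 with hB
    have hAnorm : ∀ k, ‖A k‖ ≤ ((2:ℝ)⁻¹) ^ k * R := by
      intro k
      rw [hA, norm_smul]
      have := (hF (z k) (hzlt k)).2.2.1
      calc |((2:ℝ)⁻¹) ^ k| * ‖(F (z k)).1‖ = ((2:ℝ)⁻¹) ^ k * ‖(F (z k)).1‖ := by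
            rw [abs_of_nonneg (by positivity)]
        _ ≤ ((2:ℝ)⁻¹) ^ k * R := by gcongr
    have hBnorm : ∀ k, ‖B k‖ ≤ ((2:ℝ)⁻¹) ^ k * R := by
      intro k
      rw [hB, norm_smul]
      have := (hF (z k) (hzlt k)).2.2.2.1
      calc |((2:ℝ)⁻¹) ^ k| * ‖(F (z k)).2‖ = ((2:ℝ)⁻¹) ^ k * ‖(F (z k)).2‖ := by
            rw [abs_of_nonneg (by positivity)]
        _ ≤ ((2:ℝ)⁻¹) ^ k * R := by gcongr
    have hgeom : HasSum (fun k : ℕ => ((2:ℝ)⁻¹) ^ k * R) (2 * R) := by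
      have h1 := (hasSum_geometric_of_lt_one (by norm_num : (0:ℝ) ≤ 2⁻¹)
        (by norm_num : (2:ℝ)⁻¹ < 1)).mul_right R
      rwa [show (1 - (2:ℝ)⁻¹)⁻¹ = 2 by norm_num] at h1
    have hsumA : Summable A := Summable.of_norm_bounded hgeom.summable hAnorm
    have hsumB : Summable B := Summable.of_norm_bounded hgeom.summable hBnorm
    have hapos : 0 ≤ ∑' k, A k :=
      aux_tsum_nonneg hclosed
        (fun k => smul_nonneg (by positivity) (hF (z k) (hzlt k)).1) hsumA
    have hbpos : 0 ≤ ∑' k, B k :=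
      aux_tsum_nonneg hclosed
        (fun k => smul_nonneg (by positivity) (hF (z k) (hzlt k)).2.1) hsumB
    have hanorm : ‖∑' k, A k‖ ≤ 2 * R := tsum_of_norm_bounded hgeom hAnorm
    have hbnorm : ‖∑' k, B k‖ ≤ 2 * R := tsum_of_norm_bounded hgeom hBnorm
    have hpartial : ∀ k, x - (∑ j ∈ Finset.range k, (A j - B j)) = ((2:ℝ)⁻¹) ^ k • z k := by
      intro k
      induction k with
      | zero => simp [hz0]
      | succ k ih =>
        have hstep : x - (∑ j ∈ Finset.range (k+1), (A j - B j)) =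
            (x - ∑ j ∈ Finset.range k, (A j - B j)) - (A k - B k) := by
          rw [Finset.sum_range_succ]; abel
        rw [hstep, ih, hzs k, hA, hB, pow_succ]
        module
    have hax : HasSum (fun k => A k - B k) ((∑' k, A k) - ∑' k, B k) :=
      hsumA.hasSum.sub hsumB.hasSum
    have h1 : Tendsto (fun k => ∑ j ∈ Finset.range k, (A j - B j)) atTop
        (𝓝 ((∑' k, A k) - ∑' k, B k)) := hax.tendsto_sum_nat
    have h2 : Tendsto (fun k => ∑ j ∈ Finset.range k, (A j - B j)) atTop (𝓝 x) := by
      have h3 : Tendsto (fun k => x - ∑ j ∈ Finset.range k, (A j - B j)) atTop (𝓝 0) := by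
        refine squeeze_zero_norm (a := fun k => ((2:ℝ)⁻¹) ^ k * r) (fun k => ?_) ?_
        · rw [hpartial k, norm_smul, Real.norm_of_nonneg (by positivity : (0:ℝ) ≤ ((2:ℝ)⁻¹)^k)]
          exact mul_le_mul_of_nonneg_left (hzlt k).le (by positivity)
        · simpa using (tendsto_pow_atTop_nhds_zero_of_lt_one (by norm_num : (0:ℝ) ≤ 2⁻¹)
            (by norm_num : (2:ℝ)⁻¹ < 1)).mul_const r
      have h4 : Tendsto (fun k : ℕ => x - (x - ∑ j ∈ Finset.range k, (A j - B j))) atTop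
          (𝓝 (x - 0)) := tendsto_const_nhds.sub h3
      simpa using h4
    exact ⟨∑' k, A k, ∑' k, B k, hapos, hbpos, tendsto_nhds_unique h2 h1, hanorm, hbnorm⟩
  -- rescaling
  refine ⟨4 * R / r, by positivity, fun x => ?_⟩
  rcases eq_or_ne x 0 with rfl | hx0
  · exact ⟨0, 0, le_refl 0, le_refl 0, by simp, by simp, by simp⟩
  have hxn : 0 < ‖x‖ := norm_pos_iff.2 hx0
  set c : ℝ := r / (2 * ‖x‖) with hc
  have hcpos : 0 < c := by positivity
  have hcx : ‖c • x‖ < r := by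
    rw [norm_smul, Real.norm_of_nonneg hcpos.le, hc, div_mul_eq_mul_div,
      div_lt_iff₀ (by positivity)]
    nlinarith
  obtain ⟨a', b', ha', hb', heq, hna', hnb'⟩ := main (c • x) hcx
  refine ⟨c⁻¹ • a', c⁻¹ • b', smul_nonneg (by positivity) ha',
    smul_nonneg (by positivity) hb', ?_, ?_, ?_⟩
  · rw [← smul_sub, ← heq, inv_smul_smul₀ (ne_of_gt hcpos)]
  · rw [norm_smul, Real.norm_of_nonneg (by positivity : (0:ℝ) ≤ c⁻¹)]
    calc c⁻¹ * ‖a'‖ ≤ c⁻¹ * (2 * R) := by gcongr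
      _ = 4 * R / r * ‖x‖ := by rw [hc]; field_simp; ring
  · rw [norm_smul, Real.norm_of_nonneg (by positivity : (0:ℝ) ≤ c⁻¹)]
    calc c⁻¹ * ‖b'‖ ≤ c⁻¹ * (2 * R) := by gcongr
      _ = 4 * R / r * ‖x‖ := by rw [hc]; field_simp; ring
end Ando

section Main
variable {X : Type u} [NormedAddCommGroup X] [NormedSpace ℝ X] [CompleteSpace X] [PartialOrder X]
    [CovariantClass X X (· + ·) (· ≤ ·)] [PosSMulMono ℝ X]
    {Y : Type*} [NormedAddCommGroup Y] [NormedSpace ℝ Y]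

lemma decreasesToZero_orderConvZero (x : ℕ → X) (hx : DecreasesToZero x) :
    OrderConvZero x := by
  refine ⟨ULift.{u} ℕ, inferInstance, ⟨⟨0⟩⟩, ?_, fun b => x b.down, ?_, ?_, ?_⟩
  · exact ⟨fun a b => ⟨⟨max a.down b.down⟩, le_max_left _ _, le_max_right _ _⟩⟩
  · exact fun b₁ b₂ h => hx.1 h
  · have hr : (Set.range fun b : ULift.{u} ℕ => x b.down) = Set.range x := by
      ext v
      constructor
      · rintro ⟨b, rfl⟩; exact ⟨b.down, rfl⟩
      · rintro ⟨n, rfl⟩; exact ⟨⟨n⟩, rfl⟩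
    rw [hr]; exact hx.2
  · intro b
    refine ⟨b.down, fun a ha => ⟨?_, hx.1 ha⟩⟩
    have h1 : 0 ≤ x a := hx.2.1 ⟨a, rfl⟩
    have h2 : 0 ≤ x b.down := hx.2.1 ⟨b.down, rfl⟩
    exact le_trans (aux_neg_nonpos h2) h1

lemma key_bounded (hclosed : IsClosed {x : X | 0 ≤ x})
    (hgen : ∀ x : X, ∃ a b : X, 0 ≤ a ∧ 0 ≤ b ∧ x = a - b) (T : X →ₗ[ℝ] Y)
    (H : ∀ x : ℕ → X, DecreasesToZero x →
      ∀ f : Y →L[ℝ] ℝ, Filter.Tendsto (fun n => f (T (x n))) Filter.atTop (𝓝 0)) :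
    ∃ C : ℝ, ∀ x : X, ‖T x‖ ≤ C * ‖x‖ := by
  by_contra hC
  push_neg at hC
  obtain ⟨M, hM, hdecomp⟩ := ando_decomp hclosed hgen
  have hw : ∀ n : ℕ, ∃ w : X, 0 ≤ w ∧ ‖w‖ ≤ ((2:ℝ)⁻¹) ^ n ∧ (n : ℝ) < ‖T w‖ := by
    intro n
    obtain ⟨u, hu⟩ := hC (2 * M * ((n : ℝ) + 1) * 2 ^ n)
    have hun : 0 < ‖u‖ := by
      rcases eq_or_ne u 0 with rfl | h
      · simp at hu
      · exact norm_pos_iff.2 h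
    obtain ⟨a, b, ha, hb, hab, hna, hnb⟩ := hdecomp u
    have hsum : ‖T u‖ ≤ ‖T a‖ + ‖T b‖ := by
      rw [hab, map_sub]; exact norm_sub_le _ _
    have hTa : ‖T a‖ ≤ ‖T a‖ := le_refl _
    have hhalf : M * ((n : ℝ) + 1) * 2 ^ n * ‖u‖ < ‖T a‖ ∨
        M * ((n : ℝ) + 1) * 2 ^ n * ‖u‖ < ‖T b‖ := by
      by_contra h
      push_neg at h
      have hp : (0:ℝ) < 2 ^ n := by positivity
      nlinarith [h.1, h.2]
    have hD : (0:ℝ) < M * ‖u‖ * 2 ^ n := by positivity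
    obtain ⟨c, hc0, hcn, hTc⟩ : ∃ c : X, 0 ≤ c ∧ ‖c‖ ≤ M * ‖u‖ ∧
        M * ((n : ℝ) + 1) * 2 ^ n * ‖u‖ < ‖T c‖ := by
      rcases hhalf with h | h
      · exact ⟨a, ha, hna, h⟩
      · exact ⟨b, hb, hnb, h⟩
    refine ⟨(M * ‖u‖ * 2 ^ n)⁻¹ • c, smul_nonneg (by positivity) hc0, ?_, ?_⟩
    · rw [norm_smul, Real.norm_of_nonneg (by positivity)]
      calc (M * ‖u‖ * 2 ^ n)⁻¹ * ‖c‖ ≤ (M * ‖u‖ * 2 ^ n)⁻¹ * (M * ‖u‖) := by gcongr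
        _ = ((2:ℝ) ^ n)⁻¹ := by field_simp
        _ = ((2:ℝ)⁻¹) ^ n := by rw [inv_pow]
    · rw [map_smul, norm_smul, Real.norm_of_nonneg (by positivity)]
      have h1 : (M * ‖u‖ * 2 ^ n)⁻¹ * (M * ((n : ℝ) + 1) * 2 ^ n * ‖u‖) <
          (M * ‖u‖ * 2 ^ n)⁻¹ * ‖T c‖ := mul_lt_mul_of_pos_left hTc (by positivity)
      have h2 : (M * ‖u‖ * 2 ^ n)⁻¹ * (M * ((n : ℝ) + 1) * 2 ^ n * ‖u‖) = (n : ℝ) + 1 := by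
        field_simp
      rw [h2] at h1
      linarith
  choose w hw0 hwn hwT using hw
  have hsummn : ∀ n : ℕ, Summable (fun k => w (n + k)) := by
    intro n
    have hs : Summable (fun k : ℕ => ((2:ℝ)⁻¹) ^ n * ((2:ℝ)⁻¹) ^ k) :=
      (summable_geometric_of_lt_one (by norm_num) (by norm_num)).mul_left _
    exact Summable.of_norm_bounded hs (fun k => (hwn (n + k)).trans (by rw [pow_add]))
  set y : ℕ → X := fun n => ∑' k, w (n + k) with hy
  have hyrec : ∀ n, y n = w n + y (n + 1) := by
    intro n
    have h0 := Summable.tsum_eq_zero_add (hsummn n)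
    rw [hy]
    simp only []
    rw [h0, Nat.add_zero]
    congr 1
    exact tsum_congr fun k => by rw [show n + (k + 1) = n + 1 + k by omega]
  have hypos : ∀ n, 0 ≤ y n := fun n =>
    aux_tsum_nonneg hclosed (fun k => hw0 (n + k)) (hsummn n)
  have hynorm : ∀ n, ‖y n‖ ≤ ((2:ℝ)⁻¹) ^ n * 2 := by
    intro n
    have hgeom : HasSum (fun k : ℕ => ((2:ℝ)⁻¹) ^ n * ((2:ℝ)⁻¹) ^ k) (((2:ℝ)⁻¹) ^ n * 2) := by
      have h1 := (hasSum_geometric_of_lt_one (by norm_num : (0:ℝ) ≤ 2⁻¹)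
        (by norm_num : (2:ℝ)⁻¹ < 1)).mul_left (((2:ℝ)⁻¹) ^ n)
      rwa [show (1 - (2:ℝ)⁻¹)⁻¹ = 2 by norm_num] at h1
    exact tsum_of_norm_bounded hgeom
      (fun k => (hwn (n + k)).trans (by rw [pow_add]))
  have hanti : Antitone y := by
    refine antitone_nat_of_succ_le fun n => ?_
    rw [hyrec n]
    have h1 := add_le_add_left (hw0 n) (y (n + 1))
    simpa [add_comm] using h1
  have hytend : Filter.Tendsto y Filter.atTop (𝓝 0) := by
    refine squeeze_zero_norm (a := fun n => ((2:ℝ)⁻¹) ^ n * 2) hynorm ?_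
    simpa using (tendsto_pow_atTop_nhds_zero_of_lt_one (by norm_num : (0:ℝ) ≤ 2⁻¹)
      (by norm_num : (2:ℝ)⁻¹ < 1)).mul_const 2
  have hglb : IsGLB (Set.range y) 0 := by
    constructor
    · rintro _ ⟨n, rfl⟩; exact hypos n
    · intro c hcl
      have hcy : ∀ n, c ≤ y n := fun n => hcl ⟨n, rfl⟩
      have h1 : Filter.Tendsto (fun n => y n - c) Filter.atTop (𝓝 (0 - c)) :=
        hytend.sub tendsto_const_nhds
      have h2 : (0 : X) - c ∈ {x : X | 0 ≤ x} :=
        hclosed.mem_of_tendsto h1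
          (Filter.Eventually.of_forall fun n => aux_pos_sub_of_le (hcy n))
      have h3 : 0 ≤ -c := by simpa using h2
      exact aux_le_of_neg_nonneg h3
  have hTf := H y ⟨hanti, hglb⟩
  have hwy : ∀ n, w n = y n - y (n + 1) := fun n => by rw [hyrec n]; abel
  have hfw : ∀ f : Y →L[ℝ] ℝ,
      Filter.Tendsto (fun n => f (T (w n))) Filter.atTop (𝓝 0) := by
    intro f
    have h1 := hTf f
    have h2 : Filter.Tendsto (fun n => f (T (y (n + 1)))) Filter.atTop (𝓝 0) :=
      h1.comp (Filter.tendsto_add_atTop_nat 1)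
    have h3 := h1.sub h2
    rw [sub_zero] at h3
    refine h3.congr fun n => ?_
    rw [hwy n, map_sub, map_sub]
  set g : ℕ → StrongDual ℝ Y →L[ℝ] ℝ :=
    fun n => NormedSpace.inclusionInDoubleDual ℝ Y (T (w n)) with hg
  have hpt : ∀ f : StrongDual ℝ Y, ∃ C, ∀ n, ‖g n f‖ ≤ C := by
    intro f
    have hb : BddAbove (Set.range fun n => ‖f (T (w n))‖) := (hfw f).norm.bddAbove_range
    obtain ⟨C, hCb⟩ := hb
    exact ⟨C, fun n => hCb ⟨n, rfl⟩⟩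
  obtain ⟨C', hC'⟩ := banach_steinhaus hpt
  have hTw : ∀ n, ‖T (w n)‖ ≤ max C' 0 := by
    intro n
    refine NormedSpace.norm_le_dual_bound ℝ (T (w n)) (le_max_right _ _) fun f => ?_
    have h1 : ‖g n f‖ ≤ ‖g n‖ * ‖f‖ := (g n).le_opNorm f
    have h2 : ‖g n‖ * ‖f‖ ≤ C' * ‖f‖ :=
      mul_le_mul_of_nonneg_right (hC' n) (norm_nonneg f)
    have h3 : ‖f (T (w n))‖ ≤ C' * ‖f‖ := le_trans h1 h2
    exact h3.trans (mul_le_mul_of_nonneg_right (le_max_left _ _) (norm_nonneg f))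
  obtain ⟨n, hn⟩ := exists_nat_gt (max C' 0)
  exact absurd (hTw n) (not_le.2 (lt_trans hn (hwT n)))

lemma key_image_bounded (hclosed : IsClosed {x : X | 0 ≤ x})
    (hgen : ∀ x : X, ∃ a b : X, 0 ≤ a ∧ 0 ≤ b ∧ x = a - b) (T : X →ₗ[ℝ] Y)
    (H : ∀ x : ℕ → X, DecreasesToZero x →
      ∀ f : Y →L[ℝ] ℝ, Filter.Tendsto (fun n => f (T (x n))) Filter.atTop (𝓝 0)) :
    ∀ s : Set X, Bornology.IsBounded s → Bornology.IsBounded (T '' s) := by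
  intro s hs
  obtain ⟨C, hCb⟩ := key_bounded hclosed hgen T H
  obtain ⟨Rb, hRb⟩ := (isBounded_iff_forall_norm_le).1 hs
  rw [isBounded_iff_forall_norm_le]
  refine ⟨max C 0 * max Rb 0, ?_⟩
  rintro _ ⟨x, hx, rfl⟩
  calc ‖T x‖ ≤ C * ‖x‖ := hCb x
    _ ≤ max C 0 * max Rb 0 := by
      exact mul_le_mul (le_max_left _ _) ((hRb x hx).trans (le_max_left _ _))
        (norm_nonneg x) (le_max_right _ _)

end Main


/-- every σ-w-Lebesgue linear operator from an ordered Banach space with a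
closed generating normal cone to a normed space is bounded; in particular, so is every
σ-order-to-weak continuous linear operator. -/
theorem sigmaWLebesgue_implies_bounded
    {X : Type*} [NormedAddCommGroup X] [NormedSpace ℝ X] [CompleteSpace X] [PartialOrder X]
    [CovariantClass X X (· + ·) (· ≤ ·)] [PosSMulMono ℝ X]
    {Y : Type*} [NormedAddCommGroup Y] [NormedSpace ℝ Y]
    (hclosed : IsClosed {x : X | 0 ≤ x})
    (hgen : ∀ x : X, ∃ a b : X, 0 ≤ a ∧ 0 ≤ b ∧ x = a - b)
    (hnormal : ∃ C : ℝ, 0 < C ∧ ∀ x y : X, 0 ≤ x → x ≤ y → ‖x‖ ≤ C * ‖y‖)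
    (T : X →ₗ[ℝ] Y) :
    ((∀ x : ℕ → X, DecreasesToZero x →
        ∀ f : Y →L[ℝ] ℝ, Tendsto (fun n => f (T (x n))) atTop (𝓝 0)) →
      ∀ s : Set X, Bornology.IsBounded s → Bornology.IsBounded (T '' s)) ∧
    ((∀ x : ℕ → X, OrderConvZero x →
        ∀ f : Y →L[ℝ] ℝ, Tendsto (fun n => f (T (x n))) atTop (𝓝 0)) →
      ∀ s : Set X, Bornology.IsBounded s → Bornology.IsBounded (T '' s)) := by
  constructor
  · intro H
    exact key_image_bounded hclosed hgen T H
  · intro H'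
    refine key_image_bounded hclosed hgen T fun x hx f => ?_
    exact H' x (decreasesToZero_orderConvZero x hx) f
end

section
/- Every σ-w-Lebesgue linear operator from a Banach lattice E to a real normed space Y is bounded. In particular, every σ-order-to-weak continuous linear operator from E to Y is bounded. -/
open Filter Set Topology Bornology

universe u

theorem aux_main
    {E : Type u} [NormedAddCommGroup E] [Lattice E] [HasSolidNorm E] [IsOrderedAddMonoid E]
    [NormedSpace ℝ E] [PosSMulMono ℝ E]
    [CompleteSpace E]
    {Y : Type*} [NormedAddCommGroup Y] [NormedSpace ℝ Y]
    (T : E →ₗ[ℝ] Y)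
    (H : ∀ x : ℕ → E, DecreasesToZero x →
        ∀ f : Y →L[ℝ] ℝ, Tendsto (fun n => f (T (x n))) atTop (𝓝 0)) :
    ∀ s : Set E, Bornology.IsBounded s → Bornology.IsBounded (T '' s) := by
  by_contra hc
  push_neg at hc
  obtain ⟨s, hs, hTs⟩ := hc
  obtain ⟨R, hR⟩ := isBounded_iff_forall_norm_le.mp hs
  have hv : ∀ n : ℕ, ∃ v ∈ s, 2 * ((n : ℝ) * 2 ^ n) < ‖T v‖ := by
    intro n
    by_contra h
    push_neg at h
    exact hTs (isBounded_iff_forall_norm_le.mpr ⟨2 * ((n : ℝ) * 2 ^ n), by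
      rintro y ⟨w, hws, rfl⟩; exact h w hws⟩)
  choose v hvs hvbig using hv
  -- positive elements with large image norm
  have hw : ∀ n : ℕ, ∃ w : E, 0 ≤ w ∧ ‖w‖ ≤ R ∧ (n : ℝ) * 2 ^ n ≤ ‖T w‖ := by
    intro n
    have habs : ∀ a : E, 0 ≤ a → a ≤ |v n| → ‖a‖ ≤ R := by
      intro a ha hle
      refine le_trans (norm_le_norm_of_abs_le_abs ?_) (hR _ (hvs n))
      rwa [abs_of_nonneg ha]
    have hp : (v n)⁺ ≤ |v n| := by
      rw [← posPart_add_negPart (v n)]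
      exact le_add_of_nonneg_right (negPart_nonneg _)
    have hq : (v n)⁻ ≤ |v n| := by
      rw [← posPart_add_negPart (v n)]
      exact le_add_of_nonneg_left (posPart_nonneg _)
    by_cases hcase : (n : ℝ) * 2 ^ n ≤ ‖T ((v n)⁺)‖
    · exact ⟨(v n)⁺, posPart_nonneg _, habs _ (posPart_nonneg _) hp, hcase⟩
    · refine ⟨(v n)⁻, negPart_nonneg _, habs _ (negPart_nonneg _) hq, ?_⟩
      by_contra hcase2
      push_neg at hcase hcase2
      have hde : T (v n) = T ((v n)⁺) - T ((v n)⁻) := by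
        rw [← map_sub, posPart_sub_negPart]
      have : ‖T (v n)‖ ≤ ‖T ((v n)⁺)‖ + ‖T ((v n)⁻)‖ := by
        rw [hde]; exact norm_sub_le _ _
      nlinarith [hvbig n]
  choose w hw0 hwR hwbig using hw
  -- rescale
  set x : ℕ → E := fun n => ((2 : ℝ) ^ n)⁻¹ • w n with hxdef
  have hx0 : ∀ n, 0 ≤ x n := fun n =>
    smul_nonneg (by positivity) (hw0 n)
  have hxnorm : ∀ n, ‖x n‖ ≤ R * (1 / 2) ^ n := by
    intro n
    rw [hxdef]
    simp only [norm_smul, Real.norm_eq_abs]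
    rw [abs_of_nonneg (by positivity)]
    calc ((2 : ℝ) ^ n)⁻¹ * ‖w n‖ ≤ ((2 : ℝ) ^ n)⁻¹ * R := by
          exact mul_le_mul_of_nonneg_left (hwR n) (by positivity)
      _ = R * (1 / 2) ^ n := by rw [mul_comm, one_div, inv_pow]
  have hxbig : ∀ n : ℕ, (n : ℝ) ≤ ‖T (x n)‖ := by
    intro n
    have : T (x n) = ((2 : ℝ) ^ n)⁻¹ • T (w n) := by rw [hxdef]; simp [map_smul]
    rw [this, norm_smul, Real.norm_eq_abs, abs_of_nonneg (by positivity)]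
    calc (n : ℝ) = ((2 : ℝ) ^ n)⁻¹ * ((n : ℝ) * 2 ^ n) := by field_simp
      _ ≤ ((2 : ℝ) ^ n)⁻¹ * ‖T (w n)‖ :=
          mul_le_mul_of_nonneg_left (hwbig n) (by positivity)
  -- summability
  have hsum : Summable x := by
    refine Summable.of_norm_bounded
      (Summable.mul_left R summable_geometric_two) hxnorm
  set yy : E := ∑' n, x n with hyy
  set S : ℕ → E := fun n => ∑' k, x (k + n) with hSdef
  have hSsum : ∀ n, ∑ i ∈ Finset.range n, x i + S n = yy := fun n =>
    Summable.sum_add_tsum_nat_add n hsum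
  have hStendsto : Tendsto S atTop (𝓝 0) := by
    have h1 : Tendsto (fun n => ∑ i ∈ Finset.range n, x i) atTop (𝓝 yy) :=
      hsum.hasSum.tendsto_sum_nat
    have h2 : S = fun n => yy - ∑ i ∈ Finset.range n, x i := by
      funext n; rw [eq_sub_iff_add_eq, add_comm]; exact hSsum n
    rw [h2]
    have := (tendsto_const_nhds (x := yy) (f := atTop (α := ℕ))).sub h1
    simpa using this
  have hSstep : ∀ n, S n = x n + S (n + 1) := by
    intro n
    have e1 := hSsum n
    have e2 := hSsum (n + 1)
    rw [Finset.sum_range_succ, add_assoc] at e2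
    exact add_left_cancel (e1.trans e2.symm)
  have hSnonneg : ∀ n, 0 ≤ S n := fun n =>
    tsum_nonneg (fun k => hx0 (k + n))
  have hSanti : Antitone S := by
    apply antitone_nat_of_succ_le
    intro n
    rw [hSstep n]
    exact le_add_of_nonneg_left (hx0 n)
  have hSglb : IsGLB (Set.range S) 0 := by
    constructor
    · rintro z ⟨n, rfl⟩; exact hSnonneg n
    · rintro c hcl
      have hcle : ∀ n, c ≤ S n := fun n => hcl ⟨n, rfl⟩
      exact ge_of_tendsto' hStendsto hcle
  have hdec : DecreasesToZero S := ⟨hSanti, hSglb⟩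
  -- weak convergence of T x n to 0
  have hweak : ∀ f : Y →L[ℝ] ℝ, Tendsto (fun n => f (T (x n))) atTop (𝓝 0) := by
    intro f
    have h1 := H S hdec f
    have h2 : Tendsto (fun n => f (T (S (n + 1)))) atTop (𝓝 0) :=
      h1.comp (tendsto_add_atTop_nat 1)
    have h3 : (fun n => f (T (x n))) = fun n => f (T (S n)) - f (T (S (n + 1))) := by
      funext n
      have hx : x n = S n - S (n + 1) := by rw [hSstep n]; abel
      rw [hx, map_sub, map_sub]
    rw [h3]
    simpa using h1.sub h2
  -- Banach-Steinhaus in the double dual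
  set g : ℕ → (Y →L[ℝ] ℝ) →L[ℝ] ℝ :=
    fun n => NormedSpace.inclusionInDoubleDual ℝ Y (T (x n)) with hgdef
  have hpt : ∀ f : Y →L[ℝ] ℝ, ∃ C, ∀ n, ‖g n f‖ ≤ C := by
    intro f
    have := (hweak f).norm
    have hb : BddAbove (Set.range fun n => ‖f (T (x n))‖) :=
      this.bddAbove_range
    obtain ⟨C, hC⟩ := hb
    refine ⟨C, fun n => ?_⟩
    have : ‖f (T (x n))‖ ≤ C := hC ⟨n, rfl⟩
    simpa [hgdef, NormedSpace.dual_def] using this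
  obtain ⟨C', hC'⟩ := banach_steinhaus hpt
  have hnorm : ∀ n, ‖g n‖ = ‖T (x n)‖ := fun n =>
    (NormedSpace.inclusionInDoubleDualLi (𝕜 := ℝ) (E := Y)).norm_map (T (x n))
  obtain ⟨n, hn⟩ := exists_nat_gt C'
  have : (n : ℝ) ≤ C' := le_trans (hxbig n) (by rw [← hnorm n]; exact hC' n)
  linarith

theorem aux_dec_to_oc {E : Type u} [NormedAddCommGroup E] [Lattice E] [HasSolidNorm E]
    [IsOrderedAddMonoid E]
    (x : ℕ → E) (h : DecreasesToZero x) : OrderConvZero x := by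
  obtain ⟨hanti, hglb⟩ := h
  refine ⟨ULift.{u} ℕ, inferInstance, ⟨⟨0⟩⟩, inferInstance,
    fun b => x b.down, ?_, ?_, ?_⟩
  · intro b₁ b₂ hle
    exact hanti hle
  · have : Set.range (fun b : ULift.{u} ℕ => x b.down) = Set.range x :=
      Function.Surjective.range_comp ULift.down_surjective x
    rw [this]; exact hglb
  · intro b
    refine ⟨b.down, fun a ha => ⟨?_, hanti ha⟩⟩
    exact le_trans (neg_nonpos.mpr (hglb.1 ⟨b.down, rfl⟩)) (hglb.1 ⟨a, rfl⟩)

/-- every σ-w-Lebesgue linear operator from a Banach lattice to a normed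
space is bounded; in particular, so is every σ-order-to-weak continuous linear operator. -/
theorem sigmaWLebesgue_implies_bounded_banachLattice
    {E : Type*} [NormedAddCommGroup E] [Lattice E] [HasSolidNorm E] [IsOrderedAddMonoid E]
    [NormedSpace ℝ E] [PosSMulMono ℝ E]
    [CompleteSpace E]
    {Y : Type*} [NormedAddCommGroup Y] [NormedSpace ℝ Y]
    (T : E →ₗ[ℝ] Y) :
    ((∀ x : ℕ → E, DecreasesToZero x →
        ∀ f : Y →L[ℝ] ℝ, Tendsto (fun n => f (T (x n))) atTop (𝓝 0)) →
      ∀ s : Set E, Bornology.IsBounded s → Bornology.IsBounded (T '' s)) ∧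
    ((∀ x : ℕ → E, OrderConvZero x →
        ∀ f : Y →L[ℝ] ℝ, Tendsto (fun n => f (T (x n))) atTop (𝓝 0)) →
      ∀ s : Set E, Bornology.IsBounded s → Bornology.IsBounded (T '' s)) := by
  constructor
  · exact aux_main T
  · intro H2
    exact aux_main T (fun x hx f => H2 x (aux_dec_to_oc x hx) f)
end
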